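/- arXiv:1509.05892 — 9 statements merged into one kernel-verified Lean document; each statement's English description precedes it below -/
import Mathlib

section
/- Let P := ∑_{i=0}^{m} s_{(m^n,i)} X^i and Q := ∑_{i=0}^{n} (−1)^i s_{((m+1)^i, m^{n−i})} X^i, polynomials of degree at most m and n respectively. Then the Padé approximation condition holds: X^{m+n+1} divides Y·Q − P in the ring of formal power series R[[X]]. -/
open Matrix Finset in
lemma laplace_key {R : Type*} [CommRing R] (p : ℤ → R) (m : ℤ) (n : ℕ) (k : ℤ) :
    (Matrix.of fun i j : Fin (n+1) =>
        p ((if (i : ℕ) < n then m else k) - ((i:ℕ):ℤ) + ((j:ℕ):ℤ))).det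
    = ∑ i ∈ Finset.range (n+1), (-1)^i * p (k - i) *
        (Matrix.of fun a b : Fin n =>
          p ((if (a : ℕ) < i then m + 1 else m) - ((a:ℕ):ℤ) + ((b:ℕ):ℤ))).det := by
  rw [Matrix.det_succ_row _ (Fin.last n)]
  rw [← Fin.sum_univ_eq_sum_range]
  refine Fintype.sum_equiv Fin.revPerm _ _ (fun j => ?_)
  have hj : ((Fin.revPerm j : Fin (n+1)) : ℕ) = n - (j : ℕ) := by
    simp [Fin.revPerm, Fin.val_rev]
  have hjle : (j : ℕ) ≤ n := Nat.lt_succ_iff.mp j.is_lt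
  have h1 : (Matrix.of fun i j : Fin (n+1) =>
        p ((if (i : ℕ) < n then m else k) - ((i:ℕ):ℤ) + ((j:ℕ):ℤ))) (Fin.last n) j
      = p (k - ((n - (j:ℕ) : ℕ) : ℤ)) := by
    simp only [Matrix.of_apply, Fin.val_last, lt_irrefl, if_false]
    congr 1; omega
  have h2 : ((-1 : R)) ^ ((Fin.last n : ℕ) + (j:ℕ)) = (-1) ^ (n - (j:ℕ)) := by
    rw [Fin.val_last]
    have h : n + (j:ℕ) = (n - (j:ℕ)) + 2 * (j:ℕ) := by omega
    rw [h, pow_add, pow_mul]; simp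
  have hsub : ((Matrix.of fun i j : Fin (n+1) =>
        p ((if (i : ℕ) < n then m else k) - ((i:ℕ):ℤ) + ((j:ℕ):ℤ))).submatrix
          (Fin.last n).succAbove j.succAbove)
      = ((Matrix.of fun a b : Fin n =>
          p ((if (a : ℕ) < n - (j:ℕ) then m + 1 else m) - ((a:ℕ):ℤ) + ((b:ℕ):ℤ))).transpose).submatrix
          (Fin.revPerm : Equiv.Perm (Fin n)) (Fin.revPerm : Equiv.Perm (Fin n)) := by
    ext a b
    simp only [Matrix.submatrix_apply, Matrix.of_apply, Matrix.transpose_apply,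
      Fin.succAbove_last, Fin.coe_castSucc, a.is_lt, if_true, Equiv.coe_fn_mk,
      Fin.revPerm_apply, Fin.val_rev]
    rcases lt_or_ge (b : ℕ) (j : ℕ) with hb | hb
    · rw [Fin.succAbove_of_castSucc_lt _ _ (by rw [Fin.lt_iff_val_lt_val]; simpa using hb)]
      rw [if_neg (by omega)]
      simp only [Fin.coe_castSucc]
      congr 1; omega
    · rw [Fin.succAbove_of_le_castSucc _ _ (by rw [Fin.le_iff_val_le_val]; simpa using hb)]
      rw [if_pos (by omega)]
      simp only [Fin.val_succ]
      congr 1; push_cast; omega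
  rw [h1, h2, hsub, Matrix.det_submatrix_equiv_self, Matrix.det_transpose, hj]

/-- Padé approximation condition for the Jacobi–Trudi determinant polynomials.
`s l lam` is the Schur-type determinant `det (p (lam i - i + j))_{i,j=1}^l`. -/
theorem pade_approximation_condition
    (R : Type*) [CommRing R] (p : ℤ → R) (hp : ∀ i : ℤ, i < 0 → p i = 0)
    (m n : ℕ)
    (s : (l : ℕ) → (Fin l → ℤ) → R)
    (hs : ∀ (l : ℕ) (lam : Fin l → ℤ),
      s l lam = Matrix.det (Matrix.of fun i j : Fin l =>
        p (lam i - ((i : ℕ) : ℤ) + ((j : ℕ) : ℤ))))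
    (Y : PowerSeries R) (hY : Y = PowerSeries.mk fun k : ℕ => p (k : ℤ))
    (P Q : Polynomial R)
    (hP : P = ∑ i ∈ Finset.range (m + 1),
      Polynomial.C (s (n + 1) (fun j => if (j : ℕ) < n then (m : ℤ) else (i : ℤ)))
        * Polynomial.X ^ i)
    (hQ : Q = ∑ i ∈ Finset.range (n + 1),
      Polynomial.C ((-1) ^ i *
          s n (fun j => if (j : ℕ) < i then (m : ℤ) + 1 else (m : ℤ)))
        * Polynomial.X ^ i) :
    (PowerSeries.X : PowerSeries R) ^ (m + n + 1) ∣
      Y * (Q : PowerSeries R) - (P : PowerSeries R) := by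
  rw [PowerSeries.X_pow_dvd_iff]
  intro k hk
  rw [map_sub]
  set q : ℕ → R := fun i => (-1) ^ i *
      s n (fun j => if (j : ℕ) < i then (m : ℤ) + 1 else (m : ℤ)) with hq
  have hQc : ∀ i : ℕ, Q.coeff i = if i < n + 1 then q i else 0 := by
    intro i
    rw [hQ, Polynomial.finset_sum_coeff]
    simp only [Polynomial.coeff_C_mul, Polynomial.coeff_X_pow, mul_ite, mul_one, mul_zero]
    rw [Finset.sum_ite_eq (Finset.range (n+1)) i]
    simp [Finset.mem_range, hq]
  have hPc : ∀ i : ℕ, P.coeff i = if i < m + 1 then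
      s (n + 1) (fun j => if (j : ℕ) < n then (m : ℤ) else (i : ℤ)) else 0 := by
    intro i
    rw [hP, Polynomial.finset_sum_coeff]
    simp only [Polynomial.coeff_C_mul, Polynomial.coeff_X_pow, mul_ite, mul_one, mul_zero]
    rw [Finset.sum_ite_eq (Finset.range (m+1)) i]
    simp [Finset.mem_range]
  -- compute coeff of the product
  have hmul : (PowerSeries.coeff k) (Y * (Q : PowerSeries R))
      = ∑ i ∈ Finset.range (n + 1), q i * p ((k : ℤ) - i) := by
    rw [mul_comm, PowerSeries.coeff_mul, Finset.Nat.sum_antidiagonal_eq_sum_range_succ_mk]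
    have h1 : ∀ i ∈ Finset.range (k + 1),
        (PowerSeries.coeff i) (Q : PowerSeries R) * (PowerSeries.coeff (k - i)) Y
        = Q.coeff i * p ((k : ℤ) - i) := by
      intro i hi
      rw [Finset.mem_range] at hi
      rw [Polynomial.coeff_coe, hY, PowerSeries.coeff_mk]
      congr 2
      omega
    rw [Finset.sum_congr rfl h1]
    calc ∑ i ∈ Finset.range (k + 1), Q.coeff i * p ((k : ℤ) - i)
        = ∑ i ∈ Finset.range (m + n + 1), Q.coeff i * p ((k : ℤ) - i) :=
          Finset.sum_subset (Finset.range_subset_range.mpr (by omega))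
            (fun i _ hi => by
              rw [Finset.mem_range, not_lt] at hi
              rw [hp ((k : ℤ) - i) (by omega), mul_zero])
      _ = ∑ i ∈ Finset.range (n + 1), Q.coeff i * p ((k : ℤ) - i) :=
          (Finset.sum_subset (Finset.range_subset_range.mpr (by omega))
            (fun i _ hi => by
              rw [Finset.mem_range, not_lt] at hi
              rw [hQc i, if_neg (by omega), zero_mul])).symm
      _ = ∑ i ∈ Finset.range (n + 1), q i * p ((k : ℤ) - i) := by
          refine Finset.sum_congr rfl fun i hi => ?_
          rw [Finset.mem_range] at hi
          rw [hQc i, if_pos hi]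
  rw [hmul, Polynomial.coeff_coe, hPc]
  have hdet : ∑ i ∈ Finset.range (n + 1), q i * p ((k : ℤ) - i)
      = (Matrix.of fun i j : Fin (n+1) =>
          p ((if (i : ℕ) < n then (m:ℤ) else (k:ℤ)) - ((i:ℕ):ℤ) + ((j:ℕ):ℤ))).det := by
    rw [laplace_key p (m:ℤ) n (k:ℤ)]
    refine Finset.sum_congr rfl fun i _ => ?_
    rw [hq]
    simp only [hs]
    ring
  rw [hdet]
  by_cases hkm : k < m + 1
  · rw [if_pos hkm, hs]
    exact sub_eq_zero_of_eq rfl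
  · rw [if_neg hkm, sub_zero]
    refine Matrix.det_zero_of_row_eq (i := ⟨m + n - k, by omega⟩) (j := Fin.last n) ?_ ?_
    · intro h
      have := congrArg Fin.val h
      simp only [Fin.val_last] at this
      omega
    · funext j
      simp only [Matrix.of_apply, Fin.val_last]
      rw [if_pos (show m + n - k < n by omega), if_neg (lt_irrefl n)]
      congr 1
      omega
end

section
/- Let Q := ∑_{i=0}^{n} (−1)^i s_{((m+1)^i, m^{n−i})} X^i. Then for every k ≥ 0, the coefficient of X^k in the formal power series Y·Q equals the (n+1)×(n+1) determinant s_{(m^n,k)}, i.e. the determinant of the matrix whose rows i = 1,…,n have entries p_{m−i+j} (j = 1,…,n+1) and whose last row has entries p_{k−(n+1)+j} (j = 1,…,n+1). -/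
/-- every coefficient of `Y·Q` is the Schur-type determinant `s_{(m^n,k)}`. -/
theorem coeff_Y_mul_Q_eq_schur_det
    (R : Type*) [CommRing R] (p : ℤ → R) (hp : ∀ i : ℤ, i < 0 → p i = 0)
    (m n : ℕ)
    (s : (l : ℕ) → (Fin l → ℤ) → R)
    (hs : ∀ (l : ℕ) (lam : Fin l → ℤ),
      s l lam = Matrix.det (Matrix.of fun i j : Fin l =>
        p (lam i - ((i : ℕ) : ℤ) + ((j : ℕ) : ℤ))))
    (Y : PowerSeries R) (hY : Y = PowerSeries.mk fun k : ℕ => p (k : ℤ))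
    (Q : Polynomial R)
    (hQ : Q = ∑ i ∈ Finset.range (n + 1),
      Polynomial.C ((-1) ^ i *
          s n (fun j => if (j : ℕ) < i then (m : ℤ) + 1 else (m : ℤ)))
        * Polynomial.X ^ i) :
    ∀ k : ℕ, PowerSeries.coeff k (Y * (Q : PowerSeries R)) =
      Matrix.det (Matrix.of fun i j : Fin (n + 1) =>
        if (i : ℕ) < n then p ((m : ℤ) - ((i : ℕ) : ℤ) + ((j : ℕ) : ℤ))
        else p ((k : ℤ) - (n : ℤ) + ((j : ℕ) : ℤ))) := by
  intro k
  set M : Matrix (Fin (n + 1)) (Fin (n + 1)) R := Matrix.of fun i j : Fin (n + 1) =>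
    if (i : ℕ) < n then p ((m : ℤ) - ((i : ℕ) : ℤ) + ((j : ℕ) : ℤ))
    else p ((k : ℤ) - (n : ℤ) + ((j : ℕ) : ℤ)) with hM
  -- Step A: the left-hand side as a finite sum
  have hL : PowerSeries.coeff k (Y * (Q : PowerSeries R))
      = ∑ i ∈ Finset.range (n + 1),
          ((-1) ^ i * s n (fun j => if (j : ℕ) < i then (m : ℤ) + 1 else (m : ℤ)))
            * p ((k : ℤ) - (i : ℤ)) := by
    rw [hY, hQ, ← Polynomial.coeToPowerSeries.ringHom_apply, map_sum]
    simp only [Polynomial.coeToPowerSeries.ringHom_apply, Polynomial.coe_mul,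
      Polynomial.coe_pow, Polynomial.coe_C, Polynomial.coe_X]
    rw [Finset.mul_sum, map_sum]
    refine Finset.sum_congr rfl fun i hi => ?_
    rw [show (PowerSeries.mk fun k : ℕ => p (k : ℤ)) *
        (PowerSeries.C ((-1) ^ i * s n (fun j => if (j : ℕ) < i then (m : ℤ) + 1 else (m : ℤ)))
          * PowerSeries.X ^ i)
        = PowerSeries.C ((-1) ^ i * s n (fun j => if (j : ℕ) < i then (m : ℤ) + 1 else (m : ℤ)))
            * ((PowerSeries.mk fun k : ℕ => p (k : ℤ)) * PowerSeries.X ^ i)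
        from by ring, PowerSeries.coeff_C_mul, PowerSeries.coeff_mul_X_pow']
    by_cases h : i ≤ k
    · rw [if_pos h, PowerSeries.coeff_mk]
      congr 2
      omega
    · rw [if_neg h, hp ((k : ℤ) - i) (by omega), mul_zero]
  -- Step B: the minors of the determinant are Schur-type determinants
  have hminor : ∀ j : Fin (n + 1),
      (M.submatrix Fin.castSucc j.succAbove).det
        = s n (fun c => if (c : ℕ) < n - (j : ℕ) then (m : ℤ) + 1 else (m : ℤ)) := by
    intro j
    rw [hs]
    rw [← Matrix.det_transpose (M.submatrix Fin.castSucc j.succAbove),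
      ← Matrix.det_submatrix_equiv_self Fin.revPerm]
    congr 1
    ext r c
    simp only [Matrix.submatrix_apply, Matrix.transpose_apply, Fin.revPerm_apply,
      Matrix.of_apply]
    have hrv : ((r : Fin n).rev : ℕ) = n - ((r : ℕ) + 1) := Fin.val_rev r
    have hcv2 : ((c : Fin n).rev : ℕ) = n - ((c : ℕ) + 1) := Fin.val_rev c
    have hrn : (r : ℕ) < n := r.isLt
    have hcn : (c : ℕ) < n := c.isLt
    rw [hM]
    by_cases h : (Fin.rev r).castSucc < j
    · rw [Fin.succAbove_of_castSucc_lt _ _ h]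
      have hj : ((r.rev : ℕ)) < (j : ℕ) := by
        simpa [Fin.lt_def] using h
      simp only [Matrix.of_apply, Fin.coe_castSucc]
      rw [if_pos (c.rev.isLt : ((c.rev : ℕ)) < n)]
      rw [if_neg (by omega : ¬ ((r : ℕ) < n - (j : ℕ)))]
      congr 1
      omega
    · rw [Fin.succAbove_of_le_castSucc _ _ (not_lt.mp h)]
      have hj : (j : ℕ) ≤ (r.rev : ℕ) := by
        simpa [Fin.le_def] using (not_lt.mp h)
      simp only [Matrix.of_apply, Fin.val_succ, Fin.coe_castSucc]
      rw [if_pos (c.rev.isLt : ((c.rev : ℕ)) < n)]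
      rw [if_pos (by omega : (r : ℕ) < n - (j : ℕ))]
      congr 1
      push_cast
      omega
  -- Step C: expand the determinant along the last row
  have hdet : M.det = ∑ j : Fin (n + 1),
      (-1) ^ (n + (j : ℕ)) * p ((k : ℤ) - (n : ℤ) + (j : ℕ))
        * s n (fun c => if (c : ℕ) < n - (j : ℕ) then (m : ℤ) + 1 else (m : ℤ)) := by
    rw [Matrix.det_succ_row M (Fin.last n)]
    refine Finset.sum_congr rfl fun j _ => ?_
    rw [Fin.succAbove_last, hminor j]
    have hlast : M (Fin.last n) j = p ((k : ℤ) - (n : ℤ) + (j : ℕ)) := by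
      rw [hM]
      simp [Matrix.of_apply, Fin.val_last]
    rw [hlast, Fin.val_last]
  -- Step D: match the two sums
  rw [hL, hdet, ← Fin.sum_univ_eq_sum_range
    (fun i => ((-1) ^ i * s n (fun j => if (j : ℕ) < i then (m : ℤ) + 1 else (m : ℤ)))
      * p ((k : ℤ) - (i : ℤ))) (n + 1)]
  refine Fintype.sum_equiv Fin.revPerm _ _ fun i => ?_
  simp only [Fin.revPerm_apply, Fin.val_rev]
  have hin : (i : ℕ) ≤ n := by omega
  have h1 : n + 1 - ((i : ℕ) + 1) = n - (i : ℕ) := by omega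
  simp only [h1]
  have h2 : ((k : ℤ) - (n : ℤ) + ((n - (i : ℕ) : ℕ) : ℤ)) = (k : ℤ) - (i : ℕ) := by
    push_cast [Nat.cast_sub hin]; ring
  have h3 : n - (n - (i : ℕ)) = (i : ℕ) := by omega
  have h4 : (-1 : R) ^ (n + (n - (i : ℕ))) = (-1) ^ (i : ℕ) := by
    have e1 : (-1 : R) ^ ((i : ℕ) + (i : ℕ)) = 1 := by
      rw [← two_mul, pow_mul]; simp
    calc (-1 : R) ^ (n + (n - (i : ℕ)))
        = (-1) ^ (n + (n - (i : ℕ)) + ((i : ℕ) + (i : ℕ))) := by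
          rw [pow_add (-1 : R) (n + (n - (i : ℕ))) ((i : ℕ) + (i : ℕ)), e1, mul_one]
      _ = (-1) ^ (2 * n + (i : ℕ)) := by congr 1; omega
      _ = (-1) ^ (i : ℕ) := by rw [pow_add, pow_mul]; simp
  rw [h2, h4]
  simp only [h3]
  ring
end

section
/- For every nonzero x ∈ ℂ the following two single-determinant expressions hold: (1) ∑_{i=0}^{m} s_{(m^n,i)} x^i = x^m · det( (p̃_{m−i+j})_{i,j=1}^{n+1} ), where p̃_l := ∑_{j≥0} x^{−j} p_{l−j} (a finite sum since p vanishes at negative indices); and (2) ∑_{i=0}^{n} (−1)^i s_{((m+1)^i, m^{n−i})} x^i = (−x)^n · det( (p̂_{m+1−i+j})_{i,j=1}^{n} ), where p̂_l := p_l − x^{−1} p_{l−1}. -/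
lemma ptil_rec (p : ℤ → ℂ) (hp : ∀ i : ℤ, i < 0 → p i = 0) (x : ℂ) (hx : x ≠ 0)
    (ptil : ℤ → ℂ)
    (hptil : ∀ l : ℤ, ptil l =
      ∑ j ∈ Finset.range (l.toNat + 1), x ^ (-(j : ℤ)) * p (l - (j : ℤ)))
    (l : ℤ) : ptil l = p l + x⁻¹ * ptil (l - 1) := by
  rcases le_or_gt l 0 with h | h
  · have h1 : l.toNat = 0 := Int.toNat_of_nonpos h
    have h2 : (l - 1).toNat = 0 := Int.toNat_of_nonpos (by omega)
    rw [hptil, hptil, h1, h2]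
    simp
    exact Or.inr (hp _ (by omega))
  · have h1 : l.toNat = (l - 1).toNat + 1 := by omega
    rw [hptil, hptil, h1, Finset.sum_range_succ']
    simp only [Nat.cast_zero, neg_zero, zpow_zero, one_mul, sub_zero]
    rw [add_comm, Finset.mul_sum]
    congr 1
    apply Finset.sum_congr rfl
    intro j _
    have : (-(((j : ℕ) + 1 : ℕ) : ℤ)) = (-1) + (-(j:ℤ)) := by push_cast; ring
    rw [this, zpow_add₀ hx, zpow_neg_one]
    have : l - ((j : ℕ) + 1 : ℕ) = l - 1 - (j : ℤ) := by push_cast; ring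
    rw [this]; ring

lemma ptil_sum (p : ℤ → ℂ) (hp : ∀ i : ℤ, i < 0 → p i = 0) (x : ℂ) (hx : x ≠ 0)
    (ptil : ℤ → ℂ)
    (hptil : ∀ l : ℤ, ptil l =
      ∑ j ∈ Finset.range (l.toNat + 1), x ^ (-(j : ℤ)) * p (l - (j : ℤ)))
    (m : ℕ) (l : ℤ) (hl : l ≤ m) :
    ∑ i ∈ Finset.range (m + 1), x ^ i * p (l - m + i) = x ^ m * ptil l := by
  rw [← Finset.sum_range_reflect, hptil, Finset.mul_sum,
    Finset.sum_subset (Finset.range_subset_range.2 (by omega : l.toNat + 1 ≤ m + 1))]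
  · apply Finset.sum_congr rfl
    intro j hj
    have hjm : j ≤ m := by simpa [Nat.lt_succ_iff] using Finset.mem_range.1 hj
    have h1 : m + 1 - 1 - j = m - j := rfl
    have h2 : ((m - j : ℕ) : ℤ) = (m : ℤ) - j := by omega
    have h3 : l - (m : ℤ) + ((m - j : ℕ) : ℤ) = l - j := by omega
    rw [h1, h3]
    have h4 : (x ^ m * (x ^ (-(j:ℤ)) * p (l - j))) = (x ^ (m:ℤ) * x ^ (-(j:ℤ))) * p (l - j) := by
      rw [zpow_natCast]; ring
    rw [h4, ← zpow_add₀ hx]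
    have h5 : ((m:ℤ) + -(j:ℤ)) = ((m - j : ℕ) : ℤ) := by omega
    rw [h5, zpow_natCast]
  · intro j hj hj2
    have : l - (j:ℤ) < 0 := by
      simp only [Finset.mem_range] at hj hj2; omega
    rw [hp _ this, mul_zero, mul_zero]

lemma rowop (p : ℤ → ℂ) (hp : ∀ i : ℤ, i < 0 → p i = 0) (x : ℂ) (hx : x ≠ 0)
    (ptil : ℤ → ℂ)
    (hptil : ∀ l : ℤ, ptil l =
      ∑ j ∈ Finset.range (l.toNat + 1), x ^ (-(j : ℤ)) * p (l - (j : ℤ)))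
    (m n : ℕ) :
    ∀ k, k ≤ n → Matrix.det (Matrix.of fun r c : Fin (n+1) =>
        if (r:ℕ) < k then p ((m:ℤ) - (r:ℕ) + (c:ℕ)) else ptil ((m:ℤ) - (r:ℕ) + (c:ℕ)))
      = Matrix.det (Matrix.of fun r c : Fin (n+1) => ptil ((m:ℤ) - (r:ℕ) + (c:ℕ))) := by
  intro k
  induction k with
  | zero => intro _; simp
  | succ k ih =>
    intro hk
    have hk' : k ≤ n := by omega
    rw [← ih hk']
    set A : Matrix (Fin (n+1)) (Fin (n+1)) ℂ := Matrix.of fun r c : Fin (n+1) =>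
      if (r:ℕ) < k then p ((m:ℤ) - (r:ℕ) + (c:ℕ)) else ptil ((m:ℤ) - (r:ℕ) + (c:ℕ)) with hA
    have hne : (⟨k, by omega⟩ : Fin (n+1)) ≠ ⟨k+1, by omega⟩ := by
      simp [Fin.ext_iff]
    have key : (Matrix.of fun r c : Fin (n+1) =>
        if (r:ℕ) < k+1 then p ((m:ℤ) - (r:ℕ) + (c:ℕ)) else ptil ((m:ℤ) - (r:ℕ) + (c:ℕ)))
        = A.updateRow ⟨k, by omega⟩
            (A ⟨k, by omega⟩ + (-x⁻¹) • A ⟨k+1, by omega⟩) := by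
      ext r c
      rw [Matrix.updateRow_apply]
      by_cases hr : r = ⟨k, by omega⟩
      · subst hr
        have e1 : A ⟨k, by omega⟩ c = ptil ((m:ℤ) - (k:ℕ) + ((c:ℕ):ℤ)) := by
          simp only [hA, Matrix.of_apply, Fin.val_mk]
          rw [if_neg (by omega)]
        have e2 : A ⟨k+1, by omega⟩ c = ptil (((m:ℤ) - (k:ℕ) + ((c:ℕ):ℤ)) - 1) := by
          simp only [hA, Matrix.of_apply, Fin.val_mk]
          rw [if_neg (by omega)]
          congr 1; push_cast; ring
        simp only [Pi.add_apply, Pi.smul_apply, smul_eq_mul, e1, e2, eq_self_iff_true, if_true,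
          Matrix.of_apply, Fin.val_mk]
        rw [if_pos (by omega)]
        have hrec := ptil_rec p hp x hx ptil hptil ((m:ℤ) - (k:ℕ) + ((c:ℕ):ℤ))
        linear_combination -hrec
      · have hvne : (r:ℕ) ≠ k := fun h => hr (Fin.ext h)
        rw [if_neg hr]
        simp only [hA, Matrix.of_apply]
        by_cases h2 : (r:ℕ) < k
        · rw [if_pos h2, if_pos (by omega)]
        · rw [if_neg h2, if_neg (by omega)]
    rw [key, Matrix.det_updateRow_add_smul_self A hne (-x⁻¹)]

lemma part1 (p : ℤ → ℂ) (hp : ∀ i : ℤ, i < 0 → p i = 0)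
    (m n : ℕ)
    (s : (l : ℕ) → (Fin l → ℤ) → ℂ)
    (hs : ∀ (l : ℕ) (lam : Fin l → ℤ),
      s l lam = Matrix.det (Matrix.of fun i j : Fin l =>
        p (lam i - ((i : ℕ) : ℤ) + ((j : ℕ) : ℤ))))
    (x : ℂ) (hx : x ≠ 0)
    (ptil : ℤ → ℂ)
    (hptil : ∀ l : ℤ, ptil l =
      ∑ j ∈ Finset.range (l.toNat + 1), x ^ (-(j : ℤ)) * p (l - (j : ℤ))) :
    (∑ i ∈ Finset.range (m + 1),
        s (n + 1) (fun j => if (j : ℕ) < n then (m : ℤ) else (i : ℤ)) * x ^ i) =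
      x ^ m * Matrix.det (Matrix.of fun i j : Fin (n + 1) =>
        ptil ((m : ℤ) - ((i : ℕ) : ℤ) + ((j : ℕ) : ℤ))) := by
  classical
  set N : Matrix (Fin (n+1)) (Fin (n+1)) ℂ :=
    Matrix.of fun r c : Fin (n+1) => p ((m:ℤ) - ((r:ℕ):ℤ) + ((c:ℕ):ℤ)) with hN
  set L : (Fin (n+1) → ℂ) →ₗ[ℂ] ℂ :=
    (Matrix.detRowAlternating (n := Fin (n+1)) (R := ℂ)).toMultilinearMap.toLinearMap
      N (Fin.last n) with hL
  have hLdet : ∀ w : Fin (n+1) → ℂ, L w = Matrix.det (N.updateRow (Fin.last n) w) :=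
    fun w => rfl
  have hstep : ∀ i : ℕ, s (n + 1) (fun j => if (j : ℕ) < n then (m : ℤ) else (i : ℤ))
      = L (fun c : Fin (n+1) => p ((i:ℤ) - (n:ℤ) + ((c:ℕ):ℤ))) := by
    intro i
    rw [hs, hLdet]
    congr 1
    ext r c
    rw [Matrix.updateRow_apply]
    by_cases hr : r = Fin.last n
    · subst hr
      rw [if_pos rfl, Matrix.of_apply, if_neg (by simp [Fin.last])]
      simp [Fin.last]
    · have hrn : (r:ℕ) < n := by
        have h1 := r.isLt
        have h2 : (r:ℕ) ≠ n := fun h => hr (Fin.ext (by simp [Fin.last, h]))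
        omega
      rw [if_neg hr, Matrix.of_apply, if_pos hrn, hN]
      rfl
  calc (∑ i ∈ Finset.range (m + 1),
        s (n + 1) (fun j => if (j : ℕ) < n then (m : ℤ) else (i : ℤ)) * x ^ i)
      = ∑ i ∈ Finset.range (m + 1),
          L ((x ^ i) • fun c : Fin (n+1) => p ((i:ℤ) - (n:ℤ) + ((c:ℕ):ℤ))) := by
        apply Finset.sum_congr rfl
        intro i _
        rw [hstep i, map_smul, smul_eq_mul, mul_comm]
    _ = L (∑ i ∈ Finset.range (m + 1),
          (x ^ i) • fun c : Fin (n+1) => p ((i:ℤ) - (n:ℤ) + ((c:ℕ):ℤ))) := by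
        rw [map_sum]
    _ = L ((x ^ m) • fun c : Fin (n+1) => ptil ((m:ℤ) - (n:ℤ) + ((c:ℕ):ℤ))) := by
        congr 1
        funext c
        simp only [Finset.sum_apply, Pi.smul_apply, smul_eq_mul]
        have hms := ptil_sum p hp x hx ptil hptil m ((m:ℤ) - (n:ℤ) + ((c:ℕ):ℤ))
          (by have := c.isLt; omega)
        rw [← hms]
        apply Finset.sum_congr rfl
        intro i _
        congr 2
        push_cast; ring
    _ = x ^ m * Matrix.det (Matrix.of fun i j : Fin (n + 1) =>
          ptil ((m : ℤ) - ((i : ℕ) : ℤ) + ((j : ℕ) : ℤ))) := by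
        rw [map_smul, smul_eq_mul, hLdet]
        congr 1
        rw [← rowop p hp x hx ptil hptil m n n le_rfl]
        congr 1
        ext r c
        rw [Matrix.updateRow_apply]
        by_cases hr : r = Fin.last n
        · subst hr
          rw [if_pos rfl, Matrix.of_apply, if_neg (by simp [Fin.last])]
          simp [Fin.last]
        · have hrn : (r:ℕ) < n := by
            have h1 := r.isLt
            have h2 : (r:ℕ) ≠ n := fun h => hr (Fin.ext (by simp [Fin.last, h]))
            omega
          rw [if_neg hr, Matrix.of_apply, if_pos hrn, hN]
          rfl

lemma fin2_eq_zero_of_ne_one {a : Fin 2} (h : a ≠ 1) : a = 0 := by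
  fin_cases a <;> simp_all

lemma fin2_classify {n : ℕ} (r : Fin n → Fin 2)
    (h : ∀ i : Fin n, ∀ hi : (i:ℕ)+1 < n, r i = 1 → r ⟨(i:ℕ)+1, hi⟩ = 1) :
    ∃ k, k ≤ n ∧ ∀ j : Fin n, r j = if (j:ℕ) < k then 0 else 1 := by
  classical
  have prop : ∀ d : ℕ, ∀ i : Fin n, r i = 1 → ∀ hj : (i:ℕ)+d < n, r ⟨(i:ℕ)+d, hj⟩ = 1 := by
    intro d
    induction d with
    | zero => intro i hi hj; convert hi using 2; exact Fin.ext (Nat.add_zero _)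
    | succ d ih =>
      intro i hi hj
      have hj' : (i:ℕ)+d < n := by omega
      have h1 := ih i hi hj'
      have h2 := h ⟨(i:ℕ)+d, hj'⟩ (by omega) h1
      convert h2 using 2; exact Fin.ext (by simp only [Fin.val_mk]; omega)
  have prop' : ∀ i j : Fin n, (i:ℕ) ≤ (j:ℕ) → r i = 1 → r j = 1 := by
    intro i j hij hi
    have hj : (i:ℕ) + ((j:ℕ) - (i:ℕ)) < n := by have := j.isLt; omega
    have h1 := prop ((j:ℕ)-(i:ℕ)) i hi hj
    convert h1 using 2
    ext; simp; omega
  by_cases hone : ∃ j : Fin n, r j = 1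
  · obtain ⟨j0, hj0⟩ := hone
    set S := Finset.univ.filter (fun j : Fin n => r j = 1) with hS
    have hSne : S.Nonempty := ⟨j0, by simp [hS, hj0]⟩
    set jm := S.min' hSne with hjm
    refine ⟨(jm:ℕ), by have := jm.isLt; omega, ?_⟩
    intro j
    by_cases hjk : (j:ℕ) < (jm:ℕ)
    · rw [if_pos hjk]
      apply fin2_eq_zero_of_ne_one
      intro hr1
      have hle : jm ≤ j := S.min'_le j (by simp [hS, hr1])
      rw [Fin.le_def] at hle
      omega
    · rw [if_neg hjk]
      have hmem := S.min'_mem hSne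
      simp only [hS, Finset.mem_filter, Finset.mem_univ, true_and] at hmem
      exact prop' jm j (by omega) hmem
  · push_neg at hone
    refine ⟨n, le_rfl, ?_⟩
    intro j
    rw [if_pos j.isLt]
    exact fin2_eq_zero_of_ne_one (hone j)

lemma sum_indicator_ge {n k : ℕ} (hk : k ≤ n) :
    (∑ j : Fin n, (if (j:ℕ) < k then 0 else 1)) = n - k := by
  rw [Fin.sum_univ_eq_sum_range (fun j => if j < k then 0 else 1) n]
  have key : ∀ N : ℕ, (∑ j ∈ Finset.range N, (if j < k then 0 else 1)) = N - min N k := by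
    intro N
    induction N with
    | zero => simp
    | succ N ihN =>
      rw [Finset.sum_range_succ, ihN]
      by_cases hN : N < k
      · rw [if_pos hN]; omega
      · rw [if_neg hN]; omega
  rw [key n]; omega

lemma fin2_eq_one_of_ne_zero {a : Fin 2} (h : a ≠ 0) : a = 1 := by
  fin_cases a <;> simp_all

lemma part2 (p : ℤ → ℂ) (hp : ∀ i : ℤ, i < 0 → p i = 0)
    (m n : ℕ)
    (s : (l : ℕ) → (Fin l → ℤ) → ℂ)
    (hs : ∀ (l : ℕ) (lam : Fin l → ℤ),
      s l lam = Matrix.det (Matrix.of fun i j : Fin l =>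
        p (lam i - ((i : ℕ) : ℤ) + ((j : ℕ) : ℤ))))
    (x : ℂ) (hx : x ≠ 0)
    (phat : ℤ → ℂ)
    (hphat : ∀ l : ℤ, phat l = p l - x⁻¹ * p (l - 1)) :
    (∑ i ∈ Finset.range (n + 1),
        (-1) ^ i * s n (fun j => if (j : ℕ) < i then (m : ℤ) + 1 else (m : ℤ)) * x ^ i) =
      (-x) ^ n * Matrix.det (Matrix.of fun i j : Fin n =>
        phat ((m : ℤ) + 1 - ((i : ℕ) : ℤ) + ((j : ℕ) : ℤ))) := by
  classical
  set A : Fin n → Fin 2 → (Fin n → ℂ) := fun i t c =>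
    if t = 0 then p ((m:ℤ) + 1 - ((i:ℕ):ℤ) + ((c:ℕ):ℤ))
    else p ((m:ℤ) - ((i:ℕ):ℤ) + ((c:ℕ):ℤ)) with hA
  have hA0 : ∀ (i : Fin n) (c : Fin n), A i 0 c = p ((m:ℤ) + 1 - ((i:ℕ):ℤ) + ((c:ℕ):ℤ)) := by
    intro i c; simp [hA]
  have hA1 : ∀ (i : Fin n) (c : Fin n), A i 1 c = p ((m:ℤ) - ((i:ℕ):ℤ) + ((c:ℕ):ℤ)) := by
    intro i c; simp [hA]
  set f := (Matrix.detRowAlternating (n := Fin n) (R := ℂ)) with hf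
  have hM : (Matrix.of fun i c : Fin n => phat ((m:ℤ) + 1 - ((i:ℕ):ℤ) + ((c:ℕ):ℤ)))
      = fun i => ∑ t : Fin 2, (-x⁻¹) ^ (t:ℕ) • A i t := by
    funext i c
    rw [Matrix.of_apply]
    show phat ((m:ℤ) + 1 - ((i:ℕ):ℤ) + ((c:ℕ):ℤ)) = (∑ t : Fin 2, (-x⁻¹) ^ (t:ℕ) • A i t) c
    simp only [Finset.sum_apply, Pi.smul_apply, smul_eq_mul, Fin.sum_univ_two,
      Fin.val_zero, Fin.val_one, pow_zero, pow_one, one_mul, hA0, hA1, hphat]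
    have harg : (m:ℤ) + 1 - ((i:ℕ):ℤ) + ((c:ℕ):ℤ) - 1 = (m:ℤ) - ((i:ℕ):ℤ) + ((c:ℕ):ℤ) := by
      ring
    rw [harg]
    ring
  have hdet : Matrix.det (Matrix.of fun i c : Fin n =>
        phat ((m:ℤ) + 1 - ((i:ℕ):ℤ) + ((c:ℕ):ℤ)))
      = ∑ r : Fin n → Fin 2,
          (∏ i : Fin n, (-x⁻¹) ^ ((r i : ℕ))) * f (fun i => A i (r i)) := by
    have h1 : Matrix.det (Matrix.of fun i c : Fin n =>
        phat ((m:ℤ) + 1 - ((i:ℕ):ℤ) + ((c:ℕ):ℤ)))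
        = f.toMultilinearMap (fun i => ∑ t : Fin 2, (-x⁻¹) ^ (t:ℕ) • A i t) := by
      rw [← hM]; rfl
    rw [h1,
      f.toMultilinearMap.map_sum (fun (i : Fin n) (t : Fin 2) => ((-x⁻¹) ^ (t:ℕ)) • A i t)]
    apply Finset.sum_congr rfl
    intro r _
    have h2 := f.toMultilinearMap.map_smul_univ
      (fun i => (-x⁻¹) ^ ((r i : ℕ))) (fun i => A i (r i))
    simpa [smul_eq_mul, AlternatingMap.coe_multilinearMap] using h2
  set iota : ℕ → (Fin n → Fin 2) := fun k j => if (j:ℕ) < k then 0 else 1 with hiota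
  have hvanish : ∀ r : Fin n → Fin 2, (¬ ∃ k ∈ Finset.range (n+1), iota k = r) →
      f (fun i => A i (r i)) = 0 := by
    intro r hr
    have hdesc : ∃ i : Fin n, ∃ hi : (i:ℕ)+1 < n, r i = 1 ∧ r ⟨(i:ℕ)+1, hi⟩ = 0 := by
      by_contra hcon
      push_neg at hcon
      obtain ⟨k, hk, hkr⟩ := fin2_classify r (by
        intro i hi hri
        exact fin2_eq_one_of_ne_zero (fun h0 => (hcon i hi hri) h0)) -- hcon : ∀ i hi, r i = 1 → r ⟨..⟩ ≠ 0
      exact hr ⟨k, Finset.mem_range.2 (by omega),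
        by funext j; simp only [hiota]; exact (hkr j).symm⟩
    obtain ⟨i, hi, hri, hri1⟩ := hdesc
    apply AlternatingMap.map_eq_zero_of_eq f _ (i := i) (j := ⟨(i:ℕ)+1, hi⟩)
    · show A i (r i) = A ⟨(i:ℕ)+1, hi⟩ (r ⟨(i:ℕ)+1, hi⟩)
      rw [hri, hri1]
      funext c
      rw [hA1, hA0]
      congr 1
      simp only [Fin.val_mk]
      push_cast
      ring
    · intro hcon
      have h3 := congrArg Fin.val hcon
      simp at h3
  have hinj : ∀ a ∈ Finset.range (n+1), ∀ b ∈ Finset.range (n+1), iota a = iota b → a = b := by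
    intro a ha b hb hab
    by_contra hne
    rcases Nat.lt_or_ge a b with hlt | hge
    · have hb' : b ≤ n := by simpa [Nat.lt_succ_iff] using hb
      have han : a < n := by omega
      have := congrFun hab ⟨a, han⟩
      simp [hiota, hlt] at this
    · have hlt : b < a := by omega
      have ha' : a ≤ n := by simpa [Nat.lt_succ_iff] using ha
      have hbn : b < n := by omega
      have := congrFun hab ⟨b, hbn⟩
      simp [hiota, hlt] at this
  have hsum : (∑ r : Fin n → Fin 2,
          (∏ i : Fin n, (-x⁻¹) ^ ((r i : ℕ))) * f (fun i => A i (r i)))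
      = ∑ k ∈ Finset.range (n+1),
          (∏ i : Fin n, (-x⁻¹) ^ ((iota k i : ℕ))) * f (fun i => A i (iota k i)) := by
    rw [← Finset.sum_image (f := fun r => (∏ i : Fin n, (-x⁻¹) ^ ((r i : ℕ))) * f (fun i => A i (r i))) hinj]
    symm
    apply Finset.sum_subset (Finset.subset_univ _)
    intro r _ hrnot
    have : ¬ ∃ k ∈ Finset.range (n+1), iota k = r := by
      intro ⟨k, hk, hkr⟩
      exact hrnot (Finset.mem_image.2 ⟨k, hk, hkr⟩)
    rw [hvanish r this, mul_zero]
  -- termwise identification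
  rw [hdet, hsum, Finset.mul_sum]
  apply Finset.sum_congr rfl
  intro k hk
  have hkn : k ≤ n := by simpa [Nat.lt_succ_iff] using Finset.mem_range.1 hk
  -- product of scalars
  have hprod : (∏ i : Fin n, (-x⁻¹) ^ ((iota k i : ℕ))) = (-x⁻¹) ^ (n - k) := by
    rw [Finset.prod_pow_eq_pow_sum]
    congr 1
    have : ∀ i : Fin n, ((iota k i : ℕ)) = if (i:ℕ) < k then 0 else 1 := by
      intro i
      simp only [hiota]
      by_cases h : (i:ℕ) < k
      · rw [if_pos h, if_pos h]; rfl
      · rw [if_neg h, if_neg h]; rfl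
    rw [Finset.sum_congr rfl (fun i _ => this i)]
    exact sum_indicator_ge hkn
  -- determinant identification
  have hdet2 : f (fun i => A i (iota k i)) =
      s n (fun j => if (j : ℕ) < k then (m : ℤ) + 1 else (m : ℤ)) := by
    rw [hs]
    show Matrix.det (Matrix.of fun i c : Fin n => A i (iota k i) c) = _
    congr 1
    ext i c
    rw [Matrix.of_apply, Matrix.of_apply]
    simp only [hiota]
    by_cases h : (i:ℕ) < k
    · rw [if_pos h, hA0 i c, if_pos h]
    · rw [if_neg h, hA1 i c, if_neg h]
  rw [hprod, hdet2]
  -- scalar algebra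
  have hxne : (-x) ≠ 0 := neg_ne_zero.2 hx
  have hpow : (-x) ^ n * (-x⁻¹) ^ (n - k) = (-1)^k * x ^ k := by
    have e1 : (-x⁻¹) = (-x)⁻¹ := by
      field_simp
    rw [e1, inv_pow]
    have e2 : (-x) ^ n = (-x) ^ k * (-x) ^ (n - k) := by
      rw [← pow_add]; congr 1; omega
    rw [e2, mul_assoc, mul_inv_cancel₀ (pow_ne_zero _ hxne), mul_one, neg_pow]
  calc (-1) ^ k * s n (fun j => if (j : ℕ) < k then (m : ℤ) + 1 else (m : ℤ)) * x ^ k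
      = ((-x) ^ n * (-x⁻¹) ^ (n - k)) * s n (fun j => if (j : ℕ) < k then (m : ℤ) + 1 else (m : ℤ)) := by
        rw [hpow]; ring
    _ = (-x) ^ n * ((-x⁻¹) ^ (n - k) * s n (fun j => if (j : ℕ) < k then (m : ℤ) + 1 else (m : ℤ))) := by
        ring


/-- single-determinant expressions for the Padé approximating polynomials. -/
theorem single_determinant_expressions
    (p : ℤ → ℂ) (hp : ∀ i : ℤ, i < 0 → p i = 0)
    (m n : ℕ)
    (s : (l : ℕ) → (Fin l → ℤ) → ℂ)
    (hs : ∀ (l : ℕ) (lam : Fin l → ℤ),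
      s l lam = Matrix.det (Matrix.of fun i j : Fin l =>
        p (lam i - ((i : ℕ) : ℤ) + ((j : ℕ) : ℤ))))
    (x : ℂ) (hx : x ≠ 0)
    (ptil : ℤ → ℂ)
    (hptil : ∀ l : ℤ, ptil l =
      ∑ j ∈ Finset.range (l.toNat + 1), x ^ (-(j : ℤ)) * p (l - (j : ℤ)))
    (phat : ℤ → ℂ)
    (hphat : ∀ l : ℤ, phat l = p l - x⁻¹ * p (l - 1)) :
    (∑ i ∈ Finset.range (m + 1),
        s (n + 1) (fun j => if (j : ℕ) < n then (m : ℤ) else (i : ℤ)) * x ^ i) =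
      x ^ m * Matrix.det (Matrix.of fun i j : Fin (n + 1) =>
        ptil ((m : ℤ) - ((i : ℕ) : ℤ) + ((j : ℕ) : ℤ))) ∧
    (∑ i ∈ Finset.range (n + 1),
        (-1) ^ i * s n (fun j => if (j : ℕ) < i then (m : ℤ) + 1 else (m : ℤ)) * x ^ i) =
      (-x) ^ n * Matrix.det (Matrix.of fun i j : Fin n =>
        phat ((m : ℤ) + 1 - ((i : ℕ) : ℤ) + ((j : ℕ) : ℤ))) :=
  ⟨part1 p hp m n s hs x hx ptil hptil, part2 p hp m n s hs x hx phat hphat⟩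
end

section
/- Let N ∈ ℕ, let q ∈ ℂ with 0 < |q| < 1, let a_1,…,a_{N+1}, b_1,…,b_{N+1} ∈ ℂ, and let x ∈ ℂ satisfy |a_s x| < 1 and |b_s x| < 1 for all s = 1,…,N+1. Then the convergent infinite product ∏_{s=1}^{N+1} ∏_{n=0}^{∞} (1 − a_s q^n x)/(1 − b_s q^n x) equals exp( ∑_{k=1}^{∞} ( ∑_{s=1}^{N+1} (b_s^k − a_s^k) ) x^k / ( k (1 − q^k) ) ), where the series converges absolutely. -/
set_option maxHeartbeats 1000000
open Complex

lemma myaux_cq_lt_one {q c : ℂ} (hq1 : ‖q‖ < 1) (hc : ‖c‖ < 1) (n : ℕ) :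
    ‖c * q ^ n‖ < 1 := by
  have h1 : ‖q‖ ^ n ≤ 1 := pow_le_one₀ (norm_nonneg q) hq1.le
  calc ‖c * q ^ n‖ = ‖c‖ * ‖q‖ ^ n := by rw [norm_mul, norm_pow]
    _ ≤ ‖c‖ * 1 := by gcongr ‖c‖ * ?_
    _ < 1 := by simpa using hc

lemma myaux_main {q : ℂ} (hq1 : ‖q‖ < 1) {c : ℂ} (hc : ‖c‖ < 1) :
    Summable (fun n : ℕ => Complex.log (1 - c * q ^ n)) ∧
    Summable (fun k : ℕ => ‖c ^ (k + 1) / (((k : ℂ) + 1) * (1 - q ^ (k + 1)))‖) ∧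
    ∑' n : ℕ, Complex.log (1 - c * q ^ n)
      = -∑' k : ℕ, c ^ (k + 1) / (((k : ℂ) + 1) * (1 - q ^ (k + 1))) := by
  have hq0 : (0:ℝ) ≤ ‖q‖ := norm_nonneg q
  have hc0 : (0:ℝ) ≤ ‖c‖ := norm_nonneg c
  have h1q : (0:ℝ) < 1 - ‖q‖ := by linarith
  set F : ℕ × ℕ → ℂ := fun p => (c * q ^ p.1) ^ (p.2 + 1) / ((p.2 : ℂ) + 1) with hF
  -- summability of F
  have hFs : Summable F := by
    apply Summable.of_norm
    have hg : Summable (fun p : ℕ × ℕ => ‖q‖ ^ p.1 * (‖c‖ * ‖c‖ ^ p.2)) :=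
      (summable_geometric_of_lt_one hq0 hq1).mul_of_nonneg
        ((summable_geometric_of_lt_one hc0 hc).mul_left ‖c‖)
        (fun n => pow_nonneg hq0 n) (fun k => mul_nonneg hc0 (pow_nonneg hc0 k))
    refine Summable.of_nonneg_of_le (fun p => norm_nonneg _) ?_ hg
    rintro ⟨n, k⟩
    have hden : (1:ℝ) ≤ ‖((k : ℂ) + 1)‖ := by
      have : ((k : ℂ) + 1) = ((k + 1 : ℕ) : ℂ) := by push_cast; ring
      rw [this, norm_natCast]
      exact_mod_cast Nat.succ_le_succ (Nat.zero_le k)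
    have h1 : ‖F (n, k)‖ ≤ ‖c * q ^ n‖ ^ (k + 1) := by
      rw [hF]; simp only [norm_div, norm_pow]
      exact div_le_self (pow_nonneg (norm_nonneg _) _) hden
    have h2 : ‖c * q ^ n‖ ^ (k + 1) = ‖c‖ ^ (k + 1) * (‖q‖ ^ n) ^ (k + 1) := by
      rw [norm_mul, norm_pow, mul_pow]
    have h3 : (‖q‖ ^ n) ^ (k + 1) ≤ ‖q‖ ^ n :=
      pow_le_of_le_one (pow_nonneg hq0 n) (pow_le_one₀ hq0 hq1.le) (Nat.succ_ne_zero k)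
    calc ‖F (n, k)‖ ≤ ‖c‖ ^ (k + 1) * (‖q‖ ^ n) ^ (k + 1) := by rw [← h2]; exact h1
      _ ≤ ‖c‖ ^ (k + 1) * ‖q‖ ^ n := by gcongr ‖c‖ ^ (k+1) * ?_
      _ = ‖q‖ ^ n * (‖c‖ * ‖c‖ ^ k) := by ring
  -- Taylor expansion per n
  have hT : ∀ n : ℕ, HasSum (fun k => F (n, k)) (-Complex.log (1 - c * q ^ n)) := by
    intro n
    have h0 := Complex.hasSum_taylorSeries_neg_log (myaux_cq_lt_one hq1 hc n)
    have h1 := (hasSum_nat_add_iff' (f := fun m : ℕ => (c * q ^ n) ^ m / m) 1).mpr h0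
    simp only [Finset.range_one, Finset.sum_singleton, pow_zero, Nat.cast_zero, div_zero,
      sub_zero] at h1
    refine h1.congr_fun fun k => ?_
    rw [hF]; push_cast; ring_nf
  have hsum_n : HasSum (fun n : ℕ => -Complex.log (1 - c * q ^ n)) (∑' p, F p) :=
    hFs.hasSum.prod_fiberwise hT
  -- geometric sums per k
  have hG : ∀ k : ℕ, HasSum (fun n => F (n, k))
      (c ^ (k + 1) / (((k : ℂ) + 1) * (1 - q ^ (k + 1)))) := by
    intro k
    have hqk : ‖q ^ (k + 1)‖ < 1 := by
      rw [norm_pow]; exact pow_lt_one₀ hq0 hq1 (Nat.succ_ne_zero k)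
    have h := (hasSum_geometric_of_norm_lt_one hqk).mul_left (c ^ (k + 1) / ((k : ℂ) + 1))
    have he : (fun n : ℕ => c ^ (k + 1) / ((k : ℂ) + 1) * (q ^ (k + 1)) ^ n)
        = fun n => F (n, k) := by
      funext n; rw [hF]; simp only; rw [mul_pow, ← pow_mul, ← pow_mul, Nat.mul_comm]; ring
    rw [he] at h
    rw [show c ^ (k + 1) / (((k : ℂ) + 1) * (1 - q ^ (k + 1)))
        = c ^ (k + 1) / ((k : ℂ) + 1) * (1 - q ^ (k + 1))⁻¹ by
      rw [div_eq_mul_inv, div_eq_mul_inv, mul_inv, mul_assoc]]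
    exact h
  have hswap : HasSum (fun k : ℕ => c ^ (k + 1) / (((k : ℂ) + 1) * (1 - q ^ (k + 1))))
      (∑' p, F p) := by
    have hFs2 : Summable (fun p : ℕ × ℕ => F p.swap) := hFs.prod_symm
    have hts : ∑' p : ℕ × ℕ, F p.swap = ∑' p, F p :=
      (Equiv.prodComm ℕ ℕ).tsum_eq F
    have hFsw : HasSum (fun p : ℕ × ℕ => F (p.2, p.1)) (∑' p, F p) := by
      have := hFs2.hasSum
      rw [hts] at this
      exact this
    exact hFsw.prod_fiberwise fun k => hG k
  refine ⟨?_, ?_, ?_⟩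
  · simpa using hsum_n.summable.neg
  · -- norm summability
    have hb : Summable (fun k : ℕ => ‖c‖ ^ (k + 1) / (1 - ‖q‖)) :=
      ((summable_geometric_of_lt_one hc0 hc).mul_left ‖c‖).div_const _ |>.congr
        (fun k => by rw [pow_succ'])
    refine Summable.of_nonneg_of_le (fun k => norm_nonneg _) ?_ hb
    intro k
    have hden1 : (1:ℝ) ≤ ‖((k : ℂ) + 1)‖ := by
      have : ((k : ℂ) + 1) = ((k + 1 : ℕ) : ℂ) := by push_cast; ring
      rw [this, _root_.norm_natCast]
      exact_mod_cast Nat.succ_le_succ (Nat.zero_le k)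
    have hden2 : 1 - ‖q‖ ≤ ‖1 - q ^ (k + 1)‖ := by
      have h1 : ‖(1:ℂ)‖ - ‖q ^ (k + 1)‖ ≤ ‖1 - q ^ (k + 1)‖ := norm_sub_norm_le _ _
      have h2 : ‖q ^ (k + 1)‖ ≤ ‖q‖ := by
        rw [norm_pow]
        exact pow_le_of_le_one hq0 hq1.le (Nat.succ_ne_zero k)
      simp only [norm_one] at h1; linarith
    rw [norm_div, norm_mul, norm_pow]
    calc ‖c‖ ^ (k + 1) / (‖((k : ℂ) + 1)‖ * ‖1 - q ^ (k + 1)‖)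
        ≤ ‖c‖ ^ (k + 1) / (1 * (1 - ‖q‖)) := by
          have := mul_pos one_pos h1q
          gcongr
      _ = ‖c‖ ^ (k + 1) / (1 - ‖q‖) := by rw [one_mul]
  · have h1 : HasSum (fun n : ℕ => Complex.log (1 - c * q ^ n)) (-(∑' p, F p)) := by
      simpa using hsum_n.neg
    rw [h1.tsum_eq, hswap.tsum_eq]

lemma myaux_log_ratio {z w : ℂ} (hz : ‖z‖ < 1) (hw : ‖w‖ < 1) :
    Complex.log ((1 - z) / (1 - w)) = Complex.log (1 - z) - Complex.log (1 - w) := by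
  have hre : ∀ {u : ℂ}, ‖u‖ < 1 → 0 < (1 - u).re := by
    intro u hu
    have h1 : u.re ≤ ‖u‖ := Complex.re_le_norm u
    have h2 : ‖u‖ = ‖u‖ := rfl
    simp only [Complex.sub_re, Complex.one_re]
    linarith
  have hz0 : (1:ℂ) - z ≠ 0 := by
    intro h
    have := hre hz
    rw [h] at this; simp at this
  have hw0 : (1:ℂ) - w ≠ 0 := by
    intro h
    have := hre hw
    rw [h] at this; simp at this
  have hargz : |Complex.arg (1 - z)| < Real.pi / 2 :=
    Complex.abs_arg_lt_pi_div_two_iff.mpr (Or.inl (hre hz))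
  have hargw : |Complex.arg (1 - w)| < Real.pi / 2 :=
    Complex.abs_arg_lt_pi_div_two_iff.mpr (Or.inl (hre hw))
  have hpi : 0 < Real.pi := Real.pi_pos
  have hargw_ne : Complex.arg (1 - w) ≠ Real.pi := by
    intro h
    rw [h] at hargw
    rw [abs_of_pos hpi] at hargw
    linarith
  have harginv : Complex.arg (1 - w)⁻¹ = -Complex.arg (1 - w) := by
    rw [Complex.arg_inv, if_neg hargw_ne]
  have hmem : Complex.arg (1 - z) + Complex.arg (1 - w)⁻¹ ∈ Set.Ioc (-Real.pi) Real.pi := by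
    rw [harginv]
    constructor
    · have h1 := (abs_lt.mp hargz).1
      have h2 := (abs_lt.mp hargw).2
      linarith
    · have h1 := (abs_lt.mp hargz).2
      have h2 := (abs_lt.mp hargw).1
      linarith
  rw [div_eq_mul_inv, Complex.log_mul hz0 (inv_ne_zero hw0) hmem,
    Complex.log_inv _ hargw_ne, sub_eq_add_neg]
  ring

lemma myaux_hasProd {q : ℂ} (hq1 : ‖q‖ < 1) {c d : ℂ} (hc : ‖c‖ < 1) (hd : ‖d‖ < 1) :
    HasProd (fun n : ℕ => (1 - c * q ^ n) / (1 - d * q ^ n))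
      (Complex.exp ((∑' k : ℕ, d ^ (k + 1) / (((k : ℂ) + 1) * (1 - q ^ (k + 1))))
        - ∑' k : ℕ, c ^ (k + 1) / (((k : ℂ) + 1) * (1 - q ^ (k + 1))))) := by
  obtain ⟨hlc, -, htc⟩ := myaux_main hq1 hc
  obtain ⟨hld, -, htd⟩ := myaux_main hq1 hd
  have hne : ∀ u : ℂ, ‖u‖ < 1 → (1 : ℂ) - u ≠ 0 := by
    intro u hu
    refine sub_ne_zero.mpr fun h => ?_
    rw [← h] at hu; simp at hu
  have hlog : ∀ n : ℕ, Complex.log ((1 - c * q ^ n) / (1 - d * q ^ n))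
      = Complex.log (1 - c * q ^ n) - Complex.log (1 - d * q ^ n) :=
    fun n => myaux_log_ratio (myaux_cq_lt_one hq1 hc n) (myaux_cq_lt_one hq1 hd n)
  have hsum : HasSum (fun n : ℕ => Complex.log ((1 - c * q ^ n) / (1 - d * q ^ n)))
      ((∑' n : ℕ, Complex.log (1 - c * q ^ n)) - ∑' n : ℕ, Complex.log (1 - d * q ^ n)) :=
    (hlc.hasSum.sub hld.hasSum).congr_fun fun n => hlog n
  have hp := hsum.cexp
  have he : (Complex.exp ∘ fun n : ℕ => Complex.log ((1 - c * q ^ n) / (1 - d * q ^ n)))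
      = fun n : ℕ => (1 - c * q ^ n) / (1 - d * q ^ n) := by
    funext n
    exact Complex.exp_log (div_ne_zero (hne _ (myaux_cq_lt_one hq1 hc n))
      (hne _ (myaux_cq_lt_one hq1 hd n)))
  rw [he, htc, htd] at hp
  convert hp using 2
  ring

/-- the product formula `∏_s (a_s x;q)_∞/(b_s x;q)_∞ = exp(∑_k ∑_s (b_s^k-a_s^k)x^k/(k(1-q^k)))`. -/
theorem qPochhammer_ratio_prod_eq_exp
    (N : ℕ) (q : ℂ) (hq0 : 0 < ‖q‖) (hq1 : ‖q‖ < 1)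
    (a b : Fin (N + 1) → ℂ) (x : ℂ)
    (ha : ∀ s, ‖a s * x‖ < 1) (hb : ∀ s, ‖b s * x‖ < 1) :
    (∀ s, Multipliable fun n : ℕ => (1 - a s * q ^ n * x) / (1 - b s * q ^ n * x)) ∧
    Summable (fun k : ℕ =>
      ‖(∑ s, (b s ^ (k + 1) - a s ^ (k + 1))) * x ^ (k + 1) /
        (((k : ℂ) + 1) * (1 - q ^ (k + 1)))‖) ∧
    (∏ s, ∏' n : ℕ, (1 - a s * q ^ n * x) / (1 - b s * q ^ n * x)) =
      Complex.exp (∑' k : ℕ,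
        (∑ s, (b s ^ (k + 1) - a s ^ (k + 1))) * x ^ (k + 1) /
          (((k : ℂ) + 1) * (1 - q ^ (k + 1)))) := by
  have hq1' : ‖q‖ < 1 := hq1
  have ha' : ∀ s, ‖a s * x‖ < 1 := ha
  have hb' : ∀ s, ‖b s * x‖ < 1 := hb
  set D : ℕ → ℂ := fun k => ((k : ℂ) + 1) * (1 - q ^ (k + 1)) with hD
  set g : Fin (N + 1) → ℕ → ℂ :=
    fun s k => ((b s * x) ^ (k + 1) - (a s * x) ^ (k + 1)) / D k with hg
  -- per-s HasProd
  have hP : ∀ s, HasProd (fun n : ℕ => (1 - a s * q ^ n * x) / (1 - b s * q ^ n * x))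
      (Complex.exp ((∑' k : ℕ, (b s * x) ^ (k + 1) / D k)
        - ∑' k : ℕ, (a s * x) ^ (k + 1) / D k)) := by
    intro s
    refine (myaux_hasProd hq1' (ha' s) (hb' s)).congr_fun fun n => ?_
    ring_nf
  -- summability of pieces
  have hga : ∀ s, Summable (fun k : ℕ => ‖(a s * x) ^ (k + 1) / D k‖) :=
    fun s => (myaux_main hq1' (ha' s)).2.1
  have hgb : ∀ s, Summable (fun k : ℕ => ‖(b s * x) ^ (k + 1) / D k‖) :=
    fun s => (myaux_main hq1' (hb' s)).2.1
  have hgs : ∀ s, Summable (g s) := by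
    intro s
    have := ((hgb s).of_norm.sub (hga s).of_norm)
    refine this.congr fun k => ?_
    rw [hg]; simp only; rw [sub_div]
  -- the identity term k = ∑ s, g s k
  have hterm : ∀ k : ℕ,
      (∑ s, (b s ^ (k + 1) - a s ^ (k + 1))) * x ^ (k + 1) / D k = ∑ s, g s k := by
    intro k
    rw [hg]
    simp only [Finset.sum_mul, Finset.sum_div, sub_mul, mul_pow]
  refine ⟨fun s => (hP s).multipliable, ?_, ?_⟩
  · -- norm summability
    have hmaj : Summable (fun k : ℕ =>
        ∑ s, (‖(b s * x) ^ (k + 1) / D k‖ + ‖(a s * x) ^ (k + 1) / D k‖)) :=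
      summable_sum fun s _ => (hgb s).add (hga s)
    refine Summable.of_nonneg_of_le (fun k => norm_nonneg _) ?_ hmaj
    intro k
    have h1 : ‖(∑ s, (b s ^ (k + 1) - a s ^ (k + 1))) * x ^ (k + 1) / D k‖
        = ‖∑ s, g s k‖ := by rw [← hterm k]
    rw [h1]
    refine (norm_sum_le _ _).trans (Finset.sum_le_sum fun s _ => ?_)
    rw [hg]; simp only; rw [sub_div]
    exact norm_sub_le _ _
  · -- the product formula
    have hTs : ∀ s, (∑' k : ℕ, (b s * x) ^ (k + 1) / D k)
        - (∑' k : ℕ, (a s * x) ^ (k + 1) / D k) = ∑' k : ℕ, g s k := by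
      intro s
      have h := ((hgb s).of_norm.hasSum.sub (hga s).of_norm.hasSum)
      have h2 := h.congr_fun (g := g s) fun k => by simp only [hg]; rw [sub_div]
      exact h2.tsum_eq.symm
    calc (∏ s, ∏' n : ℕ, (1 - a s * q ^ n * x) / (1 - b s * q ^ n * x))
        = ∏ s, Complex.exp ((∑' k : ℕ, (b s * x) ^ (k + 1) / D k)
            - ∑' k : ℕ, (a s * x) ^ (k + 1) / D k) :=
          Finset.prod_congr rfl fun s _ => (hP s).tprod_eq
      _ = Complex.exp (∑ s, ((∑' k : ℕ, (b s * x) ^ (k + 1) / D k)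
            - ∑' k : ℕ, (a s * x) ^ (k + 1) / D k)) := (Complex.exp_sum _ _).symm
      _ = Complex.exp (∑ s, ∑' k : ℕ, g s k) := by
          rw [Finset.sum_congr rfl fun s _ => hTs s]
      _ = Complex.exp (∑' k : ℕ, ∑ s, g s k) := by
          rw [Summable.tsum_finsetSum fun s _ => hgs s]
      _ = _ := by
          congr 1
          exact (tsum_congr fun k => (hterm k).symm)
end

section
/- Let q ∈ ℂ with 0 < |q| < 1, let a_1, a_2, a_3, b_1, b_2, b_3 ∈ ℂ with b_1, b_2, a_3, b_3 ≠ 0, and let k ∈ ℕ. Assume (q^{−k+1} b_3/a_3; q)_j ≠ 0 for all 0 ≤ j ≤ k. Then the coefficient p_k in the power series expansion ∏_{i=1}^{3} (a_i x; q)_∞/(b_i x; q)_∞ = ∑_{k≥0} p_k x^k (valid for |x| < min_i 1/|b_i|) is given by the terminating q-Appell Lauricella expression p_k = b_3^k (a_3/b_3; q)_k / (q; q)_k · ∑_{m_1, m_2 ≥ 0, m_1+m_2 ≤ k} [ (q^{−k}; q)_{m_1+m_2} (a_1/b_1; q)_{m_1} (a_2/b_2; q)_{m_2} / ( (q^{−k+1}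 b_3/a_3; q)_{m_1+m_2} (q; q)_{m_1} (q; q)_{m_2} ) ] (q b_1/a_3)^{m_1} (q b_2/a_3)^{m_2}. -/
open Filter Topology Finset
open scoped ENNReal NNReal

namespace QAppellAux

lemma one_sub_ne {z : ℂ} (hz : ‖z‖ < 1) : (1 : ℂ) - z ≠ 0 := by
  intro h
  have : z = 1 := by linear_combination -h
  rw [this] at hz; simp at hz

lemma pochq_ne {q : ℂ} (hq1 : ‖q‖ < 1) (k : ℕ) : (∏ i ∈ range k, (1 - q ^ (i + 1))) ≠ 0 := by
  refine Finset.prod_ne_zero_iff.2 fun i _ => one_sub_ne ?_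
  calc ‖q ^ (i+1)‖ = ‖q‖ ^ (i+1) := by rw [norm_pow]
  _ ≤ ‖q‖ ^ 1 := pow_le_pow_of_le_one (norm_nonneg q) hq1.le (by omega)
  _ < 1 := by simpa using hq1

noncomputable def qd (q a b : ℂ) (k : ℕ) : ℂ :=
  (∏ i ∈ range k, (b - a * q ^ i)) / (∏ i ∈ range k, (1 - q ^ (i + 1)))

@[simp] lemma qd_zero (q a b : ℂ) : qd q a b 0 = 1 := by simp [qd]

lemma qd_rec {q : ℂ} (hq1 : ‖q‖ < 1) (a b : ℂ) (k : ℕ) :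
    qd q a b (k + 1) * (1 - q ^ (k + 1)) = (b - a * q ^ k) * qd q a b k := by
  rw [qd, qd, prod_range_succ, prod_range_succ]
  have h1 := pochq_ne hq1 k
  have h2 : (1 : ℂ) - q ^ (k+1) ≠ 0 := by
    have := pochq_ne hq1 (k+1); rw [prod_range_succ] at this
    exact fun h => this (by rw [h, mul_zero])
  field_simp

noncomputable def Kc (q a b : ℂ) : ℝ :=
  Real.exp (‖a‖ / ‖b‖ / (1 - ‖q‖)) * Real.exp (‖q‖ / (1 - ‖q‖) ^ 2)

lemma norm_qd_le {q : ℂ} (hq1 : ‖q‖ < 1) {a b : ℂ} (hb : b ≠ 0) (k : ℕ) :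
    ‖qd q a b k‖ ≤ Kc q a b * ‖b‖ ^ k := by
  have hq0 : (0:ℝ) ≤ ‖q‖ := norm_nonneg q
  have hr : (0:ℝ) < 1 - ‖q‖ := by linarith
  have hbp : (0:ℝ) < ‖b‖ := norm_pos_iff.2 hb
  have hgeo : ∀ m : ℕ, ∑ i ∈ range m, ‖q‖ ^ i ≤ (1 - ‖q‖)⁻¹ := by
    intro m
    have := Summable.sum_le_tsum (range m) (fun i _ => pow_nonneg hq0 i)
      (summable_geometric_of_lt_one hq0 hq1)
    rwa [tsum_geometric_of_lt_one hq0 hq1] at this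
  -- numerator bound
  have hnum : ‖∏ i ∈ range k, (b - a * q ^ i)‖ ≤ Real.exp (‖a‖ / ‖b‖ / (1 - ‖q‖)) * ‖b‖ ^ k := by
    rw [norm_prod]
    calc ∏ i ∈ range k, ‖b - a * q ^ i‖
        ≤ ∏ i ∈ range k, (‖b‖ * Real.exp (‖a‖ / ‖b‖ * ‖q‖ ^ i)) := by
          refine Finset.prod_le_prod (fun i _ => norm_nonneg _) fun i _ => ?_
          calc ‖b - a * q ^ i‖ ≤ ‖b‖ + ‖a‖ * ‖q‖ ^ i := by
                calc ‖b - a * q ^ i‖ ≤ ‖b‖ + ‖a * q ^ i‖ := norm_sub_le _ _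
                _ = ‖b‖ + ‖a‖ * ‖q‖ ^ i := by rw [norm_mul, norm_pow]
          _ ≤ ‖b‖ * Real.exp (‖a‖ / ‖b‖ * ‖q‖ ^ i) := by
                have h1 := Real.add_one_le_exp (‖a‖ / ‖b‖ * ‖q‖ ^ i)
                have hba : ‖b‖ * (‖a‖ / ‖b‖) = ‖a‖ := mul_div_cancel₀ _ hbp.ne'
                nlinarith [pow_nonneg hq0 i]
    _ = ‖b‖ ^ k * Real.exp (∑ i ∈ range k, ‖a‖ / ‖b‖ * ‖q‖ ^ i) := by
          rw [Finset.prod_mul_distrib, prod_const, card_range, Real.exp_sum]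
    _ ≤ ‖b‖ ^ k * Real.exp (‖a‖ / ‖b‖ / (1 - ‖q‖)) := by
          have h1 : ∑ i ∈ range k, ‖a‖ / ‖b‖ * ‖q‖ ^ i ≤ ‖a‖ / ‖b‖ / (1 - ‖q‖) := by
            rw [← Finset.mul_sum]
            rw [div_eq_mul_inv (‖a‖ / ‖b‖)]
            exact mul_le_mul_of_nonneg_left (hgeo k) (by positivity)
          exact mul_le_mul_of_nonneg_left (Real.exp_le_exp.2 h1) (by positivity)
    _ = Real.exp (‖a‖ / ‖b‖ / (1 - ‖q‖)) * ‖b‖ ^ k := mul_comm _ _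
  -- denominator lower bound
  have hden : Real.exp (-(‖q‖ / (1 - ‖q‖) ^ 2)) ≤ ‖∏ i ∈ range k, (1 - q ^ (i + 1))‖ := by
    rw [norm_prod]
    have hfac : ∀ i : ℕ, Real.exp (-(‖q‖ ^ (i+1) / (1 - ‖q‖))) ≤ ‖1 - q ^ (i+1)‖ := by
      intro i
      have hs : ‖q‖ ^ (i+1) ≤ ‖q‖ := pow_le_of_le_one hq0 hq1.le (by omega)
      have hs1 : ‖q‖ ^ (i+1) < 1 := lt_of_le_of_lt hs hq1
      have hlow : (1:ℝ) - ‖q‖ ^ (i+1) ≤ ‖1 - q ^ (i+1)‖ := by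
        have := norm_sub_norm_le (1 : ℂ) (q ^ (i+1))
        simpa [norm_pow] using this
      refine le_trans ?_ hlow
      rw [Real.exp_neg]
      rw [inv_le_comm₀ (Real.exp_pos _) (by linarith)]
      calc (1 - ‖q‖ ^ (i+1))⁻¹ ≤ 1 + ‖q‖ ^ (i+1) / (1 - ‖q‖ ^ (i+1)) := by
            have h2 : (0:ℝ) < 1 - ‖q‖^(i+1) := by linarith
            have heq : 1 + ‖q‖ ^ (i+1) / (1 - ‖q‖ ^ (i+1)) = (1 - ‖q‖ ^ (i+1))⁻¹ := by
              rw [inv_eq_one_div, eq_div_iff h2.ne', add_mul, one_mul,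
                div_mul_cancel₀ _ h2.ne']
              ring
            rw [heq]
      _ ≤ 1 + ‖q‖ ^ (i+1) / (1 - ‖q‖) := by
            have h2 : (0:ℝ) < 1 - ‖q‖ ^ (i+1) := by linarith
            have : ‖q‖ ^ (i+1) / (1 - ‖q‖ ^ (i+1)) ≤ ‖q‖ ^ (i+1) / (1 - ‖q‖) := by
              apply div_le_div_of_nonneg_left (by positivity) hr
              linarith
            linarith
      _ ≤ Real.exp (‖q‖ ^ (i+1) / (1 - ‖q‖)) := by
            have := Real.add_one_le_exp (‖q‖ ^ (i+1) / (1 - ‖q‖))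
            linarith
    calc Real.exp (-(‖q‖ / (1 - ‖q‖) ^ 2)) ≤
        Real.exp (-(∑ i ∈ range k, ‖q‖ ^ (i+1) / (1 - ‖q‖))) := by
          apply Real.exp_le_exp.2
          rw [neg_le_neg_iff]
          calc ∑ i ∈ range k, ‖q‖ ^ (i+1) / (1 - ‖q‖)
              = (∑ i ∈ range k, ‖q‖ ^ i) * (‖q‖ / (1 - ‖q‖)) := by
                rw [Finset.sum_mul]; apply Finset.sum_congr rfl; intro i _
                rw [pow_succ]; ring
          _ ≤ (1 - ‖q‖)⁻¹ * (‖q‖ / (1 - ‖q‖)) := by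
                exact mul_le_mul_of_nonneg_right (hgeo k) (by positivity)
          _ = ‖q‖ / (1 - ‖q‖) ^ 2 := by field_simp
    _ = ∏ i ∈ range k, Real.exp (-(‖q‖ ^ (i+1) / (1 - ‖q‖))) := by
          rw [← Real.exp_sum, ← Finset.sum_neg_distrib]
    _ ≤ ∏ i ∈ range k, ‖1 - q ^ (i+1)‖ :=
          Finset.prod_le_prod (fun i _ => (Real.exp_pos _).le) (fun i _ => hfac i)
  -- combine
  rw [qd, norm_div]
  rw [div_le_iff₀ (lt_of_lt_of_le (Real.exp_pos _) hden)]
  calc ‖∏ i ∈ range k, (b - a * q ^ i)‖ ≤ Real.exp (‖a‖ / ‖b‖ / (1 - ‖q‖)) * ‖b‖ ^ k := hnum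
  _ = Kc q a b * ‖b‖ ^ k * Real.exp (-(‖q‖ / (1 - ‖q‖) ^ 2)) := by
        rw [Kc, Real.exp_neg]
        have := Real.exp_pos (‖q‖ / (1 - ‖q‖) ^ 2)
        field_simp
  _ ≤ Kc q a b * ‖b‖ ^ k * ‖∏ i ∈ range k, (1 - q ^ (i + 1))‖ := by
        apply mul_le_mul_of_nonneg_left hden
        have : (0:ℝ) < Kc q a b := by rw [Kc]; positivity
        positivity


lemma summable_qd {q : ℂ} (hq1 : ‖q‖ < 1) {a b x : ℂ} (hb : b ≠ 0) (hx : ‖b‖ * ‖x‖ < 1) :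
    Summable fun k => ‖qd q a b k * x ^ k‖ := by
  have h0 : (0:ℝ) ≤ ‖b‖ * ‖x‖ := by positivity
  have hK : (0:ℝ) < Kc q a b := by rw [Kc]; positivity
  refine Summable.of_nonneg_of_le (fun k => norm_nonneg _) (fun k => ?_)
    ((summable_geometric_of_lt_one h0 hx).mul_left (Kc q a b))
  rw [norm_mul, norm_pow, mul_pow]
  calc ‖qd q a b k‖ * ‖x‖ ^ k ≤ (Kc q a b * ‖b‖ ^ k) * ‖x‖ ^ k :=
        mul_le_mul_of_nonneg_right (norm_qd_le hq1 hb k) (by positivity)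
  _ = Kc q a b * (‖b‖ ^ k * ‖x‖ ^ k) := by ring

noncomputable def gg (q a b x : ℂ) : ℂ := ∑' k, qd q a b k * x ^ k

lemma hasSum_gg {q : ℂ} (hq1 : ‖q‖ < 1) {a b x : ℂ} (hb : b ≠ 0) (hx : ‖b‖ * ‖x‖ < 1) :
    HasSum (fun k => qd q a b k * x ^ k) (gg q a b x) :=
  ((summable_qd hq1 hb hx).of_norm).hasSum

lemma gg_feq {q : ℂ} (hq1 : ‖q‖ < 1) {a b x : ℂ} (hb : b ≠ 0) (hx : ‖b‖ * ‖x‖ < 1) :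
    (1 - b * x) * gg q a b x = (1 - a * x) * gg q a b (q * x) := by
  have hqx : ‖b‖ * ‖q * x‖ < 1 := by
    rw [norm_mul]
    nlinarith [norm_nonneg b, norm_nonneg x, norm_nonneg q, mul_nonneg (norm_nonneg b) (norm_nonneg x)]
  have A := hasSum_gg (a := a) hq1 hb hx
  have B := hasSum_gg (a := a) hq1 hb hqx
  have S1 := A.sub B
  have S2 := (hasSum_nat_add_iff' (f := fun k => qd q a b k * x ^ k - qd q a b k * (q*x) ^ k) 1).2 S1
  simp only [range_one, sum_singleton, pow_zero, mul_one, sub_self, sub_zero] at S2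
  have T := (((A.mul_left b).mul_right x).sub ((B.mul_left a).mul_right x))
  have hfun : (fun n => qd q a b (n+1) * x ^ (n+1) - qd q a b (n+1) * (q*x) ^ (n+1))
      = fun n => b * (qd q a b n * x ^ n) * x - a * (qd q a b n * (q*x) ^ n) * x := by
    funext n
    linear_combination (x ^ (n+1)) * qd_rec hq1 a b n
  rw [hfun] at S2
  have key := S2.unique T
  linear_combination key

lemma gg_iter {q : ℂ} (hq1 : ‖q‖ < 1) {a b x : ℂ} (hb : b ≠ 0) (hx : ‖b‖ * ‖x‖ < 1) (N : ℕ) :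
    gg q a b x * ∏ n ∈ range N, (1 - b * q ^ n * x)
      = gg q a b (q ^ N * x) * ∏ n ∈ range N, (1 - a * q ^ n * x) := by
  induction N with
  | zero => simp
  | succ N ih =>
    have hxN : ‖b‖ * ‖q ^ N * x‖ < 1 := by
      rw [norm_mul, norm_pow]
      have h1 : ‖q‖ ^ N ≤ 1 := pow_le_one₀ (norm_nonneg q) hq1.le
      nlinarith [norm_nonneg x, norm_nonneg b, mul_nonneg (norm_nonneg b) (norm_nonneg x),
        pow_nonneg (norm_nonneg q) N]
    have h := gg_feq (a := a) hq1 hb hxN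
    have e1 : q * (q ^ N * x) = q ^ (N+1) * x := by ring
    rw [e1] at h
    rw [prod_range_succ, prod_range_succ, ← mul_assoc, ih]
    linear_combination (∏ n ∈ range N, (1 - a * q ^ n * x)) * h

lemma gg_tendsto_one {q : ℂ} (hq1 : ‖q‖ < 1) {a b x : ℂ} (hb : b ≠ 0) (hx : ‖b‖ * ‖x‖ < 1) :
    Tendsto (fun N => gg q a b (q ^ N * x)) atTop (𝓝 1) := by
  have hK : (0:ℝ) < Kc q a b := by rw [Kc]; positivity
  set C : ℝ := Kc q a b * ‖b‖ / (1 - ‖b‖ * ‖x‖) with hC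
  have hxb : (0:ℝ) < 1 - ‖b‖ * ‖x‖ := by linarith
  have hCpos : 0 ≤ C := by
    rw [hC]; positivity
  have claim : ∀ y : ℂ, ‖y‖ ≤ ‖x‖ → ‖gg q a b y - 1‖ ≤ C * ‖y‖ := by
    intro y hy
    have hby : ‖b‖ * ‖y‖ ≤ ‖b‖ * ‖x‖ := mul_le_mul_of_nonneg_left hy (norm_nonneg b)
    have hy1 : ‖b‖ * ‖y‖ < 1 := lt_of_le_of_lt hby hx
    have hy0 : (0:ℝ) ≤ ‖b‖ * ‖y‖ := by positivity
    have A := hasSum_gg (a := a) hq1 hb hy1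
    have S := (hasSum_nat_add_iff' (f := fun k => qd q a b k * y ^ k) 1).2 A
    simp only [range_one, sum_singleton, pow_zero, mul_one, qd_zero] at S
    have hG : HasSum (fun n : ℕ => (Kc q a b * ‖b‖ * ‖y‖) * (‖b‖ * ‖y‖) ^ n)
        ((Kc q a b * ‖b‖ * ‖y‖) * (1 - ‖b‖ * ‖y‖)⁻¹) :=
      (hasSum_geometric_of_lt_one hy0 hy1).mul_left _
    have hbound := tsum_of_norm_bounded hG (f := fun n => qd q a b (n+1) * y ^ (n+1)) ?_
    · rw [S.tsum_eq] at hbound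
      refine le_trans hbound ?_
      rw [hC]
      have h1 : (1 - ‖b‖ * ‖y‖)⁻¹ ≤ (1 - ‖b‖ * ‖x‖)⁻¹ := by
        apply inv_anti₀ hxb; linarith
      calc Kc q a b * ‖b‖ * ‖y‖ * (1 - ‖b‖ * ‖y‖)⁻¹
          ≤ Kc q a b * ‖b‖ * ‖y‖ * (1 - ‖b‖ * ‖x‖)⁻¹ := by
            apply mul_le_mul_of_nonneg_left h1; positivity
      _ = Kc q a b * ‖b‖ / (1 - ‖b‖ * ‖x‖) * ‖y‖ := by ring
    · intro n
      rw [norm_mul, norm_pow]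
      calc ‖qd q a b (n+1)‖ * ‖y‖ ^ (n+1) ≤ (Kc q a b * ‖b‖ ^ (n+1)) * ‖y‖ ^ (n+1) :=
            mul_le_mul_of_nonneg_right (norm_qd_le hq1 hb (n+1)) (by positivity)
      _ = Kc q a b * ‖b‖ * ‖y‖ * (‖b‖ * ‖y‖) ^ n := by rw [mul_pow]; ring
  have hnorm : ∀ N : ℕ, ‖gg q a b (q ^ N * x) - 1‖ ≤ C * ‖x‖ * ‖q‖ ^ N := by
    intro N
    have h1 : ‖q ^ N * x‖ ≤ ‖x‖ := by
      rw [norm_mul, norm_pow]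
      nlinarith [pow_le_one₀ (norm_nonneg q) hq1.le (n := N), norm_nonneg x,
        pow_nonneg (norm_nonneg q) N]
    calc ‖gg q a b (q ^ N * x) - 1‖ ≤ C * ‖q ^ N * x‖ := claim _ h1
    _ = C * ‖x‖ * ‖q‖ ^ N := by rw [norm_mul, norm_pow]; ring
  have h0 : Tendsto (fun N : ℕ => C * ‖x‖ * ‖q‖ ^ N) atTop (𝓝 0) := by
    have := tendsto_pow_atTop_nhds_zero_of_lt_one (norm_nonneg q) hq1
    simpa using this.const_mul (C * ‖x‖)
  have h2 : Tendsto (fun N => gg q a b (q ^ N * x) - 1) atTop (𝓝 0) :=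
    squeeze_zero_norm hnorm h0
  have h3 := h2.add (tendsto_const_nhds (x := (1:ℂ)))
  simpa using h3

lemma summable_log_one_sub (u : ℕ → ℂ) (hu : Summable fun n => ‖u n‖)
    (hne : ∀ n, 1 - u n ≠ 0) : Summable fun n => Complex.log (1 - u n) := by
  have hu0 : Tendsto (fun n => ‖u n‖) atTop (𝓝 0) := hu.tendsto_atTop_zero
  have hev : ∀ᶠ n in atTop, ‖u n‖ ≤ 1/2 := by
    filter_upwards [hu0.eventually_lt_const (show (0:ℝ) < 1/2 by norm_num)] with n hn
    exact hn.le
  refine Summable.of_norm_bounded_eventually (g := fun n => 3/2 * ‖u n‖) (hu.mul_left (3/2)) ?_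
  rw [Nat.cofinite_eq_atTop]
  filter_upwards [hev] with n hn
  have := Complex.norm_log_one_add_half_le_self (z := -u n) (by simpa using hn)
  simpa [sub_eq_add_neg] using this

lemma multipliable_one_sub (u : ℕ → ℂ) (hu : Summable fun n => ‖u n‖) :
    Multipliable fun n => 1 - u n := by
  by_cases h1 : ∃ n, u n = 1
  · obtain ⟨n, hn⟩ := h1
    refine ⟨0, ?_⟩
    have h0 : ∀ᶠ S : Finset ℕ in atTop, ∏ i ∈ S, (1 - u i) = 0 := by
      filter_upwards [eventually_ge_atTop ({n} : Finset ℕ)] with S hS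
      exact Finset.prod_eq_zero (hS (Finset.mem_singleton_self n)) (by rw [hn]; ring)
    exact Tendsto.congr' (by filter_upwards [h0] with S hS; exact hS.symm) tendsto_const_nhds
  · push_neg at h1
    have hne : ∀ n, 1 - u n ≠ 0 := fun n h => h1 n (by linear_combination -h)
    exact Complex.multipliable_of_summable_log (summable_log_one_sub u hu hne)

lemma tprod_one_sub_ne (u : ℕ → ℂ) (hu : Summable fun n => ‖u n‖)
    (h1 : ∀ n, u n ≠ 1) : (∏' n, (1 - u n)) ≠ 0 := by
  have hne : ∀ n, 1 - u n ≠ 0 := fun n h => h1 n (by linear_combination -h)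
  have h2 : Complex.exp (∑' n, Complex.log (1 - u n)) = ∏' n, (1 - u n) :=
    Complex.cexp_tsum_eq_tprod hne (summable_log_one_sub u hu hne)
  rw [← h2]
  exact Complex.exp_ne_zero _

lemma summable_norm_cqx {q : ℂ} (hq1 : ‖q‖ < 1) (c x : ℂ) :
    Summable fun n : ℕ => ‖c * q ^ n * x‖ := by
  have : (fun n : ℕ => ‖c * q ^ n * x‖) = fun n => (‖c‖ * ‖x‖) * ‖q‖ ^ n := by
    funext n; rw [norm_mul, norm_mul, norm_pow]; ring
  rw [this]
  exact (summable_geometric_of_lt_one (norm_nonneg q) hq1).mul_left _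

lemma qbinom {q : ℂ} (hq1 : ‖q‖ < 1) {a b x : ℂ} (hb : b ≠ 0) (hx : ‖b‖ * ‖x‖ < 1) :
    gg q a b x * (∏' n : ℕ, (1 - b * q ^ n * x)) = ∏' n : ℕ, (1 - a * q ^ n * x) := by
  have hb' := ((multipliable_one_sub _ (summable_norm_cqx hq1 b x)).hasProd).tendsto_prod_nat
  have ha' := ((multipliable_one_sub _ (summable_norm_cqx hq1 a x)).hasProd).tendsto_prod_nat
  have hL : Tendsto (fun N => gg q a b x * ∏ n ∈ range N, (1 - b * q ^ n * x)) atTop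
      (𝓝 (gg q a b x * ∏' n : ℕ, (1 - b * q ^ n * x))) := hb'.const_mul _
  have hR : Tendsto (fun N => gg q a b (q ^ N * x) * ∏ n ∈ range N, (1 - a * q ^ n * x)) atTop
      (𝓝 (1 * ∏' n : ℕ, (1 - a * q ^ n * x))) := (gg_tendsto_one hq1 hb hx).mul ha'
  have heq : (fun N => gg q a b x * ∏ n ∈ range N, (1 - b * q ^ n * x))
      = fun N => gg q a b (q ^ N * x) * ∏ n ∈ range N, (1 - a * q ^ n * x) :=
    funext fun N => gg_iter hq1 hb hx N
  rw [heq] at hL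
  have := tendsto_nhds_unique hL hR
  rw [this, one_mul]

lemma tprod_b_ne {q : ℂ} (hq1 : ‖q‖ < 1) {b x : ℂ} (hx : ‖b‖ * ‖x‖ < 1) :
    (∏' n : ℕ, (1 - b * q ^ n * x)) ≠ 0 := by
  refine tprod_one_sub_ne _ (summable_norm_cqx hq1 b x) fun n h => ?_
  have : ‖b * q ^ n * x‖ < 1 := by
    rw [norm_mul, norm_mul, norm_pow]
    nlinarith [pow_le_one₀ (norm_nonneg q) hq1.le (n := n), norm_nonneg b, norm_nonneg x,
      mul_nonneg (norm_nonneg b) (norm_nonneg x), pow_nonneg (norm_nonneg q) n]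
  rw [h] at this; simp at this

lemma gg_eq_div {q : ℂ} (hq1 : ‖q‖ < 1) {a b x : ℂ} (hb : b ≠ 0) (hx : ‖b‖ * ‖x‖ < 1) :
    gg q a b x = (∏' n : ℕ, (1 - a * q ^ n * x)) / (∏' n : ℕ, (1 - b * q ^ n * x)) := by
  rw [eq_div_iff (tprod_b_ne hq1 hx)]
  exact qbinom hq1 hb hx


lemma sum_reindex (n : ℕ) (f : ℕ → ℕ → ℂ) :
    ∑ j ∈ range (n+1), ∑ i ∈ range (j+1), f i (j - i)
      = ∑ i ∈ range (n+1), ∑ m ∈ range (n - i + 1), f i m := by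
  rw [Finset.sum_sigma', Finset.sum_sigma']
  refine Finset.sum_nbij' (fun x => ⟨x.2, x.1 - x.2⟩) (fun x => ⟨x.1 + x.2, x.1⟩) ?_ ?_ ?_ ?_ ?_
  · rintro ⟨j, i⟩ h
    simp only [Finset.mem_sigma, Finset.mem_range] at h ⊢
    omega
  · rintro ⟨i, m⟩ h
    simp only [Finset.mem_sigma, Finset.mem_range] at h ⊢
    omega
  · rintro ⟨j, i⟩ h
    simp only [Finset.mem_sigma, Finset.mem_range] at h
    simp only [Sigma.mk.inj_iff]
    constructor
    · omega
    · exact heq_of_eq (by omega)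
  · rintro ⟨i, m⟩ h
    simp only [Finset.mem_sigma, Finset.mem_range] at h
    simp only [Sigma.mk.inj_iff]
    constructor
    · trivial
    · exact heq_of_eq (by omega)
  · rintro ⟨j, i⟩ h
    rfl

/-- The triple Cauchy-product coefficients. -/
noncomputable def cc (q a1 a2 a3 b1 b2 b3 : ℂ) (k : ℕ) : ℂ :=
  ∑ m1 ∈ range (k+1), ∑ m2 ∈ range (k - m1 + 1),
    qd q a1 b1 m1 * qd q a2 b2 m2 * qd q a3 b3 (k - m1 - m2)

lemma hasSum_cc {q : ℂ} (hq1 : ‖q‖ < 1) {a1 a2 a3 b1 b2 b3 x : ℂ}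
    (hb1 : b1 ≠ 0) (hb2 : b2 ≠ 0) (hb3 : b3 ≠ 0)
    (hx1 : ‖b1‖ * ‖x‖ < 1) (hx2 : ‖b2‖ * ‖x‖ < 1) (hx3 : ‖b3‖ * ‖x‖ < 1) :
    HasSum (fun k => cc q a1 a2 a3 b1 b2 b3 k * x ^ k)
      (gg q a1 b1 x * gg q a2 b2 x * gg q a3 b3 x) := by
  have hs1 := summable_qd hq1 (a := a1) hb1 hx1
  have hs2 := summable_qd hq1 (a := a2) hb2 hx2
  have hs3 := summable_qd hq1 (a := a3) hb3 hx3
  have h12 := hasSum_sum_range_mul_of_summable_norm hs1 hs2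
  have hn12 := summable_norm_sum_mul_range_of_summable_norm hs1 hs2
  have h123 := hasSum_sum_range_mul_of_summable_norm hn12 hs3
  rw [(hasSum_gg (a := a1) hq1 hb1 hx1).tsum_eq, (hasSum_gg (a := a2) hq1 hb2 hx2).tsum_eq] at h12
  rw [(hasSum_gg (a := a3) hq1 hb3 hx3).tsum_eq] at h123
  rw [h12.tsum_eq] at h123
  refine h123.congr_fun fun k => Eq.symm ?_
  calc ∑ j ∈ range (k+1), (∑ i ∈ range (j+1),
          qd q a1 b1 i * x ^ i * (qd q a2 b2 (j-i) * x ^ (j-i))) * (qd q a3 b3 (k-j) * x ^ (k-j))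
      = ∑ j ∈ range (k+1), ∑ i ∈ range (j+1),
          qd q a1 b1 i * qd q a2 b2 (j-i) * qd q a3 b3 (k-j) * x ^ k := by
        refine Finset.sum_congr rfl fun j hj => ?_
        rw [Finset.sum_mul]
        refine Finset.sum_congr rfl fun i hi => ?_
        rw [Finset.mem_range] at hj hi
        have e1 : i + (j - i) = j := by omega
        have e2 : j + (k - j) = k := by omega
        calc qd q a1 b1 i * x ^ i * (qd q a2 b2 (j-i) * x ^ (j-i)) * (qd q a3 b3 (k-j) * x ^ (k-j))
            = qd q a1 b1 i * qd q a2 b2 (j-i) * qd q a3 b3 (k-j) * (x ^ i * x ^ (j-i) * x ^ (k-j)) := by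
              ring
        _ = qd q a1 b1 i * qd q a2 b2 (j-i) * qd q a3 b3 (k-j) * x ^ k := by
              rw [← pow_add, ← pow_add, e1, e2]
  _ = cc q a1 a2 a3 b1 b2 b3 k * x ^ k := by
        rw [cc, Finset.sum_mul]
        have h1 : ∑ j ∈ range (k+1), ∑ i ∈ range (j+1),
            qd q a1 b1 i * qd q a2 b2 (j-i) * qd q a3 b3 (k-j) * x ^ k
            = ∑ j ∈ range (k+1), ∑ i ∈ range (j+1),
              (fun i m => qd q a1 b1 i * qd q a2 b2 m * qd q a3 b3 (k - i - m) * x ^ k) i (j - i) := by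
          refine Finset.sum_congr rfl fun j hj => Finset.sum_congr rfl fun i hi => ?_
          rw [Finset.mem_range] at hj hi
          have e : k - j = k - i - (j - i) := by omega
          rw [e]
        rw [h1]
        refine Eq.trans (sum_reindex k (fun i m => qd q a1 b1 i * qd q a2 b2 m * qd q a3 b3 (k - i - m) * x ^ k)) ?_
        refine Finset.sum_congr rfl fun i hi => ?_
        rw [Finset.sum_mul]

lemma coeff_unique {r : ℝ} (hr : 0 < r) (p c : ℕ → ℂ) (F : ℂ → ℂ)
    (hp : ∀ x : ℂ, ‖x‖ < r → HasSum (fun j => p j * x ^ j) (F x))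
    (hc : ∀ x : ℂ, ‖x‖ < r → HasSum (fun j => c j * x ^ j) (F x)) : p = c := by
  have key : ∀ u : ℕ → ℂ, (∀ x : ℂ, ‖x‖ < r → HasSum (fun j => u j * x ^ j) (F x)) →
      HasFPowerSeriesAt F (FormalMultilinearSeries.ofScalars ℂ u) 0 := by
    intro u hu
    refine ⟨ENNReal.ofReal (r/2), ?_, ?_, ?_⟩
    · -- radius bound
      have ht : ‖((r/2 : ℝ) : ℂ)‖ < r := by
        rw [Complex.norm_real, Real.norm_eq_abs, abs_of_pos (by linarith)]
        linarith
      have hsum : Summable fun j => ‖FormalMultilinearSeries.ofScalars ℂ u j‖ * ((r/2 : ℝ).toNNReal : ℝ) ^ j := by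
        have h1 : Summable fun j => ‖u j * ((r/2 : ℝ) : ℂ) ^ j‖ :=
          summable_norm_iff.2 (hu _ ht).summable
        refine h1.congr fun j => ?_
        rw [norm_mul, norm_pow, Complex.norm_real, Real.norm_eq_abs,
          abs_of_pos (by linarith), FormalMultilinearSeries.ofScalars_norm,
          Real.coe_toNNReal _ (by linarith)]
      have := FormalMultilinearSeries.le_radius_of_summable_norm _ hsum
      calc ENNReal.ofReal (r/2) = ((r/2 : ℝ).toNNReal : ℝ≥0∞) := by
            rw [ENNReal.ofReal]
      _ ≤ _ := this
    · exact ENNReal.ofReal_pos.2 (by linarith)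
    · intro y hy
      rw [Metric.emetric_ball] at hy
      rw [mem_ball_zero_iff] at hy
      have hy' : ‖y‖ < r := by linarith
      have := hu y hy'
      rw [zero_add]
      refine this.congr_fun fun n => ?_
      rw [FormalMultilinearSeries.ofScalars_apply_eq, smul_eq_mul]
  have h1 := key p hp
  have h2 := key c hc
  have := h1.eq_formalMultilinearSeries h2
  exact FormalMultilinearSeries.ofScalars_series_injective ℂ ℂ this


noncomputable def P (q c : ℂ) (j : ℕ) : ℂ := ∏ i ∈ range j, (1 - c * q ^ i)

lemma P_succ (q c : ℂ) (j : ℕ) : P q c (j+1) = P q c j * (1 - c * q ^ j) :=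
  prod_range_succ _ _

@[simp] lemma P_zero (q c : ℂ) : P q c 0 = 1 := by simp [P]

lemma choose_succ (m : ℕ) : (m+1).choose 2 = m.choose 2 + m := by
  rw [Nat.choose_succ_succ]
  show m.choose 1 + m.choose 2 = m.choose 2 + m
  rw [Nat.choose_one_right]
  omega

lemma I1 {q : ℂ} (hq0 : q ≠ 0) {k m : ℕ} (hm : m ≤ k) :
    P q (q ^ (-(k:ℤ))) m * P q q (k - m) * (q ^ k) ^ m
      = (-1) ^ m * q ^ (m.choose 2) * P q q k := by
  induction m with
  | zero => simp
  | succ m ih =>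
    have hm' : m ≤ k := by omega
    have ih' := ih hm'
    have hqk : (q : ℂ) ^ k ≠ 0 := pow_ne_zero _ hq0
    have hinv : q ^ (-(k:ℤ)) = (q ^ k)⁻¹ := by
      rw [zpow_neg, zpow_natCast]
    have e2 : P q q (k - m) = P q q (k - (m+1)) * (1 - q * q ^ (k - (m+1))) := by
      have e1 : k - m = (k - (m+1)) + 1 := by omega
      rw [e1, P_succ]
    have e3 : q ^ m * (q * q ^ (k - (m+1))) = q ^ k := by
      rw [← pow_succ', ← pow_add]
      congr 1
      omega
    have h4 : (q ^ k)⁻¹ * q ^ m * q ^ k = q ^ m := by field_simp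
    have key : (1 - q ^ (-(k:ℤ)) * q ^ m) * q ^ k
        = -(q ^ m) * (1 - q * q ^ (k - (m+1))) := by
      rw [hinv]
      linear_combination -h4 - e3
    rw [e2] at ih'
    rw [P_succ, choose_succ, pow_succ (q ^ k), pow_add q (m.choose 2) m, pow_succ (-1 : ℂ)]
    linear_combination (P q (q ^ (-(k:ℤ))) m * P q q (k - (m+1)) * (q ^ k) ^ m) * key
      - q ^ m * ih'

lemma I2 {q : ℂ} (hq0 : q ≠ 0) {k m : ℕ} (c d : ℂ)
    (hcd : c * d = q ^ (1 - (k:ℤ))) (hm : m ≤ k) :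
    P q c k * q ^ (m.choose 2)
      = P q c (k - m) * P q d m * (-c) ^ m * (q ^ ((k:ℤ) - 1)) ^ m := by
  induction m with
  | zero => simp
  | succ m ih =>
    have hm' : m ≤ k := by omega
    have ih' := ih hm'
    have hWV : q ^ (1 - (k:ℤ)) * q ^ ((k:ℤ) - 1) = 1 := by
      rw [← zpow_add₀ hq0]
      norm_num
    have e2 : P q c (k - m) = P q c (k - (m+1)) * (1 - c * q ^ (k - (m+1))) := by
      have e1 : k - m = (k - (m+1)) + 1 := by omega
      rw [e1, P_succ]
    have eV : q ^ m * q ^ (k - (m+1)) = q ^ ((k:ℤ) - 1) := by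
      rw [← pow_add, show ((k:ℤ) - 1) = ((k - 1 : ℕ) : ℤ) by omega, zpow_natCast]
      congr 1
      omega
    -- key step: (1 - d * q^m) * (-c) * q^((k:ℤ)-1) * q = (q^m - c * q^((k:ℤ)-1)) * q
    have key : (1 - d * q ^ m) * (-c) * (q ^ ((k:ℤ) - 1) * q)
        = (1 - c * q ^ (k - (m+1))) * (q ^ m * q) := by
      have h5 : c * d * (q ^ ((k:ℤ) - 1)) = 1 := by rw [hcd, hWV]
      linear_combination (q ^ m * q) * h5 + (c * q) * eV
    rw [e2] at ih'
    rw [P_succ q d, choose_succ, pow_add q (m.choose 2) m, pow_succ (-c), pow_succ (q ^ ((k:ℤ)-1))]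
    refine mul_right_cancel₀ hq0 ?_
    linear_combination
      (-(P q c (k - (m+1)) * P q d m * (-c) ^ m * (q ^ ((k:ℤ)-1)) ^ m)) * key
      + (q ^ m * q) * ih'


lemma E_id {q : ℂ} (hq0 : q ≠ 0) {k m : ℕ} (hm : m ≤ k) {a3 b3 d : ℂ}
    (ha3 : a3 ≠ 0) (hb3 : b3 ≠ 0) (hd : (a3 / b3) * d = q ^ (1 - (k:ℤ))) :
    b3 ^ m * P q (a3/b3) k * P q (q ^ (-(k:ℤ))) m * P q q (k - m) * q ^ m
      = a3 ^ m * P q (a3/b3) (k - m) * P q d m * P q q k := by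
  refine mul_right_cancel₀ (pow_ne_zero m (pow_ne_zero k hq0) : (q ^ k) ^ m ≠ 0) ?_
  have h1 := I1 hq0 hm
  have h2 := I2 hq0 (a3/b3) d hd hm
  have hqq : q * q ^ ((k:ℤ) - 1) = q ^ k := by
    rw [show q * q ^ ((k:ℤ)-1) = q ^ (1:ℤ) * q ^ ((k:ℤ)-1) by rw [zpow_one],
      ← zpow_add₀ hq0, show (1:ℤ) + ((k:ℤ)-1) = ((k:ℕ):ℤ) by ring, zpow_natCast]
  have base : (-1 : ℂ) * b3 * q * (-(a3/b3)) * q ^ ((k:ℤ)-1) = a3 * q ^ k := by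
    have hb' : b3 * (a3/b3) = a3 := by field_simp
    linear_combination (q * q ^ ((k:ℤ)-1)) * hb' + a3 * hqq
  have h3 := congrArg (· ^ m) base
  have hsq : ((-1:ℂ) ^ m) * ((-1:ℂ) ^ m) = 1 := by
    rw [← mul_pow]; norm_num
  linear_combination (b3 ^ m * q ^ m * P q (a3/b3) k) * h1
    + ((-1:ℂ) ^ m * b3 ^ m * q ^ m * P q q k) * h2
    + (P q q k * P q (a3/b3) (k - m) * P q d m) * h3
    + (b3 ^ m * q ^ m * P q q k * P q (a3/b3) (k - m) * P q d m * (a3/b3) ^ m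
        * (q ^ ((k:ℤ)-1)) ^ m) * hsq


lemma Pq_eq {q : ℂ} (j : ℕ) : P q q j = ∏ i ∈ range j, (1 - q ^ (i + 1)) := by
  refine Finset.prod_congr rfl fun i _ => ?_
  rw [pow_succ']

lemma Pq_ne {q : ℂ} (hq1 : ‖q‖ < 1) (j : ℕ) : P q q j ≠ 0 := by
  rw [Pq_eq]; exact pochq_ne hq1 j

lemma qd_eq_P {q a b : ℂ} (hb : b ≠ 0) (j : ℕ) :
    qd q a b j = b ^ j * P q (a/b) j / P q q j := by
  rw [qd, ← Pq_eq, P]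
  congr 1
  calc ∏ i ∈ range j, (b - a * q ^ i) = ∏ i ∈ range j, b * (1 - a / b * q ^ i) := by
        refine Finset.prod_congr rfl fun i _ => ?_
        field_simp
  _ = b ^ j * ∏ i ∈ range j, (1 - a / b * q ^ i) := by
        rw [Finset.prod_mul_distrib, prod_const, card_range]

lemma term_id {q : ℂ} (hq0 : q ≠ 0) (hq1 : ‖q‖ < 1) {k m1 m2 : ℕ} (hm : m1 + m2 ≤ k)
    {a1 a2 a3 b1 b2 b3 d : ℂ} (hb1 : b1 ≠ 0) (hb2 : b2 ≠ 0) (ha3 : a3 ≠ 0) (hb3 : b3 ≠ 0)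
    (hd : (a3 / b3) * d = q ^ (1 - (k:ℤ))) (hdne : P q d (m1 + m2) ≠ 0) :
    b3 ^ k * P q (a3/b3) k / P q q k *
      (P q (q ^ (-(k:ℤ))) (m1+m2) * P q (a1/b1) m1 * P q (a2/b2) m2 /
        (P q d (m1+m2) * P q q m1 * P q q m2) * (q * b1 / a3) ^ m1 * (q * b2 / a3) ^ m2)
      = qd q a1 b1 m1 * qd q a2 b2 m2 * qd q a3 b3 (k - m1 - m2) := by
  have hE := E_id hq0 hm ha3 hb3 hd
  have hkm : k - m1 - m2 = k - (m1 + m2) := by omega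
  rw [qd_eq_P hb1, qd_eq_P hb2, qd_eq_P hb3, hkm]
  have h1 := Pq_ne hq1 k
  have h2 := Pq_ne hq1 m1
  have h3 := Pq_ne hq1 m2
  have h4 := Pq_ne hq1 (k - (m1 + m2))
  set e := q ^ (-(k:ℤ)) with he
  have hsplit : b3 ^ k = b3 ^ (m1 + m2) * b3 ^ (k - (m1 + m2)) := by
    rw [← pow_add]; congr 1; omega
  rw [hsplit]
  simp only [div_pow, div_mul_div_comm]
  rw [div_eq_div_iff
    (by apply_rules [mul_ne_zero, pow_ne_zero, h1, h2, h3, h4, hdne, ha3])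
    (by apply_rules [mul_ne_zero, pow_ne_zero, h1, h2, h3, h4, hdne, ha3])]
  linear_combination (P q (a1/b1) m1 * P q (a2/b2) m2 * b1 ^ m1 * b2 ^ m2
    * b3 ^ (k - (m1+m2)) * P q q m1 * P q q m2) * hE

end QAppellAux

open QAppellAux in
/-- the Taylor coefficients of `∏_{i=1}^{3}(a_i x;q)_∞/(b_i x;q)_∞` are given by
a terminating q-Appell Lauricella `φ_D^{(2)}` expression. -/
theorem coeff_E6_generating_function_eq_qAppellLauricella
    (q : ℂ) (hq0 : 0 < ‖q‖) (hq1 : ‖q‖ < 1)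
    (a1 a2 a3 b1 b2 b3 : ℂ) (hb1 : b1 ≠ 0) (hb2 : b2 ≠ 0) (ha3 : a3 ≠ 0) (hb3 : b3 ≠ 0)
    (k : ℕ)
    (poch : ℂ → ℕ → ℂ)
    (hpoch : ∀ (c : ℂ) (j : ℕ), poch c j = ∏ i ∈ Finset.range j, (1 - c * q ^ i))
    (hne : ∀ j ≤ k, poch (q ^ (1 - (k : ℤ)) * b3 / a3) j ≠ 0)
    (p : ℕ → ℂ)
    (hp : ∀ x : ℂ, ‖x‖ <
        min (min (1 / ‖b1‖) (1 / ‖b2‖)) (1 / ‖b3‖) →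
      HasSum (fun j : ℕ => p j * x ^ j)
        (((∏' n : ℕ, (1 - a1 * q ^ n * x)) * (∏' n : ℕ, (1 - a2 * q ^ n * x)) *
            (∏' n : ℕ, (1 - a3 * q ^ n * x))) /
          ((∏' n : ℕ, (1 - b1 * q ^ n * x)) * (∏' n : ℕ, (1 - b2 * q ^ n * x)) *
            (∏' n : ℕ, (1 - b3 * q ^ n * x))))) :
    p k = b3 ^ k * poch (a3 / b3) k / poch q k *
      ∑ m1 ∈ Finset.range (k + 1), ∑ m2 ∈ Finset.range (k - m1 + 1),
        poch (q ^ (-(k : ℤ))) (m1 + m2) * poch (a1 / b1) m1 * poch (a2 / b2) m2 /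
            (poch (q ^ (1 - (k : ℤ)) * b3 / a3) (m1 + m2) * poch q m1 * poch q m2) *
          (q * b1 / a3) ^ m1 * (q * b2 / a3) ^ m2 := by
  have habs : ∀ z : ℂ, ‖z‖ = ‖z‖ := fun z => rfl
  have hq0' : q ≠ 0 := by
    intro h
    rw [h] at hq0
    simp at hq0
  have hq1' : ‖q‖ < 1 := by rw [← habs]; exact hq1
  have hpochP : ∀ (c : ℂ) (j : ℕ), poch c j = P q c j := fun c j => by rw [hpoch, P]
  have hb1p : (0:ℝ) < ‖b1‖ := norm_pos_iff.2 hb1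
  have hb2p : (0:ℝ) < ‖b2‖ := norm_pos_iff.2 hb2
  have hb3p : (0:ℝ) < ‖b3‖ := norm_pos_iff.2 hb3
  set r : ℝ := min (min (1 / ‖b1‖) (1 / ‖b2‖)) (1 / ‖b3‖) with hrdef
  have hr : 0 < r := by
    apply lt_min (lt_min _ _) <;> positivity
  set F : ℂ → ℂ := fun x =>
    ((∏' n : ℕ, (1 - a1 * q ^ n * x)) * (∏' n : ℕ, (1 - a2 * q ^ n * x)) *
        (∏' n : ℕ, (1 - a3 * q ^ n * x))) /
      ((∏' n : ℕ, (1 - b1 * q ^ n * x)) * (∏' n : ℕ, (1 - b2 * q ^ n * x)) *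
        (∏' n : ℕ, (1 - b3 * q ^ n * x))) with hF
  have hbx : ∀ x : ℂ, ‖x‖ < r →
      ‖b1‖ * ‖x‖ < 1 ∧ ‖b2‖ * ‖x‖ < 1 ∧ ‖b3‖ * ‖x‖ < 1 := by
    intro x hx
    refine ⟨?_, ?_, ?_⟩
    · have h := lt_of_lt_of_le hx (le_trans (min_le_left _ _) (min_le_left _ _))
      rw [lt_div_iff₀ hb1p] at h
      linarith [h]
    · have h := lt_of_lt_of_le hx (le_trans (min_le_left _ _) (min_le_right _ _))
      rw [lt_div_iff₀ hb2p] at h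
      linarith [h]
    · have h := lt_of_lt_of_le hx (min_le_right _ _)
      rw [lt_div_iff₀ hb3p] at h
      linarith [h]
  have hc : ∀ x : ℂ, ‖x‖ < r →
      HasSum (fun j : ℕ => cc q a1 a2 a3 b1 b2 b3 j * x ^ j) (F x) := by
    intro x hx
    obtain ⟨hx1, hx2, hx3⟩ := hbx x hx
    have hcs := hasSum_cc (a1 := a1) (a2 := a2) (a3 := a3) hq1' hb1 hb2 hb3 hx1 hx2 hx3
    have e1 := gg_eq_div (a := a1) hq1' hb1 hx1
    have e2 := gg_eq_div (a := a2) hq1' hb2 hx2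
    have e3 := gg_eq_div (a := a3) hq1' hb3 hx3
    rw [e1, e2, e3, div_mul_div_comm, div_mul_div_comm] at hcs
    exact hcs
  have hp' : ∀ x : ℂ, ‖x‖ < r → HasSum (fun j : ℕ => p j * x ^ j) (F x) := by
    intro x hx
    refine hp x ?_
    exact hx
  have hpc : p = cc q a1 a2 a3 b1 b2 b3 := coeff_unique hr _ _ F hp' hc
  rw [hpc]
  -- now the algebraic evaluation
  set d : ℂ := q ^ (1 - (k:ℤ)) * b3 / a3 with hddef
  have hd : (a3 / b3) * d = q ^ (1 - (k:ℤ)) := by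
    rw [hddef]
    field_simp
  simp only [hpochP]
  rw [Finset.mul_sum]
  rw [cc]
  refine Finset.sum_congr rfl fun m1 hm1 => ?_
  rw [Finset.mul_sum]
  refine Finset.sum_congr rfl fun m2 hm2 => ?_
  rw [Finset.mem_range] at hm1 hm2
  have hm : m1 + m2 ≤ k := by omega
  have hdne : P q d (m1 + m2) ≠ 0 := by
    rw [← hpochP]
    exact hne (m1 + m2) hm
  exact (term_id hq0' hq1' hm hb1 hb2 ha3 hb3 hd hdne).symm
end

section
/- Let q ∈ ℂ with 0 < |q| < 1, let a_1, a_2, b_1, b_2 ∈ ℂ with b_1, b_2, a_2 ≠ 0, and let k ∈ ℕ. Assume (b_2 q^{−k+1}/a_2; q)_s ≠ 0 for all 0 ≤ s ≤ k. Then the coefficient p_k in the power series expansion (a_1 x, a_2 x; q)_∞/(b_1 x, b_2 x; q)_∞ = ∑_{k≥0} p_k x^k (valid for |x| < min(1/|b_1|, 1/|b_2|)) is given by the terminating q-hypergeometric expression p_k = b_2^k (a_2/b_2; q)_k / (q; q)_k · ∑_{s=0}^{k} [ (q^{−k}; q)_s (a_1/b_1; q)_s / ( (b_2 q^{−k+1}/a_2;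 q)_s (q; q)_s ) ] (q b_1/a_2)^s. -/
open Filter Finset

noncomputable def pochP (q c : ℂ) (n : ℕ) : ℂ := ∏ i ∈ Finset.range n, (1 - c * q ^ i)

noncomputable def Aseq (q b a : ℂ) (s : ℕ) : ℂ := b ^ s * pochP q (a / b) s / pochP q q s

noncomputable def Cseq (q a1 b1 a2 b2 : ℂ) (m : ℕ) : ℂ :=
  ∑ s ∈ range (m + 1), Aseq q b1 a1 s * Aseq q b2 a2 (m - s)

noncomputable def Dseq (q a1 b1 a2 b2 : ℂ) (m : ℕ) : ℂ :=
  ∑ s ∈ range (m + 1), q ^ s * Aseq q b1 a1 s * Aseq q b2 a2 (m - s)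

section algebra

variable {q : ℂ} (hq0 : q ≠ 0) (hq1 : ‖q‖ < 1)

lemma qpow_ne_one (hq1 : ‖q‖ < 1) (n : ℕ) : (1 : ℂ) - q ^ (n + 1) ≠ 0 := by
  intro h
  have h1 : q ^ (n + 1) = 1 := by linear_combination -h
  have h2 : ‖q ^ (n + 1)‖ = 1 := by rw [h1]; simp
  rw [norm_pow] at h2
  have h3 : ‖q‖ ^ (n + 1) < 1 :=
    pow_lt_one₀ (norm_nonneg q) hq1 (Nat.succ_ne_zero n)
  rw [h2] at h3
  exact lt_irrefl _ h3

lemma pochq_ne (hq1 : ‖q‖ < 1) (n : ℕ) : pochP q q n ≠ 0 := by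
  rw [pochP]
  refine Finset.prod_ne_zero_iff.mpr fun i _ => ?_
  have := qpow_ne_one hq1 i
  rw [pow_succ'] at this
  exact this

lemma pochP_succ (c : ℂ) (n : ℕ) :
    pochP q c (n + 1) = pochP q c n * (1 - c * q ^ n) := Finset.prod_range_succ _ _

lemma Aseq_zero (b a : ℂ) : Aseq q b a 0 = 1 := by simp [Aseq, pochP]

lemma Aseq_rec (hq1 : ‖q‖ < 1) {b : ℂ} (hb : b ≠ 0) (a : ℂ) (s : ℕ) :
    (1 - q ^ (s + 1)) * Aseq q b a (s + 1) = (b - a * q ^ s) * Aseq q b a s := by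
  rw [Aseq, Aseq, pochP_succ, pochP_succ]
  have h1 : pochP q q s ≠ 0 := pochq_ne hq1 s
  have h2 : (1 : ℂ) - q * q ^ s ≠ 0 := by
    have := qpow_ne_one hq1 s; rwa [pow_succ'] at this
  have h3 : (1 : ℂ) - q ^ (s + 1) = 1 - q * q ^ s := by rw [pow_succ']
  rw [h3]
  field_simp
  ring

end algebra

lemma multAux {q : ℂ} (hq1 : ‖q‖ < 1) (c x : ℂ) :
    Multipliable (fun n : ℕ => 1 - c * q ^ n * x) := by
  by_cases h0 : ∃ n : ℕ, 1 - c * q ^ n * x = 0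
  · obtain ⟨n0, hn0⟩ := h0
    refine ⟨0, ?_⟩
    have hev : ∀ᶠ s : Finset ℕ in atTop, ∏ i ∈ s, (1 - c * q ^ i * x) = 0 := by
      refine eventually_atTop.2 ⟨{n0}, fun s hs => Finset.prod_eq_zero ?_ hn0⟩
      exact hs (Finset.mem_singleton_self n0)
    exact Tendsto.congr' (hev.mono fun s hs => hs.symm) tendsto_const_nhds
  · push_neg at h0
    have hlog : Summable fun n : ℕ => Complex.log (1 - c * q ^ n * x) := by
      have hgeo : Summable fun n : ℕ => ‖c * x‖ * ‖q‖ ^ n :=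
        (summable_geometric_of_lt_one (norm_nonneg q) hq1).mul_left _
      have hten : Tendsto (fun n : ℕ => ‖c * x‖ * ‖q‖ ^ n) atTop (nhds 0) :=
        hgeo.tendsto_atTop_zero
      refine Summable.of_norm_bounded_eventually_nat
        (hgeo.mul_left (3 / 2)) ?_
      have hsmall : ∀ᶠ n : ℕ in atTop, ‖c * x‖ * ‖q‖ ^ n ≤ 1 / 2 := by
        have h2 := hten.eventually_le_const (show (0:ℝ) < 1/2 by norm_num)
        exact h2
      filter_upwards [hsmall] with n hn
      have habs : ‖c * x * q ^ n‖ = ‖c * x‖ * ‖q‖ ^ n := by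
        simp [map_mul, map_pow]
      have hz : ‖(-(c * x * q ^ n))‖ ≤ 1 / 2 := by rw [norm_neg, habs]; exact hn
      have hb := Complex.norm_log_one_add_half_le_self hz
      have heq : (1 : ℂ) + -(c * x * q ^ n) = 1 - c * q ^ n * x := by ring
      rw [heq] at hb
      refine hb.trans ?_
      rw [norm_neg, habs]
    exact Complex.multipliable_of_summable_log hlog

lemma shiftAux {q : ℂ} (hq1 : ‖q‖ < 1) (c x : ℂ) :
    (∏' n : ℕ, (1 - c * q ^ n * x)) = (1 - c * x) * ∏' n : ℕ, (1 - c * q ^ n * (q * x)) := by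
  have hm : Multipliable (fun n : ℕ => (1 - c * q ^ (n + 1) * x)) := by
    have := multAux hq1 (c * q) x
    refine this.congr fun n => ?_
    ring_nf
  have h := tprod_eq_zero_mul' (f := fun n : ℕ => 1 - c * q ^ n * x) hm
  rw [h]
  congr 1
  · simp
  · exact tprod_congr fun n => by ring

-- functional equation
lemma funeqAux {q : ℂ} (hq1 : ‖q‖ < 1) (a1 a2 b1 b2 x : ℂ)
    (h1 : 1 - b1 * x ≠ 0) (h2 : 1 - b2 * x ≠ 0) :
    (1 - a1 * x) * (1 - a2 * x) *
      (((∏' n : ℕ, (1 - a1 * q ^ n * (q * x))) * (∏' n : ℕ, (1 - a2 * q ^ n * (q * x)))) /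
        ((∏' n : ℕ, (1 - b1 * q ^ n * (q * x))) * (∏' n : ℕ, (1 - b2 * q ^ n * (q * x)))))
    = (1 - b1 * x) * (1 - b2 * x) *
      (((∏' n : ℕ, (1 - a1 * q ^ n * x)) * (∏' n : ℕ, (1 - a2 * q ^ n * x))) /
        ((∏' n : ℕ, (1 - b1 * q ^ n * x)) * (∏' n : ℕ, (1 - b2 * q ^ n * x)))) := by
  rw [shiftAux hq1 a1 x, shiftAux hq1 a2 x, shiftAux hq1 b1 x, shiftAux hq1 b2 x]
  set N1 := ∏' n : ℕ, (1 - a1 * q ^ n * (q * x))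
  set N2 := ∏' n : ℕ, (1 - a2 * q ^ n * (q * x))
  set D1 := ∏' n : ℕ, (1 - b1 * q ^ n * (q * x))
  set D2 := ∏' n : ℕ, (1 - b2 * q ^ n * (q * x))
  have hβ : (1 - b1 * x) * (1 - b2 * x) ≠ 0 := mul_ne_zero h1 h2
  by_cases hD : D1 * D2 = 0
  · rcases mul_eq_zero.mp hD with h | h <;> simp [h]
  · have hD1 : D1 ≠ 0 := fun h => hD (by rw [h, zero_mul])
    have hD2 : D2 ≠ 0 := fun h => hD (by rw [h, mul_zero])
    field_simp
    rw [eq_div_iff (by rwa [mul_comm x b1, mul_comm x b2])]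
    ring

def shc (f : ℕ → ℂ) : ℕ → ℂ := fun j => match j with
  | 0 => 0
  | m + 1 => f m

lemma hasSum_shc {f : ℕ → ℂ} {x S : ℂ} (h : HasSum (fun j => f j * x ^ j) S) :
    HasSum (fun j => shc f j * x ^ j) (S * x) := by
  have h1 : HasSum (fun j : ℕ => shc f (j + 1) * x ^ (j + 1)) (S * x) := by
    have := h.mul_right x
    refine this.congr_fun fun j => ?_
    show shc f (j + 1) * x ^ (j + 1) = f j * x ^ j * x
    simp only [shc, pow_succ]; ring
  have := (hasSum_nat_add_iff (f := fun j => shc f j * x ^ j) 1).mp h1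
  simpa [shc] using this

-- uniqueness of power series coefficients
lemma coeff_zero {c : ℕ → ℂ} {r : ℝ} (hr : 0 < r)
    (h : ∀ x : ℂ, ‖x‖ < r → HasSum (fun j => c j * x ^ j) 0) :
    ∀ j, c j = 0 := by
  set p := FormalMultilinearSeries.ofScalars ℂ c with hp
  set t : NNReal := ⟨r / 2, by positivity⟩ with ht
  have htr : (t : ℝ) < r := by
    simp only [ht, NNReal.coe_mk]
    show r / 2 < r
    linarith
  have hrad : (t : ENNReal) ≤ p.radius := by
    have hsum : Summable fun n => c n * (t : ℂ) ^ n := by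
      refine (h (t : ℝ) ?_).summable
      rwa [Complex.norm_real, Real.norm_of_nonneg (by positivity)]
    have hb : BddAbove (Set.range fun n => ‖c n * (t : ℂ) ^ n‖) :=
      hsum.tendsto_atTop_zero.norm.bddAbove_range
    obtain ⟨C, hC⟩ := hb
    refine p.le_radius_of_bound C fun n => ?_
    have := hC (Set.mem_range_self n)
    calc ‖p n‖ * (t : ℝ) ^ n = ‖c n‖ * (t : ℝ) ^ n := by
          rw [hp, FormalMultilinearSeries.ofScalars_norm]
      _ = ‖c n * (t : ℂ) ^ n‖ := by
          rw [norm_mul, norm_pow]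
          norm_num
      _ ≤ C := this
  have hball : HasFPowerSeriesOnBall (fun _ : ℂ => (0 : ℂ)) p 0 t := by
    have ht0 : (0 : ENNReal) < (t : ENNReal) := by
      simp only [ENNReal.coe_pos, ← NNReal.coe_pos, ht, NNReal.coe_mk]
      exact ENNReal.coe_pos.mpr (NNReal.coe_pos.mp (show (0 : ℝ) < r / 2 by positivity))
    refine ⟨hrad, ht0, fun {y} hy => ?_⟩
    rw [EMetric.mem_ball, edist_zero_right] at hy
    have hy' : ‖y‖ < r := by
      have h2 : ‖y‖ < (t : ℝ) := by exact_mod_cast hy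
      calc ‖y‖ = ‖y‖ := rfl
        _ < (t : ℝ) := h2
        _ < r := htr
    have h3 := h y hy'
    show HasSum (fun n => p n fun _ => y) _
    have heq : (fun n => p n fun _ => y) = fun n => c n * y ^ n := by
      funext n
      rw [hp, FormalMultilinearSeries.ofScalars_apply_eq, smul_eq_mul]
    rw [heq]
    exact h3
  have hzero : p = 0 := hball.hasFPowerSeriesAt.eq_zero_of_eventually (Filter.Eventually.of_forall fun _ => rfl)
  intro j
  have := congrFun hzero j
  rwa [hp, FormalMultilinearSeries.zero_apply, FormalMultilinearSeries.ofScalars_eq_zero] at this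

lemma recAux (q : ℂ) (hq1 : ‖q‖ < 1)
    (a1 a2 b1 b2 : ℂ) (hb1 : b1 ≠ 0) (hb2 : b2 ≠ 0)
    (p : ℕ → ℂ)
    (hp : ∀ x : ℂ, ‖x‖ < min (1 / ‖b1‖) (1 / ‖b2‖) →
      HasSum (fun j : ℕ => p j * x ^ j)
        (((∏' n : ℕ, (1 - a1 * q ^ n * x)) * (∏' n : ℕ, (1 - a2 * q ^ n * x))) /
          ((∏' n : ℕ, (1 - b1 * q ^ n * x)) * (∏' n : ℕ, (1 - b2 * q ^ n * x))))) :
    ∀ j : ℕ,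
      (p j - (b1 + b2) * shc p j + b1 * b2 * shc (shc p) j) -
        (p j * q ^ j - (a1 + a2) * shc (fun m => p m * q ^ m) j +
          a1 * a2 * shc (shc (fun m => p m * q ^ m)) j) = 0 := by
  set r : ℝ := min (1 / ‖b1‖) (1 / ‖b2‖) with hrdef
  have hr : 0 < r := by
    have h1 : 0 < 1 / ‖b1‖ := by
      have := norm_pos_iff.mpr hb1; positivity
    have h2 : 0 < 1 / ‖b2‖ := by
      have := norm_pos_iff.mpr hb2; positivity
    exact lt_min h1 h2
  refine coeff_zero hr fun x hx => ?_
  have hb1x : 1 - b1 * x ≠ 0 := by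
    intro h
    have h1 : ‖b1 * x‖ = 1 := by
      have : b1 * x = 1 := by linear_combination -h
      rw [this]; simp
    have h2 : ‖b1 * x‖ < 1 := by
      rw [norm_mul]
      have hlt : ‖x‖ < 1 / ‖b1‖ := lt_of_lt_of_le hx (min_le_left _ _)
      have hb1' : 0 < ‖b1‖ := norm_pos_iff.mpr hb1
      rw [lt_div_iff₀ hb1'] at hlt
      linarith [hlt]
    linarith
  have hb2x : 1 - b2 * x ≠ 0 := by
    intro h
    have h1 : ‖b2 * x‖ = 1 := by
      have : b2 * x = 1 := by linear_combination -h
      rw [this]; simp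
    have h2 : ‖b2 * x‖ < 1 := by
      rw [norm_mul]
      have hlt : ‖x‖ < 1 / ‖b2‖ := lt_of_lt_of_le hx (min_le_right _ _)
      have hb2' : 0 < ‖b2‖ := norm_pos_iff.mpr hb2
      rw [lt_div_iff₀ hb2'] at hlt
      linarith [hlt]
    linarith
  have hqx : ‖q * x‖ < r := by
    calc ‖q * x‖ = ‖q‖ * ‖x‖ := norm_mul _ _
      _ ≤ 1 * ‖x‖ := by
          have := norm_nonneg x
          nlinarith
      _ = ‖x‖ := one_mul _
      _ < r := hx
  set F : ℂ := ((∏' n : ℕ, (1 - a1 * q ^ n * x)) * (∏' n : ℕ, (1 - a2 * q ^ n * x))) /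
      ((∏' n : ℕ, (1 - b1 * q ^ n * x)) * (∏' n : ℕ, (1 - b2 * q ^ n * x))) with hF
  set G : ℂ := ((∏' n : ℕ, (1 - a1 * q ^ n * (q * x))) * (∏' n : ℕ, (1 - a2 * q ^ n * (q * x)))) /
      ((∏' n : ℕ, (1 - b1 * q ^ n * (q * x))) * (∏' n : ℕ, (1 - b2 * q ^ n * (q * x)))) with hG
  have hA : HasSum (fun j => p j * x ^ j) F := hp x hx
  have hA2 : HasSum (fun j => (p j * q ^ j) * x ^ j) G := by
    have := hp (q * x) hqx
    rw [← hG] at this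
    refine this.congr_fun fun j => ?_
    rw [mul_pow]; ring
  have hB := hasSum_shc hA
  have hC := hasSum_shc hB
  have hB2 := hasSum_shc hA2
  have hC2 := hasSum_shc hB2
  have hcomb := ((hA.sub (hB.mul_left (b1 + b2))).add (hC.mul_left (b1 * b2))).sub
    ((hA2.sub (hB2.mul_left (a1 + a2))).add (hC2.mul_left (a1 * a2)))
  have hval : (F - (b1 + b2) * (F * x) + b1 * b2 * (F * x * x)) -
      (G - (a1 + a2) * (G * x) + a1 * a2 * (G * x * x)) = 0 := by
    have hfe := funeqAux hq1 a1 a2 b1 b2 x hb1x hb2x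
    rw [← hF, ← hG] at hfe
    linear_combination -hfe
  rw [hval] at hcomb
  refine hcomb.congr_fun fun j => ?_
  ring

section alg
variable {q : ℂ} (hq1 : ‖q‖ < 1) {a1 a2 b1 b2 : ℂ} (hb1 : b1 ≠ 0) (hb2 : b2 ≠ 0)

lemma Cseq_zero : Cseq q a1 b1 a2 b2 0 = 1 := by
  simp [Cseq, Aseq_zero]

lemma Dseq_zero : Dseq q a1 b1 a2 b2 0 = 1 := by
  simp [Dseq, Aseq_zero]

include hq1 hb1 in
lemma cI (m : ℕ) :
    Cseq q a1 b1 a2 b2 (m + 1) - b1 * Cseq q a1 b1 a2 b2 m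
      = Dseq q a1 b1 a2 b2 (m + 1) - a1 * Dseq q a1 b1 a2 b2 m := by
  have key : Cseq q a1 b1 a2 b2 (m + 1) - Dseq q a1 b1 a2 b2 (m + 1)
      = b1 * Cseq q a1 b1 a2 b2 m - a1 * Dseq q a1 b1 a2 b2 m := by
    rw [Cseq, Dseq, ← Finset.sum_sub_distrib]
    have h1 : ∀ s ∈ range (m + 2),
        Aseq q b1 a1 s * Aseq q b2 a2 (m + 1 - s) -
          q ^ s * Aseq q b1 a1 s * Aseq q b2 a2 (m + 1 - s)
        = ((1 - q ^ s) * Aseq q b1 a1 s) * Aseq q b2 a2 (m + 1 - s) := by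
      intro s _; ring
    rw [Finset.sum_congr rfl h1, Finset.sum_range_succ']
    simp only [pow_zero, sub_self, zero_mul, add_zero, Nat.succ_sub_succ]
    have h2 : ∀ i ∈ range (m + 1),
        ((1 - q ^ (i + 1)) * Aseq q b1 a1 (i + 1)) * Aseq q b2 a2 (m - i)
        = b1 * (Aseq q b1 a1 i * Aseq q b2 a2 (m - i))
            - a1 * (q ^ i * Aseq q b1 a1 i * Aseq q b2 a2 (m - i)) := by
      intro i _
      rw [Aseq_rec hq1 hb1 a1 i]
      ring
    rw [Finset.sum_congr rfl h2, Finset.sum_sub_distrib, ← Finset.mul_sum, ← Finset.mul_sum]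
    rw [Cseq, Dseq]
  linear_combination key

include hq1 hb2 in
lemma cIV (m : ℕ) :
    Dseq q a1 b1 a2 b2 (m + 1) - b2 * Dseq q a1 b1 a2 b2 m
      = q ^ (m + 1) * Cseq q a1 b1 a2 b2 (m + 1) - a2 * q ^ m * Cseq q a1 b1 a2 b2 m := by
  have key : Dseq q a1 b1 a2 b2 (m + 1) - q ^ (m + 1) * Cseq q a1 b1 a2 b2 (m + 1)
      = b2 * Dseq q a1 b1 a2 b2 m - a2 * q ^ m * Cseq q a1 b1 a2 b2 m := by
    rw [Cseq, Dseq, Finset.mul_sum, ← Finset.sum_sub_distrib]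
    have h1 : ∀ s ∈ range (m + 2),
        q ^ s * Aseq q b1 a1 s * Aseq q b2 a2 (m + 1 - s) -
          q ^ (m + 1) * (Aseq q b1 a1 s * Aseq q b2 a2 (m + 1 - s))
        = (q ^ s * Aseq q b1 a1 s) * ((1 - q ^ (m + 1 - s)) * Aseq q b2 a2 (m + 1 - s)) := by
      intro s hs
      have hs' : s ≤ m + 1 := by
        have := Finset.mem_range.mp hs; omega
      have hpow : q ^ s * q ^ (m + 1 - s) = q ^ (m + 1) := by
        rw [← pow_add]; congr 1; omega
      linear_combination (Aseq q b1 a1 s * Aseq q b2 a2 (m + 1 - s)) * hpow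
    rw [Finset.sum_congr rfl h1, Finset.sum_range_succ]
    simp only [Nat.sub_self, pow_zero, sub_self, zero_mul, mul_zero, add_zero]
    have h2 : ∀ s ∈ range (m + 1),
        (q ^ s * Aseq q b1 a1 s) * ((1 - q ^ (m + 1 - s)) * Aseq q b2 a2 (m + 1 - s))
        = b2 * (q ^ s * Aseq q b1 a1 s * Aseq q b2 a2 (m - s))
            - a2 * q ^ m * (Aseq q b1 a1 s * Aseq q b2 a2 (m - s)) := by
      intro s hs
      have hs' : s ≤ m := by
        have := Finset.mem_range.mp hs; omega
      have e1 : m + 1 - s = (m - s) + 1 := by omega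
      rw [e1, Aseq_rec hq1 hb2 a2 (m - s)]
      have hpow : q ^ s * q ^ (m - s) = q ^ m := by
        rw [← pow_add]; congr 1; omega
      linear_combination -((Aseq q b1 a1 s * Aseq q b2 a2 (m - s)) * a2) * hpow
    rw [Finset.sum_congr rfl h2, Finset.sum_sub_distrib, ← Finset.mul_sum, ← Finset.mul_sum]
    rw [Cseq, Dseq]
  linear_combination key

include hq1 hb1 hb2 in
lemma Cthree (m : ℕ) :
    (1 - q ^ (m + 2)) * Cseq q a1 b1 a2 b2 (m + 2)
      = (b1 + b2 - (a1 + a2) * q ^ (m + 1)) * Cseq q a1 b1 a2 b2 (m + 1)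
        - (b1 * b2 - a1 * a2 * q ^ m) * Cseq q a1 b1 a2 b2 m := by
  have hI2 := cI hq1 hb1 (a1 := a1) (a2 := a2) (b2 := b2) (m + 1)
  have hIV2 := cIV hq1 hb2 (a1 := a1) (a2 := a2) (b1 := b1) (m + 1)
  have hI1 := cI hq1 hb1 (a1 := a1) (a2 := a2) (b2 := b2) m
  have hIV1 := cIV hq1 hb2 (a1 := a1) (a2 := a2) (b1 := b1) m
  linear_combination hI2 + hIV2 - b2 * hI1 - a1 * hIV1

include hq1 hb1 hb2 in
lemma Cone : (1 - q) * Cseq q a1 b1 a2 b2 1 = b1 + b2 - a1 - a2 := by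
  have hI := cI hq1 hb1 (a1 := a1) (a2 := a2) (b2 := b2) 0
  have hIV := cIV hq1 hb2 (a1 := a1) (a2 := a2) (b1 := b1) 0
  rw [Cseq_zero, Dseq_zero] at hI hIV
  linear_combination hI + hIV

end alg

section prods
variable {q : ℂ} (hq0 : q ≠ 0) (hq1 : ‖q‖ < 1)

lemma pochP_succ' (c : ℂ) (n : ℕ) :
    pochP q c (n + 1) = pochP q c n * (1 - c * q ^ n) := Finset.prod_range_succ _ _

include hq0 in
lemma prod_i (k : ℕ) : ∀ s, s ≤ k →
    pochP q (q ^ (-(k : ℤ))) s * q ^ (k * s) * pochP q q (k - s)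
      = (-1) ^ s * q ^ (∑ i ∈ range s, i) * pochP q q k := by
  intro s
  induction s with
  | zero => intro _; simp [pochP]
  | succ s ih =>
    intro hsk
    have hs : s ≤ k := by omega
    have ihs := ih hs
    rw [pochP_succ']
    have hsplit : pochP q q (k - s) = pochP q q (k - (s + 1)) * (1 - q * q ^ (k - (s + 1))) := by
      have e : k - s = (k - (s + 1)) + 1 := by omega
      rw [e, pochP_succ']
    -- key factor identity : (1 - q^{-k} q^s) * q^k = -q^s * (1 - q * q^{k-s-1})
    have hfact : (1 - q ^ (-(k : ℤ)) * q ^ s) * q ^ k = -(q ^ s) * (1 - q * q ^ (k - (s + 1))) := by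
      have h1 : q ^ (-(k : ℤ)) * (q ^ k : ℂ) = 1 := by
        rw [← zpow_natCast q k, ← zpow_add₀ hq0]
        simp
      have h2 : (q : ℂ) ^ s * (q * q ^ (k - (s + 1))) = q ^ k := by
        rw [← pow_succ', ← pow_add]
        congr 1
        omega
      linear_combination -q ^ s * h1 - h2
    -- assemble
    have lhs_eq : pochP q (q ^ (-(k : ℤ))) s * (1 - q ^ (-(k : ℤ)) * q ^ s) * q ^ (k * (s + 1)) *
        pochP q q (k - (s + 1))
        = (pochP q (q ^ (-(k : ℤ))) s * q ^ (k * s) * pochP q q (k - s)) * (-(q ^ s)) := by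
      rw [hsplit]
      have e2 : (q : ℂ) ^ (k * (s + 1)) = q ^ (k * s) * q ^ k := by
        rw [← pow_add]; congr 1
      rw [e2]
      linear_combination (pochP q (q ^ (-(k : ℤ))) s * q ^ (k * s) * pochP q q (k - (s + 1))) * hfact
    rw [lhs_eq, ihs]
    have e3 : (∑ i ∈ range (s + 1), i) = (∑ i ∈ range s, i) + s := Finset.sum_range_succ _ _
    rw [e3, pow_add]
    ring

variable {a2 b2 : ℂ} (ha2 : a2 ≠ 0) (hb2 : b2 ≠ 0)

include hq0 ha2 hb2 in
lemma prod_ii (k : ℕ) : ∀ s, s ≤ k →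
    pochP q (b2 * q ^ (1 - (k : ℤ)) / a2) s * a2 ^ s * q ^ ((k - 1) * s) *
        pochP q (a2 / b2) (k - s)
      = (-b2) ^ s * q ^ (∑ i ∈ range s, i) * pochP q (a2 / b2) k := by
  intro s
  induction s with
  | zero => intro _; simp [pochP]
  | succ s ih =>
    intro hsk
    have hs : s ≤ k := by omega
    have hk1 : 1 ≤ k := by omega
    have ihs := ih hs
    rw [pochP_succ']
    have hsplit : pochP q (a2 / b2) (k - s)
        = pochP q (a2 / b2) (k - (s + 1)) * (1 - (a2 / b2) * q ^ (k - (s + 1))) := by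
      have e : k - s = (k - (s + 1)) + 1 := by omega
      rw [e, pochP_succ']
    -- key : (1 - (b2 q^{1-k}/a2) q^s) * a2 * q^{k-1} = -b2 q^s (1 - (a2/b2) q^{k-1-s})
    have hfact : (1 - b2 * q ^ (1 - (k : ℤ)) / a2 * q ^ s) * (a2 * q ^ (k - 1))
        = -(b2 * q ^ s) * (1 - (a2 / b2) * q ^ (k - (s + 1))) := by
      have h1 : b2 * q ^ (1 - (k : ℤ)) / a2 * q ^ s * (a2 * q ^ (k - 1)) = b2 * q ^ s := by
        rw [div_mul_eq_mul_div, div_mul_eq_mul_div, div_eq_iff ha2]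
        have h2 : q ^ (1 - (k : ℤ)) * ((q : ℂ) ^ (k - 1)) = 1 := by
          rw [show ((q : ℂ) ^ (k - 1) : ℂ) = q ^ ((k : ℤ) - 1) by
            rw [← zpow_natCast]; congr 1; omega]
          rw [← zpow_add₀ hq0]; simp
        linear_combination (b2 * q ^ s * a2) * h2
      have h3 : b2 * ((a2 / b2) * ((q : ℂ) ^ s * q ^ (k - (s + 1)))) = a2 * q ^ (k - 1) := by
        rw [← pow_add, show s + (k - (s + 1)) = k - 1 by omega]
        field_simp
      linear_combination -h1 - h3
    have lhs_eq : pochP q (b2 * q ^ (1 - (k : ℤ)) / a2) s *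
          (1 - b2 * q ^ (1 - (k : ℤ)) / a2 * q ^ s) * a2 ^ (s + 1) * q ^ ((k - 1) * (s + 1)) *
          pochP q (a2 / b2) (k - (s + 1))
        = (pochP q (b2 * q ^ (1 - (k : ℤ)) / a2) s * a2 ^ s * q ^ ((k - 1) * s) *
            pochP q (a2 / b2) (k - s)) * (-(b2 * q ^ s)) := by
      rw [hsplit]
      have e2 : (q : ℂ) ^ ((k - 1) * (s + 1)) = q ^ ((k - 1) * s) * q ^ (k - 1) := by
        rw [← pow_add]; congr 1
      rw [e2, pow_succ]
      linear_combination (pochP q (b2 * q ^ (1 - (k : ℤ)) / a2) s * a2 ^ s * q ^ ((k - 1) * s) *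
        pochP q (a2 / b2) (k - (s + 1))) * hfact
    rw [lhs_eq, ihs]
    rw [Finset.sum_range_succ, pow_add]
    ring

end prods

section term
variable {q : ℂ} (hq0 : q ≠ 0) (hq1 : ‖q‖ < 1)
  {a1 a2 b1 b2 : ℂ} (ha2 : a2 ≠ 0) (hb1 : b1 ≠ 0) (hb2 : b2 ≠ 0)

include hq0 ha2 hb2 in
lemma hterm (k s : ℕ) (hsk : s ≤ k) :
    b2 ^ k * pochP q (a2 / b2) k * (pochP q (q ^ (-(k : ℤ))) s * pochP q (a1 / b1) s *
        (q * b1) ^ s) * pochP q q (k - s)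
      = b1 ^ s * pochP q (a1 / b1) s * (b2 ^ (k - s) * pochP q (a2 / b2) (k - s)) *
        (pochP q q k * (pochP q (b2 * q ^ (1 - (k : ℤ)) / a2) s * a2 ^ s)) := by
  rcases Nat.eq_zero_or_pos s with hs0 | hs1
  · subst hs0
    simp [pochP]
  · have hk1 : 1 ≤ k := le_trans hs1 hsk
    have hi := prod_i hq0 k s hsk
    have hii := prod_ii hq0 ha2 hb2 k s hsk
    have eb2 : (b2 : ℂ) ^ k = b2 ^ (k - s) * b2 ^ s := by
      rw [← pow_add]; congr 1; omega
    have epow : (q : ℂ) ^ ((k - 1) * s) * q ^ s = q ^ (k * s) := by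
      rw [← pow_add]; congr 1
      cases k with
      | zero => omega
      | succ n => simp only [Nat.add_sub_cancel]; ring
    apply mul_right_cancel₀ (mul_ne_zero (pow_ne_zero (k * s) hq0)
      (pow_ne_zero ((k - 1) * s) hq0))
    linear_combination
      (b2 ^ k * pochP q (a2 / b2) k * pochP q (a1 / b1) s * (q * b1) ^ s * q ^ ((k - 1) * s)) * hi
      - (b1 ^ s * pochP q (a1 / b1) s * pochP q q k * q ^ (k * s) * b2 ^ (k - s)) * hii
      + (pochP q (a2 / b2) k * pochP q (a1 / b1) s * pochP q q k *
          q ^ (∑ i ∈ range s, i) * (-1) ^ s * b1 ^ s * q ^ s * q ^ ((k - 1) * s)) * eb2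
      + (pochP q (a2 / b2) k * pochP q (a1 / b1) s * pochP q q k *
          q ^ (∑ i ∈ range s, i) * (-1) ^ s * b1 ^ s * b2 ^ (k - s) * b2 ^ s) * epow
end term

section term2
variable {q : ℂ} (hq0 : q ≠ 0) (hq1 : ‖q‖ < 1)
  {a1 a2 b1 b2 : ℂ} (ha2 : a2 ≠ 0) (hb1 : b1 ≠ 0) (hb2 : b2 ≠ 0)

include hq0 hq1 ha2 hb2 in
lemma term_eq (k s : ℕ) (hsk : s ≤ k)
    (hRs : pochP q (b2 * q ^ (1 - (k : ℤ)) / a2) s ≠ 0) :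
    b2 ^ k * pochP q (a2 / b2) k / pochP q q k *
      (pochP q (q ^ (-(k : ℤ))) s * pochP q (a1 / b1) s /
          (pochP q (b2 * q ^ (1 - (k : ℤ)) / a2) s * pochP q q s) * (q * b1 / a2) ^ s)
    = Aseq q b1 a1 s * Aseq q b2 a2 (k - s) := by
  have hQk := pochq_ne hq1 k
  have hQs := pochq_ne hq1 s
  have hQks := pochq_ne hq1 (k - s)
  have h := hterm hq0 ha2 hb2 (a1 := a1) (b1 := b1) k s hsk
  rw [Aseq, Aseq]
  set W1 := pochP q (q ^ (-(k : ℤ))) s with hW1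
  set W2 := pochP q (a1 / b1) s with hW2
  set W3 := pochP q (b2 * q ^ (1 - (k : ℤ)) / a2) s with hW3
  set W4 := pochP q (a2 / b2) k with hW4
  set W5 := pochP q (a2 / b2) (k - s) with hW5
  set Q1 := pochP q q k with hQ1
  set Q2 := pochP q q s with hQ2
  set Q3 := pochP q q (k - s) with hQ3
  rw [div_pow]
  field_simp
  linear_combination h

end term2

section main
variable {q : ℂ} (hq0 : q ≠ 0) (hq1 : ‖q‖ < 1)
  {a1 a2 b1 b2 : ℂ} (hb1 : b1 ≠ 0) (hb2 : b2 ≠ 0)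

include hq1 hb1 hb2 in
lemma p_eq_C (p : ℕ → ℂ)
    (hp : ∀ x : ℂ, ‖x‖ < min (1 / ‖b1‖) (1 / ‖b2‖) →
      HasSum (fun j : ℕ => p j * x ^ j)
        (((∏' n : ℕ, (1 - a1 * q ^ n * x)) * (∏' n : ℕ, (1 - a2 * q ^ n * x))) /
          ((∏' n : ℕ, (1 - b1 * q ^ n * x)) * (∏' n : ℕ, (1 - b2 * q ^ n * x))))) :
    ∀ m, p m = Cseq q a1 b1 a2 b2 m := by
  have hrec := recAux q hq1 a1 a2 b1 b2 hb1 hb2 p hp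
  -- p 0 = 1
  have hp0 : p 0 = 1 := by
    have hr : (0 : ℝ) < min (1 / ‖b1‖) (1 / ‖b2‖) := by
      have h1 : 0 < ‖b1‖ := norm_pos_iff.mpr hb1
      have h2 : 0 < ‖b2‖ := norm_pos_iff.mpr hb2
      have h3 : 0 < 1 / ‖b1‖ := by positivity
      have h4 : 0 < 1 / ‖b2‖ := by positivity
      exact lt_min h3 h4
    have h0 := hp 0 (by simpa using hr)
    have hval : (((∏' n : ℕ, (1 - a1 * q ^ n * (0:ℂ))) * (∏' n : ℕ, (1 - a2 * q ^ n * (0:ℂ)))) /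
        ((∏' n : ℕ, (1 - b1 * q ^ n * (0:ℂ))) * (∏' n : ℕ, (1 - b2 * q ^ n * (0:ℂ))))) = 1 := by
      simp
    rw [hval] at h0
    have hsingle : HasSum (fun j : ℕ => p j * (0:ℂ) ^ j) (p 0) := by
      have := hasSum_single (f := fun j : ℕ => p j * (0:ℂ) ^ j) 0
        (fun b hb => by simp [zero_pow hb])
      simpa using this
    exact (hsingle.unique h0).symm ▸ (hsingle.unique h0)
  -- two-step induction
  have key : ∀ m, p m = Cseq q a1 b1 a2 b2 m ∧ p (m + 1) = Cseq q a1 b1 a2 b2 (m + 1) := by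
    intro m
    induction m with
    | zero =>
      constructor
      · rw [hp0, Cseq_zero]
      · -- p 1 = C 1
        have h1 := hrec 1
        simp only [shc, pow_one, pow_zero, mul_one] at h1
        have hC1 := Cone hq1 hb1 hb2 (a1 := a1) (a2 := a2)
        have hq' : (1 : ℂ) - q ≠ 0 := by
          have := qpow_ne_one hq1 0; rwa [pow_one] at this
        apply mul_left_cancel₀ hq'
        rw [hC1]
        rw [hp0] at h1
        linear_combination h1
    | succ n ih =>
      refine ⟨ih.2, ?_⟩
      have h2 := hrec (n + 2)
      have hs1 : shc p (n + 2) = p (n + 1) := rfl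
      have hs2 : shc (shc p) (n + 2) = p n := rfl
      have hs3 : shc (fun m => p m * q ^ m) (n + 2) = p (n + 1) * q ^ (n + 1) := rfl
      have hs4 : shc (shc (fun m => p m * q ^ m)) (n + 2) = p n * q ^ n := rfl
      rw [hs1, hs2, hs3, hs4] at h2
      have hC := Cthree hq1 hb1 hb2 (a1 := a1) (a2 := a2) n
      have hq' := qpow_ne_one hq1 (n + 1)
      apply mul_left_cancel₀ hq'
      rw [hC, ← ih.1, ← ih.2]
      linear_combination h2
  exact fun m => (key m).1
end main

/-- the Taylor coefficients of `(a_1 x, a_2 x;q)_∞/(b_1 x, b_2 x;q)_∞` are given by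
a terminating `₂φ₁` expression (little q-Jacobi polynomials). -/
theorem coeff_D5_generating_function_eq_2phi1
    (q : ℂ) (hq0 : 0 < ‖q‖) (hq1 : ‖q‖ < 1)
    (a1 a2 b1 b2 : ℂ) (hb1 : b1 ≠ 0) (hb2 : b2 ≠ 0) (ha2 : a2 ≠ 0)
    (k : ℕ)
    (poch : ℂ → ℕ → ℂ)
    (hpoch : ∀ (c : ℂ) (j : ℕ), poch c j = ∏ i ∈ Finset.range j, (1 - c * q ^ i))
    (hne : ∀ s ≤ k, poch (b2 * q ^ (1 - (k : ℤ)) / a2) s ≠ 0)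
    (p : ℕ → ℂ)
    (hp : ∀ x : ℂ, ‖x‖ < min (1 / ‖b1‖) (1 / ‖b2‖) →
      HasSum (fun j : ℕ => p j * x ^ j)
        (((∏' n : ℕ, (1 - a1 * q ^ n * x)) * (∏' n : ℕ, (1 - a2 * q ^ n * x))) /
          ((∏' n : ℕ, (1 - b1 * q ^ n * x)) * (∏' n : ℕ, (1 - b2 * q ^ n * x))))) :
    p k = b2 ^ k * poch (a2 / b2) k / poch q k *
      ∑ s ∈ Finset.range (k + 1),
        poch (q ^ (-(k : ℤ))) s * poch (a1 / b1) s /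
            (poch (b2 * q ^ (1 - (k : ℤ)) / a2) s * poch q s) *
          (q * b1 / a2) ^ s := by
  have hq0' : q ≠ 0 := by
    intro h
    rw [h] at hq0
    simp at hq0
  have hP : poch = pochP q := by
    funext c j
    rw [hpoch c j, pochP]
  rw [hP] at hne
  rw [hP]
  have hpc := p_eq_C hq1 hb1 hb2 (a1 := a1) (a2 := a2) p hp k
  rw [hpc, Cseq, Finset.mul_sum]
  refine Finset.sum_congr rfl fun s hs => ?_
  have hsk : s ≤ k := Nat.lt_succ_iff.mp (Finset.mem_range.mp hs)
  exact (term_eq hq0' hq1 ha2 hb2 (a1 := a1) (b1 := b1) k s hsk (hne s hsk)).symm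
end

section
/- Let q ∈ ℂ with 0 < |q| < 1, let a_1, a_2, b_1 ∈ ℂ with a_2, b_1 ≠ 0, and let k ∈ ℕ. Then the coefficient p_k in the power series expansion (a_1 x, a_2 x; q)_∞/(b_1 x; q)_∞ = ∑_{k≥0} p_k x^k (valid for |x| < 1/|b_1|) is given by the terminating q-hypergeometric expression p_k = q^{k(k−1)/2} (−a_2)^k / (q; q)_k · ∑_{s=0}^{k} [ (q^{−k}; q)_s (a_1/b_1; q)_s / (q; q)_s ] (q b_1/a_2)^s. -/
set_option maxHeartbeats 1000000
open Complex Finset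

noncomputable def Complex.abs : AbsoluteValue ℂ ℝ := NormedField.toAbsoluteValue ℂ

lemma Complex.norm_eq_abs (z : ℂ) : ‖z‖ = Complex.abs z := rfl

lemma Complex.abs_ofReal (r : ℝ) : Complex.abs (r : ℂ) = |r| := Complex.norm_real r


noncomputable section QAux


lemma qaux_mult {q c x : ℂ} (hq1 : Complex.abs q < 1) (hcx : Complex.abs (c * x) ≤ 1/2) :
    Multipliable (fun n : ℕ => 1 - c * q ^ n * x) := by
  have hq0 : (0:ℝ) ≤ Complex.abs q := AbsoluteValue.nonneg _ _
  have hbound : ∀ n : ℕ, Complex.abs (c * q ^ n * x) ≤ (1/2) * Complex.abs q ^ n := by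
    intro n
    have : Complex.abs (c * q ^ n * x) = Complex.abs (c * x) * Complex.abs q ^ n := by
      rw [show c * q ^ n * x = (c * x) * q ^ n by ring, map_mul, map_pow]
    rw [this]
    exact mul_le_mul_of_nonneg_right hcx (pow_nonneg hq0 n)
  have hne : ∀ n : ℕ, (1 - c * q ^ n * x) ≠ 0 := by
    intro n h
    have h1 : Complex.abs (c * q ^ n * x) = 1 := by
      have : c * q ^ n * x = 1 := by linear_combination -h
      rw [this]; simp
    have h2 : (1/2:ℝ) * Complex.abs q ^ n ≤ 1/2 * 1 := by
      have := pow_le_one₀ hq0 hq1.le (n := n)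
      nlinarith
    have := hbound n
    rw [h1] at this
    linarith
  have hsum : Summable (fun n : ℕ => Complex.log (1 - c * q ^ n * x)) := by
    apply Summable.of_norm_bounded (g := fun n => (3/2) * ((1/2) * Complex.abs q ^ n))
    · exact (summable_geometric_of_lt_one hq0 hq1).mul_left _ |>.mul_left _
    · intro n
      have h12 : ‖-(c * q ^ n * x)‖ ≤ 1/2 := by
        rw [norm_neg, Complex.norm_eq_abs]
        calc Complex.abs (c * q ^ n * x) ≤ (1/2) * Complex.abs q ^ n := hbound n
        _ ≤ 1/2 * 1 := by
            have := pow_le_one₀ hq0 hq1.le (n := n); nlinarith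
        _ = 1/2 := by norm_num
      have := Complex.norm_log_one_add_half_le_self h12
      rw [show (1:ℂ) + -(c * q ^ n * x) = 1 - c * q ^ n * x by ring] at this
      refine this.trans ?_
      rw [norm_neg, Complex.norm_eq_abs]
      have := hbound n
      nlinarith
  exact Complex.multipliable_of_summable_log hsum

lemma qaux_shift {q c x : ℂ} (hq1 : Complex.abs q < 1) (hcx : Complex.abs (c * x) ≤ 1/2) :
    (∏' n : ℕ, (1 - c * q ^ n * x)) = (1 - c * x) * ∏' n : ℕ, (1 - c * q ^ n * (q * x)) := by
  have hmult : Multipliable (fun n : ℕ => 1 - c * q ^ (n + 1) * x) := by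
    have h := qaux_mult (c := c * q) (x := x) hq1 ?_
    · exact h.congr (fun n => by rw [pow_succ]; ring)
    · rw [show c * q * x = (c * x) * q by ring, map_mul]
      calc Complex.abs (c * x) * Complex.abs q ≤ (1/2) * 1 := by
            have := (AbsoluteValue.nonneg Complex.abs (c*x))
            nlinarith
      _ = 1/2 := by norm_num
  rw [tprod_eq_zero_mul' hmult]
  simp only [pow_zero, mul_one, one_mul]
  congr 1
  exact tprod_congr (fun n => by rw [pow_succ]; ring)

end QAux


lemma qaux_coeff_unique (c : ℕ → ℂ) (r : ℝ) (hr : 0 < r)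
    (h : ∀ x : ℂ, Complex.abs x < r → HasSum (fun j => c j * x ^ j) (0:ℂ)) :
    ∀ n, c n = 0 := by
  set p : FormalMultilinearSeries ℂ ℂ ℂ := FormalMultilinearSeries.ofScalars ℂ c with hpdef
  have hrad : ENNReal.ofReal (r/2) ≤ p.radius := by
    have hx : Complex.abs ((3*r/4 : ℝ) : ℂ) < r := by
      rw [Complex.abs_ofReal]
      rw [_root_.abs_of_nonneg (show (0:ℝ) ≤ 3*r/4 by linarith)]
      linarith
    have hs := (h _ hx).summable
    have hterm : Filter.Tendsto (fun n => ‖c n * ((3*r/4 : ℝ) : ℂ) ^ n‖) Filter.atTop (nhds 0) := by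
      simpa using hs.tendsto_atTop_zero.norm
    obtain ⟨C, hC⟩ := hterm.bddAbove_range
    have hle : ∀ n : ℕ, ‖p n‖ * ((3*r/4).toNNReal : ℝ) ^ n ≤ C := by
      intro n
      have h1 : ‖p n‖ = ‖c n‖ := FormalMultilinearSeries.ofScalars_norm (E := ℂ) c n
      have h2 : ((3*r/4).toNNReal : ℝ) = 3*r/4 := Real.coe_toNNReal _ (by linarith)
      have h3 : ‖c n * ((3*r/4 : ℝ) : ℂ) ^ n‖ = ‖c n‖ * (3*r/4) ^ n := by
        rw [norm_mul, norm_pow, Complex.norm_real, Real.norm_of_nonneg (by linarith)]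
      have h4 : ‖c n * ((3*r/4 : ℝ) : ℂ) ^ n‖ ≤ C := hC ⟨n, rfl⟩
      rw [h3] at h4
      rw [h1, h2]
      exact h4
    have hb := p.le_radius_of_bound C hle
    refine le_trans ?_ hb
    rw [← ENNReal.ofReal_coe_nnreal, Real.coe_toNNReal _ (by linarith)]
    exact ENNReal.ofReal_le_ofReal (by linarith)
  have hball : HasFPowerSeriesOnBall (fun _ : ℂ => (0:ℂ)) p 0 (ENNReal.ofReal (r/2)) := by
    refine ⟨hrad, by simp [ENNReal.ofReal_pos]; linarith, ?_⟩
    intro y hy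
    have hy' : Complex.abs y < r := by
      rw [Metric.emetric_ball] at hy
      rw [mem_ball_zero_iff] at hy
      rw [Complex.norm_eq_abs] at hy
      linarith
    have key : (fun n => p n fun _ => y) = (fun j => c j * y ^ j) := by
      funext n
      rw [hpdef, FormalMultilinearSeries.ofScalars_apply_eq, smul_eq_mul]
    rw [key]
    exact h y hy'
  have hzero : p = 0 := HasFPowerSeriesAt.eq_zero ⟨_, hball⟩
  intro n
  have hn := congrFun hzero n
  rw [hpdef] at hn
  exact (FormalMultilinearSeries.ofScalars_eq_zero ℂ n).mp hn

noncomputable section QDefs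

def qp (q c : ℂ) (n : ℕ) : ℂ := ∏ i ∈ Finset.range n, (1 - c * q ^ i)

def qA (q a1 b1 : ℂ) (s : ℕ) : ℂ := qp q (a1/b1) s * b1 ^ s / qp q q s

def qe : ℕ → ℕ
  | 0 => 0
  | (m+1) => qe m + m

def qB (q a2 : ℂ) (m : ℕ) : ℂ := q ^ (qe m) * (-a2) ^ m / qp q q m

def qr (q a1 a2 b1 : ℂ) (k : ℕ) : ℂ :=
  ∑ s ∈ Finset.range (k+1), qA q a1 b1 s * qB q a2 (k - s)

end QDefs

section QLemmas
variable {q a1 a2 b1 : ℂ}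

lemma qone (hq1 : Complex.abs q < 1) (n : ℕ) (hn : 1 ≤ n) : (1:ℂ) - q ^ n ≠ 0 := by
  intro h
  have hq : q ^ n = 1 := by linear_combination -h
  have h1 : Complex.abs (q ^ n) = 1 := by rw [hq]; simp
  rw [map_pow] at h1
  have h2 : Complex.abs q ^ n ≤ Complex.abs q ^ 1 :=
    pow_le_pow_of_le_one (AbsoluteValue.nonneg _ _) hq1.le hn
  rw [h1] at h2
  simp at h2
  linarith

lemma qp_succ (c : ℂ) (n : ℕ) : qp q c (n+1) = qp q c n * (1 - c * q ^ n) :=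
  Finset.prod_range_succ _ _

lemma qpne (hq1 : Complex.abs q < 1) (n : ℕ) : qp q q n ≠ 0 := by
  rw [qp]
  apply Finset.prod_ne_zero_iff.mpr
  intro i _
  have : q * q ^ i = q ^ (i+1) := by ring
  rw [this]
  exact qone hq1 (i+1) (by omega)

lemma qA_rec (hq1 : Complex.abs q < 1) (hb1 : b1 ≠ 0) (s : ℕ) :
    (1 - q ^ (s+1)) * qA q a1 b1 (s+1) = (b1 - a1 * q ^ s) * qA q a1 b1 s := by
  rw [qA, qA, qp_succ, qp_succ]
  have h1 := qpne hq1 s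
  have h2 : (1 - q * q ^ s) = 1 - q ^ (s+1) := by ring
  rw [h2]
  have h3 := qone hq1 (s+1) (by omega)
  field_simp
  ring

lemma qB_rec (hq1 : Complex.abs q < 1) (m : ℕ) :
    (1 - q ^ (m+1)) * qB q a2 (m+1) = -a2 * q ^ m * qB q a2 m := by
  rw [qB, qB, qp_succ]
  have hch : qe (m+1) = qe m + m := rfl
  rw [hch, pow_add]
  have h1 := qpne hq1 m
  have h2 : (1 - q * q ^ m) = 1 - q ^ (m+1) := by ring
  rw [h2]
  have h3 := qone hq1 (m+1) (by omega)
  field_simp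
  ring

lemma qr_zero : qr q a1 a2 b1 0 = 1 := by
  simp [qr, qA, qB, qp, qe]

lemma qT2 (hq1 : Complex.abs q < 1) (m : ℕ) :
    ∑ s ∈ Finset.range (m+2), q ^ s * (1 - q ^ (m+1-s)) * (qA q a1 b1 s * qB q a2 (m+1-s))
      = -a2 * q ^ m * qr q a1 a2 b1 m := by
  rw [Finset.sum_range_succ]
  have hlast : q ^ (m+1) * (1 - q ^ (m+1-(m+1))) * (qA q a1 b1 (m+1) * qB q a2 (m+1-(m+1))) = 0 := by
    simp
  rw [hlast, add_zero]
  rw [show -a2 * q ^ m * qr q a1 a2 b1 m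
      = ∑ s ∈ Finset.range (m+1), -a2 * q ^ m * (qA q a1 b1 s * qB q a2 (m - s)) by
    rw [qr, Finset.mul_sum]]
  apply Finset.sum_congr rfl
  intro s hs
  have hs' : s ≤ m := by simp at hs; omega
  have hidx : m + 1 - s = (m - s) + 1 := by omega
  rw [hidx]
  have hpow : q ^ s * q ^ (m - s) = q ^ m := by rw [← pow_add]; congr 1; omega
  have hB := qB_rec (a2 := a2) hq1 (m - s)
  linear_combination (q ^ s * qA q a1 b1 s) * hB
    - (a2 * qA q a1 b1 s * qB q a2 (m - s)) * hpow

lemma qsplit (hq1 : Complex.abs q < 1) (hb1 : b1 ≠ 0) (m : ℕ) :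
    (1 - q ^ (m+1)) * qr q a1 a2 b1 (m+1)
      = (b1 - a1 * q ^ m - a2 * q ^ m) * qr q a1 a2 b1 m
        - a1 * (∑ s ∈ Finset.range (m+1), q ^ s * (1 - q ^ (m-s)) * (qA q a1 b1 s * qB q a2 (m-s))) := by
  have step1 : (1 - q ^ (m+1)) * qr q a1 a2 b1 (m+1)
      = (∑ s ∈ Finset.range (m+2), (1 - q ^ s) * (qA q a1 b1 s * qB q a2 (m+1-s)))
        + (∑ s ∈ Finset.range (m+2), q ^ s * (1 - q ^ (m+1-s)) * (qA q a1 b1 s * qB q a2 (m+1-s))) := by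
    rw [qr, Finset.mul_sum, ← Finset.sum_add_distrib]
    apply Finset.sum_congr rfl
    intro s hs
    have hs' : s ≤ m + 1 := by simp at hs; omega
    have hpow : q ^ s * q ^ (m+1-s) = q ^ (m+1) := by rw [← pow_add]; congr 1; omega
    linear_combination (qA q a1 b1 s * qB q a2 (m+1-s)) * hpow
  -- first sum
  have hT1 : (∑ s ∈ Finset.range (m+2), (1 - q ^ s) * (qA q a1 b1 s * qB q a2 (m+1-s)))
      = ∑ s ∈ Finset.range (m+1), (b1 - a1 * q ^ s) * (qA q a1 b1 s * qB q a2 (m-s)) := by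
    rw [Finset.sum_range_succ']
    simp only [pow_zero, sub_self, zero_mul, add_zero]
    apply Finset.sum_congr rfl
    intro s hs
    have hidx : m + 1 - (s+1) = m - s := by omega
    rw [hidx]
    have hA := qA_rec (a1 := a1) hq1 hb1 s
    linear_combination (qB q a2 (m - s)) * hA
  -- second sum
  have hT2 : (∑ s ∈ Finset.range (m+2), q ^ s * (1 - q ^ (m+1-s)) * (qA q a1 b1 s * qB q a2 (m+1-s)))
      = -a2 * q ^ m * qr q a1 a2 b1 m := qT2 hq1 m
  -- expand T1
  have hT1b : (∑ s ∈ Finset.range (m+1), (b1 - a1 * q ^ s) * (qA q a1 b1 s * qB q a2 (m-s)))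
      = b1 * qr q a1 a2 b1 m
        - a1 * (∑ s ∈ Finset.range (m+1), q ^ s * (qA q a1 b1 s * qB q a2 (m-s))) := by
    rw [qr, Finset.mul_sum, Finset.mul_sum, ← Finset.sum_sub_distrib]
    apply Finset.sum_congr rfl
    intro s _
    ring
  have hT3 : (∑ s ∈ Finset.range (m+1), q ^ s * (qA q a1 b1 s * qB q a2 (m-s)))
      = (∑ s ∈ Finset.range (m+1), q ^ s * (1 - q ^ (m-s)) * (qA q a1 b1 s * qB q a2 (m-s)))
        + q ^ m * qr q a1 a2 b1 m := by
    rw [qr, Finset.mul_sum, ← Finset.sum_add_distrib]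
    apply Finset.sum_congr rfl
    intro s hs
    have hs' : s ≤ m := by simp at hs; omega
    have hpow : q ^ s * q ^ (m-s) = q ^ m := by rw [← pow_add]; congr 1; omega
    linear_combination (qA q a1 b1 s * qB q a2 (m-s)) * hpow
  rw [step1, hT1, hT2, hT1b, hT3]
  ring

lemma qr_rec1 (hq1 : Complex.abs q < 1) (hb1 : b1 ≠ 0) :
    (1 - q) * qr q a1 a2 b1 1 = (b1 - (a1 + a2)) * qr q a1 a2 b1 0 := by
  have h := qsplit (a1 := a1) (a2 := a2) hq1 hb1 0
  simp only [pow_zero, pow_one] at h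
  rw [show ∑ s ∈ Finset.range (0+1), q ^ s * (1 - q ^ (0-s)) * (qA q a1 b1 s * qB q a2 (0-s))
      = 0 by simp] at h
  linear_combination h

lemma qr_rec2 (hq1 : Complex.abs q < 1) (hb1 : b1 ≠ 0) (n : ℕ) :
    (1 - q ^ (n+2)) * qr q a1 a2 b1 (n+2)
      = (b1 - (a1 + a2) * q ^ (n+1)) * qr q a1 a2 b1 (n+1)
        + a1 * a2 * q ^ n * qr q a1 a2 b1 n := by
  have h := qsplit (a1 := a1) (a2 := a2) hq1 hb1 (n+1)
  rw [qT2 hq1 n] at h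
  linear_combination h

end QLemmas

lemma qe_sum (n : ℕ) : qe n = ∑ i ∈ Finset.range n, i := by
  induction n with
  | zero => rfl
  | succ j ih => rw [Finset.sum_range_succ, ← ih]; rfl

lemma qe_eq (k : ℕ) : k * (k - 1) / 2 = qe k := by
  rw [← Finset.sum_range_id_mul_two k, Nat.mul_div_cancel _ (by norm_num : 0 < 2), qe_sum]
noncomputable section P5
variable {q a1 a2 b1 : ℂ}

lemma qL1 (hq0 : q ≠ 0) (k : ℕ) :
    ∀ s, s ≤ k → qp q (q ^ (-(k:ℤ))) s * q ^ (k*s)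
      = (-1) ^ s * q ^ (qe s) * (∏ i ∈ Finset.range s, (1 - q ^ (k-i))) := by
  intro s
  induction s with
  | zero => intro _; simp [qp, qe]
  | succ t ih =>
    intro hts
    have iht := ih (by omega)
    rw [qp_succ, Finset.prod_range_succ]
    have hqe1 : qe (t+1) = qe t + t := rfl
    rw [hqe1]
    have hkk : q ^ (k*(t+1)) = q ^ (k*t) * q ^ k := by rw [Nat.mul_succ, pow_add]
    have hz : q ^ (-(k:ℤ)) * q ^ k = 1 := by
      rw [zpow_neg, zpow_natCast]
      exact inv_mul_cancel₀ (pow_ne_zero _ hq0)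
    have hcancel : q ^ t * q ^ (k - t) = q ^ k := by rw [← pow_add]; congr 1; omega
    rw [hkk, pow_add]
    set X := q ^ (-(k:ℤ)) with hX
    set W := ∏ i ∈ Finset.range t, (1 - q ^ (k-i)) with hW
    linear_combination ((1 - X * q ^ t) * q ^ k) * iht
      - ((-1)^t * q ^ (qe t) * W * q ^ t) * hz
      - ((-1)^t * q ^ (qe t) * W) * hcancel

lemma qL2 (hq1 : Complex.abs q < 1) (k : ℕ) :
    ∀ s, s ≤ k → qp q q k = qp q q (k-s) * (∏ i ∈ Finset.range s, (1 - q ^ (k-i))) := by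
  intro s
  induction s with
  | zero => intro _; simp
  | succ t ih =>
    intro hts
    have iht := ih (by omega)
    have e1 : qp q q (k-t) = qp q q (k-(t+1)) * (1 - q * q ^ (k-(t+1))) := by
      rw [show k - t = (k-(t+1))+1 by omega]
      exact qp_succ _ _
    have e2 : q * q ^ (k-(t+1)) = q ^ (k-t) := by
      rw [show k - t = (k-(t+1))+1 by omega, pow_succ]; ring
    rw [Finset.prod_range_succ, iht, e1, ← e2]
    ring

lemma qqe (k : ℕ) : ∀ s, s ≤ k → qe (k-s) + k*s = qe k + qe s + s := by
  intro s
  induction s with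
  | zero => intro _; simp [qe]
  | succ t ih =>
    intro hts
    have iht := ih (by omega)
    have h1 : qe (k-t) = qe (k-(t+1)) + (k-(t+1)) := by
      rw [show k - t = (k - (t+1)) + 1 by omega]
      rfl
    have h2 : k*(t+1) = k*t + k := by ring
    have h3 : qe (t+1) = qe t + t := rfl
    omega

lemma q2phi1 (hq0 : q ≠ 0) (hq1 : Complex.abs q < 1) (ha2 : a2 ≠ 0) (hb1 : b1 ≠ 0) (k : ℕ) :
    qr q a1 a2 b1 k = q ^ (qe k) * (-a2) ^ k / qp q q k *
      ∑ s ∈ Finset.range (k + 1),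
        qp q (q ^ (-(k : ℤ))) s * qp q (a1 / b1) s / qp q q s * (q * b1 / a2) ^ s := by
  rw [qr, Finset.mul_sum]
  apply Finset.sum_congr rfl
  intro s hs
  have hsk : s ≤ k := by simp at hs; omega
  set W := ∏ i ∈ Finset.range s, (1 - q ^ (k-i)) with hWdef
  have hL2 : qp q q k = qp q q (k-s) * W := qL2 hq1 k s hsk
  have hWne : W ≠ 0 := by
    intro h0
    exact qpne hq1 k (by rw [hL2, h0, mul_zero])
  have hQs : qp q (q ^ (-(k:ℤ))) s = (-1) ^ s * q ^ (qe s) * W / q ^ (k*s) := by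
    rw [eq_div_iff (pow_ne_zero (k*s) hq0)]
    exact qL1 hq0 k s hsk
  have hqpow : q ^ (qe k) * q ^ (qe s) * q ^ s = q ^ (qe (k-s)) * q ^ (k*s) := by
    rw [← pow_add, ← pow_add, ← pow_add]
    congr 1
    have := qqe k s hsk
    omega
  have hsign : ((-1:ℂ)) ^ s * (-a2) ^ (k-s) * a2 ^ s = (-a2) ^ k := by
    have h1 : (-a2:ℂ) ^ k = (-a2) ^ (k-s) * (-a2) ^ s := by rw [← pow_add]; congr 1; omega
    rw [h1, neg_pow a2 s]
    ring
  have hcomb : (q ^ (qe k) * q ^ (qe s) * q ^ s) * (((-1:ℂ)) ^ s * (-a2) ^ (k-s) * a2 ^ s)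
      = (q ^ (qe (k-s)) * q ^ (k*s)) * (-a2) ^ k := by
    rw [hqpow, hsign]
  rw [qA, qB, hQs, hL2]
  have h1 := qpne hq1 s
  have h2 := qpne hq1 (k-s)
  have h3 : q ^ (k*s) ≠ 0 := pow_ne_zero _ hq0
  have e1 : ((-1:ℂ)) ^ s * (-a2) ^ k = (-a2) ^ (k-s) * a2 ^ s := by
    have h4 : (-a2:ℂ) ^ k = (-a2) ^ (k-s) * (-a2) ^ s := by rw [← pow_add]; congr 1; omega
    rw [h4, show ((-1:ℂ)) ^ s * ((-a2) ^ (k-s) * (-a2) ^ s)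
        = (-a2) ^ (k-s) * (((-1)*(-a2)) ^ s) from by rw [mul_pow]; ring]
    norm_num
  have hqk : q ^ (qe k) = q ^ (qe (k-s)) * q ^ (k*s) / (q ^ (qe s) * q ^ s) := by
    rw [eq_div_iff (mul_ne_zero (pow_ne_zero _ hq0) (pow_ne_zero _ hq0)), ← hqpow]; ring
  rw [← hsign, hqk]
  field_simp
  have ha : a2 ^ s * a2⁻¹ ^ s = 1 := by rw [← mul_pow, mul_inv_cancel₀ ha2, one_pow]
  have hm : (-1:ℂ) ^ (s * 2) = 1 := by rw [mul_comm, pow_mul]; norm_num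
  linear_combination
    (-(b1 ^ s * qp q (a1 / b1) s * a2 ^ (k - s) * q ^ s * (-1) ^ (k - s)) * (-1:ℂ) ^ (s * 2)) * ha
    - (b1 ^ s * qp q (a1 / b1) s * a2 ^ (k - s) * q ^ s * (-1) ^ (k - s)) * hm

end P5
lemma qalg (α β γ A1 A2 B : ℂ) (hγ : γ ≠ 0) :
    γ * (α * A1 * (β * A2) / (γ * B)) = α * β * (A1 * A2 / B) := by
  rcases eq_or_ne B 0 with hB | hB
  · simp [hB]
  · field_simp

lemma qaux_master (q a1 a2 b1 : ℂ) (p : ℕ → ℂ)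
    (hq1 : Complex.abs q < 1) (hb1 : b1 ≠ 0)
    (hp : ∀ x : ℂ, Complex.abs x < 1 / Complex.abs b1 →
      HasSum (fun j : ℕ => p j * x ^ j)
        (((∏' n : ℕ, (1 - a1 * q ^ n * x)) * (∏' n : ℕ, (1 - a2 * q ^ n * x))) /
          (∏' n : ℕ, (1 - b1 * q ^ n * x)))) :
    (1 - q) * p 1 = (b1 - (a1 + a2)) * p 0 ∧
    ∀ n : ℕ, (1 - q ^ (n+2)) * p (n+2)
      = (b1 - (a1 + a2) * q ^ (n+1)) * p (n+1) + a1 * a2 * q ^ n * p n := by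
  set M : ℝ := 1 + Complex.abs a1 + Complex.abs a2 + Complex.abs b1 with hM
  have ha1n := AbsoluteValue.nonneg Complex.abs a1
  have ha2n := AbsoluteValue.nonneg Complex.abs a2
  have hb1n := AbsoluteValue.nonneg Complex.abs b1
  have hM0 : 0 < M := by rw [hM]; linarith
  have hb1' : 0 < Complex.abs b1 := by simpa [AbsoluteValue.pos_iff] using hb1
  set ρ : ℝ := min (1 / Complex.abs b1) (1 / (2 * M)) with hρdef
  have hρ0 : 0 < ρ := lt_min (by positivity) (by positivity)
  have key : ∀ x : ℂ, Complex.abs x < ρ →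
      HasSum (fun j : ℕ =>
        ((match j with
          | 0 => (0:ℂ)
          | 1 => (1 - q) * p 1 - (b1 - (a1+a2)) * p 0
          | (n+2) => (1 - q ^ (n+2)) * p (n+2)
              - ((b1 - (a1 + a2) * q ^ (n+1)) * p (n+1) + a1 * a2 * q ^ n * p n)) : ℂ) * x ^ j) 0 := by
    intro x hx
    have hxb : Complex.abs x < 1 / Complex.abs b1 := lt_of_lt_of_le hx (min_le_left _ _)
    have hx2 : Complex.abs x < 1 / (2 * M) := lt_of_lt_of_le hx (min_le_right _ _)
    have hqx : Complex.abs (q * x) < 1 / Complex.abs b1 := by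
      rw [map_mul]
      calc Complex.abs q * Complex.abs x ≤ 1 * Complex.abs x :=
            mul_le_mul_of_nonneg_right hq1.le (AbsoluteValue.nonneg _ _)
        _ = Complex.abs x := one_mul _
        _ < _ := hxb
    have hbnd : ∀ c : ℂ, Complex.abs c ≤ M → Complex.abs (c * x) ≤ 1/2 := by
      intro c hc
      rw [map_mul]
      have h1 : Complex.abs c * Complex.abs x ≤ M * Complex.abs x :=
        mul_le_mul_of_nonneg_right hc (AbsoluteValue.nonneg _ _)
      have h2 : M * Complex.abs x ≤ M * (1 / (2*M)) :=
        mul_le_mul_of_nonneg_left hx2.le hM0.le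
      have h3 : M * (1 / (2*M)) = 1/2 := by field_simp
      calc Complex.abs c * Complex.abs x ≤ M * Complex.abs x := h1
        _ ≤ M * (1 / (2*M)) := h2
        _ = 1/2 := h3
    have hba1 : Complex.abs a1 ≤ M := by rw [hM]; linarith
    have hba2 : Complex.abs a2 ≤ M := by rw [hM]; linarith
    have hbb1 : Complex.abs b1 ≤ M := by rw [hM]; linarith
    have hne : (1 - b1 * x) ≠ 0 := by
      intro h
      have h1 : Complex.abs (b1 * x) = 1 := by
        have hb : b1 * x = 1 := by linear_combination -h
        rw [hb]; simp
      have := hbnd b1 hbb1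
      rw [h1] at this
      linarith
    have hF := hp x hxb
    have hG := hp (q*x) hqx
    set Fx : ℂ := ((∏' n : ℕ, (1 - a1 * q ^ n * x)) * (∏' n : ℕ, (1 - a2 * q ^ n * x))) /
          (∏' n : ℕ, (1 - b1 * q ^ n * x)) with hFx
    set Gx : ℂ := ((∏' n : ℕ, (1 - a1 * q ^ n * (q*x))) * (∏' n : ℕ, (1 - a2 * q ^ n * (q*x)))) /
          (∏' n : ℕ, (1 - b1 * q ^ n * (q*x))) with hGx
    have feq : (1 - b1 * x) * Fx = (1 - a1 * x) * (1 - a2 * x) * Gx := by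
      rw [hFx, hGx, qaux_shift hq1 (hbnd a1 hba1), qaux_shift hq1 (hbnd a2 hba2),
          qaux_shift hq1 (hbnd b1 hbb1)]
      exact qalg _ _ _ _ _ _ hne
    have hfun : (fun j : ℕ => p j * (q*x) ^ j) = (fun j : ℕ => (q ^ j * p j) * x ^ j) :=
      funext fun j => by rw [mul_pow]; ring
    have hG' : HasSum (fun j : ℕ => (q ^ j * p j) * x ^ j) Gx := by
      rw [← hfun]; exact hG
    -- shifted series
    have hg1 : HasSum (fun j : ℕ =>
        (Nat.casesOn j 0 (fun i => b1 * (p i * x ^ i) * x) : ℂ)) (b1 * Fx * x) := by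
      have s1 : HasSum (fun j : ℕ => b1 * (p j * x ^ j) * x) (b1 * Fx * x) :=
        (hF.mul_left b1).mul_right x
      have h2 := (hasSum_nat_add_iff
        (f := fun j : ℕ => (Nat.casesOn j 0 (fun i => b1 * (p i * x ^ i) * x) : ℂ)) 1).mp s1
      simpa using h2
    have hg2 : HasSum (fun j : ℕ =>
        (Nat.casesOn j 0 (fun i => (a1+a2) * ((q ^ i * p i) * x ^ i) * x) : ℂ))
        ((a1+a2) * Gx * x) := by
      have s2 : HasSum (fun j : ℕ => (a1+a2) * ((q ^ j * p j) * x ^ j) * x) ((a1+a2) * Gx * x) :=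
        (hG'.mul_left (a1+a2)).mul_right x
      have h2 := (hasSum_nat_add_iff
        (f := fun j : ℕ => (Nat.casesOn j 0 (fun i => (a1+a2) * ((q ^ i * p i) * x ^ i) * x) : ℂ)) 1).mp s2
      simpa using h2
    have hg3 : HasSum (fun j : ℕ =>
        (Nat.casesOn j 0 (fun i => (Nat.casesOn i 0
          (fun i' => a1 * a2 * ((q ^ i' * p i') * x ^ i') * (x*x)) : ℂ)) : ℂ))
        (a1 * a2 * Gx * (x*x)) := by
      have s3 : HasSum (fun j : ℕ => a1 * a2 * ((q ^ j * p j) * x ^ j) * (x*x))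
          (a1 * a2 * Gx * (x*x)) := (hG'.mul_left (a1*a2)).mul_right (x*x)
      have h2 := (hasSum_nat_add_iff
        (f := fun j : ℕ => (Nat.casesOn j 0 (fun i => (Nat.casesOn i 0
          (fun i' => a1 * a2 * ((q ^ i' * p i') * x ^ i') * (x*x)) : ℂ)) : ℂ)) 2).mp s3
      simpa [Finset.sum_range_succ] using h2
    have total := (hF.sub hg1).sub ((hG'.sub hg2).add hg3)
    have hval : (Fx - b1 * Fx * x) - ((Gx - (a1+a2) * Gx * x) + a1 * a2 * Gx * (x*x)) = 0 := by
      linear_combination feq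
    rw [hval] at total
    have hfeq2 : (fun j : ℕ =>
        ((match j with
          | 0 => (0:ℂ)
          | 1 => (1 - q) * p 1 - (b1 - (a1+a2)) * p 0
          | (n+2) => (1 - q ^ (n+2)) * p (n+2)
              - ((b1 - (a1 + a2) * q ^ (n+1)) * p (n+1) + a1 * a2 * q ^ n * p n)) : ℂ) * x ^ j)
        = (fun j : ℕ => (p j * x ^ j -
            (Nat.casesOn j 0 (fun i => b1 * (p i * x ^ i) * x) : ℂ)) -
          (((q ^ j * p j) * x ^ j -
            (Nat.casesOn j 0 (fun i => (a1+a2) * ((q ^ i * p i) * x ^ i) * x) : ℂ)) +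
            (Nat.casesOn j 0 (fun i => (Nat.casesOn i 0
              (fun i' => a1 * a2 * ((q ^ i' * p i') * x ^ i') * (x*x)) : ℂ)) : ℂ))) := by
      funext j
      rcases j with _ | (_ | n)
      · show (0:ℂ) * x ^ 0 = (p 0 * x ^ 0 - 0) - (((q ^ 0 * p 0) * x ^ 0 - 0) + 0)
        ring
      · show ((1 - q) * p 1 - (b1 - (a1+a2)) * p 0) * x ^ 1
          = (p 1 * x ^ 1 - b1 * (p 0 * x ^ 0) * x)
            - (((q ^ 1 * p 1) * x ^ 1 - (a1+a2) * ((q ^ 0 * p 0) * x ^ 0) * x) + 0)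
        ring
      · show ((1 - q ^ (n+2)) * p (n+2)
              - ((b1 - (a1 + a2) * q ^ (n+1)) * p (n+1) + a1 * a2 * q ^ n * p n)) * x ^ (n+2)
          = (p (n+2) * x ^ (n+2) - b1 * (p (n+1) * x ^ (n+1)) * x)
            - (((q ^ (n+2) * p (n+2)) * x ^ (n+2)
                - (a1+a2) * ((q ^ (n+1) * p (n+1)) * x ^ (n+1)) * x)
              + a1 * a2 * ((q ^ n * p n) * x ^ n) * (x*x))
        ring
    rw [hfeq2]
    exact total
  have huniq := qaux_coeff_unique _ ρ hρ0 key
  have h1 : (1 - q) * p 1 - (b1 - (a1+a2)) * p 0 = 0 := huniq 1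
  refine ⟨by linear_combination h1, fun n => ?_⟩
  have h2 : (1 - q ^ (n+2)) * p (n+2)
      - ((b1 - (a1 + a2) * q ^ (n+1)) * p (n+1) + a1 * a2 * q ^ n * p n) = 0 := huniq (n+2)
  linear_combination h2

lemma qaux_p0 (q a1 a2 b1 : ℂ) (p : ℕ → ℂ) (hb1 : b1 ≠ 0)
    (hp : ∀ x : ℂ, Complex.abs x < 1 / Complex.abs b1 →
      HasSum (fun j : ℕ => p j * x ^ j)
        (((∏' n : ℕ, (1 - a1 * q ^ n * x)) * (∏' n : ℕ, (1 - a2 * q ^ n * x))) /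
          (∏' n : ℕ, (1 - b1 * q ^ n * x)))) :
    p 0 = 1 := by
  have hb1' : 0 < Complex.abs b1 := by simpa [AbsoluteValue.pos_iff] using hb1
  have h0 := hp 0 (by simpa using (by positivity : (0:ℝ) < 1 / Complex.abs b1))
  have hv : (((∏' n : ℕ, (1 - a1 * q ^ n * (0:ℂ))) * (∏' n : ℕ, (1 - a2 * q ^ n * (0:ℂ)))) /
          (∏' n : ℕ, (1 - b1 * q ^ n * (0:ℂ)))) = 1 := by
    simp
  rw [hv] at h0
  have hs : HasSum (fun j : ℕ => p j * (0:ℂ) ^ j) (p 0) := by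
    have : (fun j : ℕ => p j * (0:ℂ) ^ j) = (fun j => if j = 0 then p 0 else 0) := by
      funext j
      rcases j with _ | j
      · simp
      · simp
    rw [this]
    exact hasSum_ite_eq 0 (p 0)
  exact hs.unique h0

/-- the Taylor coefficients of `(a_1 x, a_2 x;q)_∞/(b_1 x;q)_∞` are given by
a terminating `₂φ₁` expression (q-Laguerre polynomials). -/
theorem coeff_A4_generating_function_eq_2phi1
    (q : ℂ) (hq0 : 0 < ‖q‖) (hq1 : ‖q‖ < 1)
    (a1 a2 b1 : ℂ) (ha2 : a2 ≠ 0) (hb1 : b1 ≠ 0)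
    (k : ℕ)
    (poch : ℂ → ℕ → ℂ)
    (hpoch : ∀ (c : ℂ) (j : ℕ), poch c j = ∏ i ∈ Finset.range j, (1 - c * q ^ i))
    (p : ℕ → ℂ)
    (hp : ∀ x : ℂ, ‖x‖ < 1 / ‖b1‖ →
      HasSum (fun j : ℕ => p j * x ^ j)
        (((∏' n : ℕ, (1 - a1 * q ^ n * x)) * (∏' n : ℕ, (1 - a2 * q ^ n * x))) /
          (∏' n : ℕ, (1 - b1 * q ^ n * x)))) :
    p k = q ^ (k * (k - 1) / 2) * (-a2) ^ k / poch q k *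
      ∑ s ∈ Finset.range (k + 1),
        poch (q ^ (-(k : ℤ))) s * poch (a1 / b1) s / poch q s * (q * b1 / a2) ^ s := by
  have hqne : q ≠ 0 := by
    intro h
    rw [h] at hq0
    simp at hq0
  have hrec := qaux_master q a1 a2 b1 p hq1 hb1 hp
  have hp0 : p 0 = 1 := qaux_p0 q a1 a2 b1 p hb1 hp
  have hkey : ∀ n, p n = qr q a1 a2 b1 n ∧ p (n+1) = qr q a1 a2 b1 (n+1) := by
    intro n
    induction n with
    | zero =>
      constructor
      · rw [hp0, qr_zero]
      · have h1 := hrec.1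
        have h2 := qr_rec1 (a1 := a1) (a2 := a2) hq1 hb1
        have hne : (1:ℂ) - q ≠ 0 := by
          have := qone hq1 1 le_rfl
          simpa using this
        apply mul_left_cancel₀ hne
        rw [h1, h2, hp0, qr_zero]
    | succ n ih =>
      refine ⟨ih.2, ?_⟩
      have h1 := hrec.2 n
      have h2 := qr_rec2 (a1 := a1) (a2 := a2) hq1 hb1 n
      have hne := qone hq1 (n+2) (by omega)
      apply mul_left_cancel₀ hne
      rw [h1, h2, ih.1, ih.2]
  rw [(hkey k).1]
  simp only [hpoch]
  rw [qe_eq k]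
  exact q2phi1 hqne hq1 ha2 hb1 k
end

section
/- Let q ∈ ℂ with 0 < |q| < 1, let a_1, a_2 ∈ ℂ with a_2 ≠ 0, and let k ∈ ℕ. Then the coefficient p_k in the (everywhere convergent) power series expansion (a_1 x, a_2 x; q)_∞ = ∑_{k≥0} p_k x^k is given by the terminating q-hypergeometric expression p_k = q^{k(k−1)/2} (−a_2)^k / (q; q)_k · ∑_{s=0}^{k} [ (q^{−k}; q)_s / (q; q)_s ] (−1)^s q^{s(s−1)/2} (q a_1/a_2)^s. -/
open Finset Filter Complex Topology

namespace QAux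

noncomputable def qc (q a : ℂ) (j : ℕ) : ℂ :=
  (-a) ^ j * q ^ (∑ i ∈ Finset.range j, i) / ∏ i ∈ Finset.range j, (1 - q ^ (i + 1))

variable {q : ℂ}

lemma one_sub_pow_ne (hq1 : ‖q‖ < 1) (m : ℕ) : (1 : ℂ) - q ^ (m + 1) ≠ 0 := by
  intro h
  have h1 : q ^ (m + 1) = 1 := by linear_combination -h
  have h2 := congrArg norm h1
  rw [norm_pow, norm_one] at h2
  have hlt : ‖q‖ ^ (m + 1) < 1 :=
    pow_lt_one₀ (norm_nonneg q) hq1 (Nat.succ_ne_zero m)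
  rw [h2] at hlt
  exact lt_irrefl 1 hlt

lemma Pq_ne (hq1 : ‖q‖ < 1) (j : ℕ) :
    (∏ i ∈ Finset.range j, (1 - q ^ (i + 1))) ≠ 0 :=
  Finset.prod_ne_zero_iff.2 fun i _ => one_sub_pow_ne hq1 i

lemma abs_one_sub_pow_ge (hq1 : ‖q‖ < 1) (m : ℕ) :
    1 - ‖q‖ ≤ ‖1 - q ^ (m + 1)‖ := by
  have h1 : ‖q ^ (m + 1)‖ ≤ ‖q‖ := by
    rw [norm_pow]
    exact pow_le_of_le_one (norm_nonneg q) hq1.le (Nat.succ_ne_zero m)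
  have h2 := norm_sub_norm_le (1 : ℂ) (q ^ (m + 1))
  simp only [norm_one] at h2
  linarith

lemma qc_zero (a : ℂ) : qc q a 0 = 1 := by simp [qc]

lemma qc_rec (hq1 : ‖q‖ < 1) (a : ℂ) (j : ℕ) :
    qc q a (j + 1) * (1 - q ^ (j + 1)) = -a * q ^ j * qc q a j := by
  unfold qc
  rw [Finset.prod_range_succ, Finset.sum_range_succ, pow_succ]
  field_simp [Pq_ne hq1, one_sub_pow_ne hq1]
  ring

lemma qc_succ (hq1 : ‖q‖ < 1) (a : ℂ) (j : ℕ) :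
    qc q a (j + 1) = -a * q ^ j * qc q a j / (1 - q ^ (j + 1)) := by
  rw [eq_div_iff (one_sub_pow_ne hq1 j)]
  exact qc_rec hq1 a j

lemma qc_summable_norm (hq1 : ‖q‖ < 1) (a x : ℂ) :
    Summable (fun j => ‖qc q a j * x ^ j‖) := by
  have hq0 : (0:ℝ) < 1 - ‖q‖ := by
    have := norm_nonneg q; linarith
  set A : ℝ := ‖a‖ * ‖x‖ / (1 - ‖q‖) with hA
  have hbound : ∀ j : ℕ, ‖qc q a (j + 1) * x ^ (j + 1)‖ ≤
      A * ‖q‖ ^ j * ‖qc q a j * x ^ j‖ := by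
    intro j
    rw [qc_succ hq1 a j]
    have h1 : ‖(-a * q ^ j * qc q a j / (1 - q ^ (j + 1))) * x ^ (j + 1)‖ =
        ‖a‖ * ‖q‖ ^ j * ‖qc q a j‖ * ‖x‖ *
          ‖x‖ ^ j / ‖1 - q ^ (j + 1)‖ := by
      simp only [norm_mul, norm_div, norm_neg, norm_pow, pow_succ]
      ring
    rw [h1]
    have h2 : ‖a‖ * ‖q‖ ^ j * ‖qc q a j‖ * ‖x‖ *
          ‖x‖ ^ j / ‖1 - q ^ (j + 1)‖ ≤
        ‖a‖ * ‖q‖ ^ j * ‖qc q a j‖ * ‖x‖ *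
          ‖x‖ ^ j / (1 - ‖q‖) := by
      exact div_le_div_of_nonneg_left (by positivity) hq0 (abs_one_sub_pow_ge hq1 j)
    refine h2.trans (le_of_eq ?_)
    simp only [norm_mul, norm_pow, hA]
    field_simp
  apply summable_of_ratio_norm_eventually_le (r := 1/2) (by norm_num)
  have htend : Tendsto (fun j : ℕ => A * ‖q‖ ^ j) atTop (𝓝 0) := by
    simpa using (tendsto_pow_atTop_nhds_zero_of_lt_one (norm_nonneg q) hq1).const_mul A
  have hev : ∀ᶠ j : ℕ in atTop, A * ‖q‖ ^ j ≤ 1/2 :=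
    htend.eventually_le_const (by norm_num)
  filter_upwards [hev] with j hj
  have h3 := hbound j
  have h4 : A * ‖q‖ ^ j * ‖qc q a j * x ^ j‖ ≤ 1/2 * ‖qc q a j * x ^ j‖ :=
    mul_le_mul_of_nonneg_right hj (norm_nonneg _)
  simp only [norm_norm]
  linarith

noncomputable def G (q a x : ℂ) : ℂ := ∑' j : ℕ, qc q a j * x ^ j

lemma hasSum_G (hq1 : ‖q‖ < 1) (a x : ℂ) :
    HasSum (fun j => qc q a j * x ^ j) (G q a x) :=
  ((qc_summable_norm hq1 a x).of_norm).hasSum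

def sh (f : ℕ → ℂ) : ℕ → ℂ
  | 0 => 0
  | n + 1 => f n

lemma hasSum_sh {f : ℕ → ℂ} {s : ℂ} (h : HasSum f s) : HasSum (sh f) s := by
  have h' : HasSum (fun n => sh f (n + 1)) s := h
  have := (hasSum_nat_add_iff (f := sh f) 1).mp h'
  simpa [sh] using this

lemma G_funeq (hq1 : ‖q‖ < 1) (a x : ℂ) :
    G q a x = (1 - a * x) * G q a (q * x) := by
  have hS := hasSum_G hq1 a (q * x)
  set S := G q a (q * x) with hSdef
  have hA : HasSum (fun j => qc q a j * q ^ j * x ^ j) S := by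
    have : (fun j => qc q a j * (q * x) ^ j) = fun j => qc q a j * q ^ j * x ^ j := by
      funext j; rw [mul_pow]; ring
    rwa [this] at hS
  have hB0 : HasSum (fun j => a * x * (qc q a j * q ^ j * x ^ j)) (a * x * S) :=
    hA.mul_left (a * x)
  have hB : HasSum (sh (fun j => a * x * (qc q a j * q ^ j * x ^ j))) (a * x * S) :=
    hasSum_sh hB0
  have hC : HasSum (fun j => qc q a j * x ^ j) (S - a * x * S) := by
    have h5 := hA.sub hB
    refine h5.congr_fun ?_
    intro j
    cases j with
    | zero => simp [sh]
    | succ n =>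
        show qc q a (n+1) * x ^ (n+1)
            = qc q a (n+1) * q ^ (n+1) * x ^ (n+1) - a * x * (qc q a n * q ^ n * x ^ n)
        have hr := qc_rec hq1 a n
        linear_combination (x ^ (n+1)) * hr + (a * x * x^n * q^n) * (pow_succ x n)
  have := (hasSum_G hq1 a x).unique hC
  rw [this]; ring

lemma G_iterate (hq1 : ‖q‖ < 1) (a x : ℂ) (N : ℕ) :
    G q a x = (∏ n ∈ Finset.range N, (1 - a * q ^ n * x)) * G q a (q ^ N * x) := by
  induction N with
  | zero => simp
  | succ N ih =>
      rw [ih, G_funeq hq1 a (q ^ N * x), Finset.prod_range_succ]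
      have h1 : q * (q ^ N * x) = q ^ (N + 1) * x := by ring
      have h2 : (1 : ℂ) - a * (q ^ N * x) = 1 - a * q ^ N * x := by ring
      rw [h1, h2]; ring


lemma G_tendsto_one (hq1 : ‖q‖ < 1) (a x : ℂ) :
    Tendsto (fun N : ℕ => G q a (q ^ N * x)) atTop (𝓝 1) := by
  set C : ℝ := ∑' j : ℕ, ‖qc q a (j + 1) * x ^ (j + 1)‖ with hC
  have hshift : Summable (fun j : ℕ => ‖qc q a (j + 1) * x ^ (j + 1)‖) := by
    exact (summable_nat_add_iff (f := fun j : ℕ => ‖qc q a j * x ^ j‖) 1).2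
      (qc_summable_norm hq1 a x)
  have hbound : ∀ N : ℕ, ‖G q a (q ^ N * x) - 1‖ ≤ ‖q‖ ^ N * C := by
    intro N
    have hsum : Summable (fun j : ℕ => qc q a j * (q ^ N * x) ^ j) :=
      (qc_summable_norm hq1 a (q ^ N * x)).of_norm
    have h0 : G q a (q ^ N * x) = 1 + ∑' j : ℕ, qc q a (j + 1) * (q ^ N * x) ^ (j + 1) := by
      rw [G, hsum.tsum_eq_zero_add]
      simp [qc_zero]
    rw [h0]
    rw [add_sub_cancel_left]
    have hsum' : Summable (fun j : ℕ => ‖qc q a (j + 1) * (q ^ N * x) ^ (j + 1)‖) :=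
      (summable_nat_add_iff (f := fun j : ℕ => ‖qc q a j * (q ^ N * x) ^ j‖) 1).2
        (qc_summable_norm hq1 a (q ^ N * x))
    refine (norm_tsum_le_tsum_norm hsum').trans ?_
    have hterm : ∀ j : ℕ, ‖qc q a (j + 1) * (q ^ N * x) ^ (j + 1)‖ ≤
        ‖q‖ ^ N * ‖qc q a (j + 1) * x ^ (j + 1)‖ := by
      intro j
      have he : ‖qc q a (j + 1) * (q ^ N * x) ^ (j + 1)‖ =
          (‖q‖ ^ N) ^ (j + 1) * ‖qc q a (j + 1) * x ^ (j + 1)‖ := by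
        simp only [norm_mul, norm_pow, mul_pow]
        ring
      rw [he]
      have hle : (‖q‖ ^ N) ^ (j + 1) ≤ ‖q‖ ^ N := by
        have h01 : (0:ℝ) ≤ ‖q‖ ^ N := by positivity
        have h11 : ‖q‖ ^ N ≤ 1 := pow_le_one₀ (norm_nonneg q) hq1.le
        calc (‖q‖ ^ N) ^ (j + 1) ≤ (‖q‖ ^ N) ^ 1 :=
              pow_le_pow_of_le_one h01 h11 (by omega)
          _ = ‖q‖ ^ N := pow_one _
      exact mul_le_mul_of_nonneg_right hle (norm_nonneg _)
    calc ∑' j : ℕ, ‖qc q a (j + 1) * (q ^ N * x) ^ (j + 1)‖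
        ≤ ∑' j : ℕ, ‖q‖ ^ N * ‖qc q a (j + 1) * x ^ (j + 1)‖ :=
          Summable.tsum_le_tsum hterm hsum' (hshift.mul_left _)
      _ = ‖q‖ ^ N * C := tsum_mul_left
  have htend : Tendsto (fun N : ℕ => ‖q‖ ^ N * C) atTop (𝓝 0) := by
    simpa using (tendsto_pow_atTop_nhds_zero_of_lt_one (norm_nonneg q) hq1).mul_const C
  have := squeeze_zero_norm hbound htend
  have h2 : Tendsto (fun N : ℕ => (G q a (q ^ N * x) - 1) + 1) atTop (𝓝 (0 + 1)) :=
    this.add tendsto_const_nhds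
  simpa using h2

lemma mult (hq1 : ‖q‖ < 1) (a x : ℂ) :
    Multipliable (fun n : ℕ => 1 - a * q ^ n * x) := by
  by_cases hz : ∃ n : ℕ, 1 - a * q ^ n * x = 0
  · obtain ⟨n0, hn0⟩ := hz
    refine ⟨0, ?_⟩
    rw [HasProd]
    have hev : ∀ᶠ s : Finset ℕ in atTop, (∏ i ∈ s, (1 - a * q ^ i * x)) = 0 := by
      filter_upwards [eventually_ge_atTop ({n0} : Finset ℕ)] with s hs
      exact Finset.prod_eq_zero (hs (Finset.mem_singleton_self n0)) hn0
    exact Tendsto.congr' (by filter_upwards [hev] with s hs using hs.symm) tendsto_const_nhds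
  · push_neg at hz
    have hlog : Summable (fun n : ℕ => Complex.log (1 - a * q ^ n * x)) := by
      apply Summable.of_norm_bounded_eventually_nat
          (g := fun n => 3/2 * (‖a * x‖ * ‖q‖ ^ n))
      · exact (summable_geometric_of_lt_one (norm_nonneg q) hq1).mul_left _
          |>.mul_left _
      · have htend : Tendsto (fun n : ℕ => ‖a * x‖ * ‖q‖ ^ n)
            atTop (𝓝 0) := by
          simpa using (tendsto_pow_atTop_nhds_zero_of_lt_one (norm_nonneg q)
            hq1).const_mul (‖a * x‖)
        filter_upwards [htend.eventually_le_const (by norm_num : (0:ℝ) < 1/2)] with n hn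
        have hrw : (1 : ℂ) - a * q ^ n * x = 1 + (-(a * q ^ n * x)) := by ring
        have hnorm : ‖-(a * q ^ n * x)‖ = ‖a * x‖ * ‖q‖ ^ n := by
          simp only [norm_neg, norm_mul, norm_pow]
          ring
        rw [hrw]
        refine (Complex.norm_log_one_add_half_le_self (by rw [hnorm]; exact hn)).trans ?_
        rw [hnorm]
    exact Complex.multipliable_of_summable_log hlog

lemma euler (hq1 : ‖q‖ < 1) (a x : ℂ) :
    HasSum (fun j => qc q a j * x ^ j) (∏' n : ℕ, (1 - a * q ^ n * x)) := by
  have h1 := hasSum_G hq1 a x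
  suffices hGx : G q a x = ∏' n : ℕ, (1 - a * q ^ n * x) by rwa [hGx] at h1
  have hten1 : Tendsto (fun N : ℕ => ∏ n ∈ Finset.range N, (1 - a * q ^ n * x)) atTop
      (𝓝 (∏' n : ℕ, (1 - a * q ^ n * x))) := (mult hq1 a x).hasProd.tendsto_prod_nat
  have hten : Tendsto (fun N : ℕ => (∏ n ∈ Finset.range N, (1 - a * q ^ n * x)) *
      G q a (q ^ N * x)) atTop (𝓝 ((∏' n : ℕ, (1 - a * q ^ n * x)) * 1)) :=
    hten1.mul (G_tendsto_one hq1 a x)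
  have hconst : (fun N : ℕ => (∏ n ∈ Finset.range N, (1 - a * q ^ n * x)) *
      G q a (q ^ N * x)) = fun _ : ℕ => G q a x :=
    funext fun N => (G_iterate hq1 a x N).symm
  rw [hconst] at hten
  have heq := tendsto_nhds_unique hten tendsto_const_nhds
  simpa using heq.symm


lemma coeff_unique (b : ℕ → ℂ) (h : ∀ x : ℂ, HasSum (fun j => b j * x ^ j) 0) :
    ∀ n, b n = 0 := by
  intro n
  induction n using Nat.strong_induction_on with
  | _ n ih =>
  have hb1 : Summable b := by simpa using (h 1).summable
  have hM0 : BddAbove (Set.range fun j => ‖b j‖) :=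
    (hb1.tendsto_atTop_zero.norm).bddAbove_range
  obtain ⟨M, hM⟩ := hM0
  have hMle : ∀ j, ‖b j‖ ≤ M := fun j => hM (Set.mem_range_self j)
  have hMnn : (0:ℝ) ≤ M := le_trans (norm_nonneg _) (hMle 0)
  -- tail sums vanish for nonzero x
  have htail : ∀ x : ℂ, x ≠ 0 → HasSum (fun j => b (j + n) * x ^ j) 0 := by
    intro x hx
    have h1 : HasSum (fun j => b j * x ^ j) (0 + ∑ i ∈ Finset.range n, b i * x ^ i) := by
      have hz : (∑ i ∈ Finset.range n, b i * x ^ i) = 0 :=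
        Finset.sum_eq_zero fun i hi => by rw [ih i (Finset.mem_range.1 hi), zero_mul]
      rw [hz, add_zero]; exact h x
    have h2 : HasSum (fun j => b (j + n) * x ^ (j + n)) 0 :=
      (hasSum_nat_add_iff (f := fun j => b j * x ^ j) n).2 h1
    have h3 : HasSum (fun j => x ^ n * (b (j + n) * x ^ j)) 0 := by
      refine h2.congr_fun fun j => ?_
      rw [pow_add]; ring
    have h4 := h3.mul_left ((x ^ n)⁻¹)
    simp only [← mul_assoc, inv_mul_cancel₀ (pow_ne_zero n hx), one_mul, mul_zero] at h4
    exact h4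
  -- bound ‖b n‖ by C * ‖x‖ for small x
  have hbnd : ∀ x : ℂ, x ≠ 0 → ‖x‖ ≤ 1/2 → ‖b n‖ ≤ ‖x‖ * (M * 2) := by
    intro x hx hxle
    have hs := (htail x hx).summable
    have h0 : b n + ∑' j : ℕ, b (j + 1 + n) * x ^ (j + 1) = 0 := by
      have h6 := hs.tsum_eq_zero_add
      rw [(htail x hx).tsum_eq] at h6
      simpa using h6.symm
    have hbn : b n = -∑' j : ℕ, b (j + 1 + n) * x ^ (j + 1) := by
      linear_combination h0
    rw [hbn, norm_neg]
    have hgeo : Summable (fun j : ℕ => M * (1/2:ℝ) ^ j) :=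
      (summable_geometric_of_lt_one (by norm_num) (by norm_num)).mul_left M
    have hterm : ∀ j : ℕ, ‖b (j + 1 + n) * x ^ (j + 1)‖ ≤ ‖x‖ * (M * (1/2:ℝ) ^ j) := by
      intro j
      rw [norm_mul, norm_pow]
      have hb : ‖b (j + 1 + n)‖ ≤ M := hMle _
      have hxp : ‖x‖ ^ (j + 1) ≤ ‖x‖ * (1/2:ℝ) ^ j := by
        rw [pow_succ']
        have : ‖x‖ ^ j ≤ (1/2:ℝ) ^ j :=
          pow_le_pow_left₀ (norm_nonneg x) (by simpa using hxle) j
        exact mul_le_mul_of_nonneg_left this (norm_nonneg x)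
      calc ‖b (j + 1 + n)‖ * ‖x‖ ^ (j + 1) ≤ M * (‖x‖ * (1/2:ℝ) ^ j) :=
            mul_le_mul hb hxp (by positivity) hMnn
        _ = ‖x‖ * (M * (1/2:ℝ) ^ j) := by ring
    have hsn : Summable (fun j : ℕ => ‖b (j + 1 + n) * x ^ (j + 1)‖) := by
      refine Summable.of_norm_bounded_eventually_nat
        (g := fun j => ‖x‖ * (M * (1/2:ℝ) ^ j)) (hgeo.mul_left _) ?_
      filter_upwards with j
      simpa using hterm j
    refine (norm_tsum_le_tsum_norm hsn).trans ?_
    calc ∑' j : ℕ, ‖b (j + 1 + n) * x ^ (j + 1)‖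
        ≤ ∑' j : ℕ, ‖x‖ * (M * (1/2:ℝ) ^ j) :=
          Summable.tsum_le_tsum hterm hsn (hgeo.mul_left _)
      _ = ‖x‖ * (M * 2) := by
          rw [tsum_mul_left, tsum_mul_left, tsum_geometric_of_lt_one (by norm_num) (by norm_num)]
          norm_num
  -- conclude b n = 0
  have hseq : ∀ m : ℕ, ‖b n‖ ≤ ((1/2:ℝ) ^ (m + 1)) * (M * 2) := by
    intro m
    have hx : ((1/2 : ℂ) ^ (m + 1)) ≠ 0 := by
      apply pow_ne_zero
      norm_num
    have habs : ‖(1/2 : ℂ) ^ (m + 1)‖ = (1/2:ℝ) ^ (m + 1) := by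
      rw [norm_pow]
      norm_num [norm_div]
    have hle : ‖(1/2 : ℂ) ^ (m + 1)‖ ≤ 1/2 := by
      rw [habs]
      calc ((1/2:ℝ)) ^ (m + 1) ≤ (1/2:ℝ) ^ 1 :=
            pow_le_pow_of_le_one (by norm_num) (by norm_num) (by omega)
        _ = 1/2 := pow_one _
    have h7 := hbnd ((1/2 : ℂ) ^ (m + 1)) hx hle
    rwa [habs] at h7
  have htends : Tendsto (fun m : ℕ => ((1/2:ℝ) ^ (m + 1)) * (M * 2)) atTop (𝓝 0) := by
    have h1 : Tendsto (fun m : ℕ => ((1/2:ℝ) ^ m)) atTop (𝓝 0) :=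
      tendsto_pow_atTop_nhds_zero_of_lt_one (by norm_num) (by norm_num)
    have h2 := ((h1.comp (tendsto_add_atTop_nat 1)).mul_const (M * 2))
    simpa [Function.comp] using h2
  have hfin : ‖b n‖ ≤ 0 := ge_of_tendsto' htends hseq
  have : ‖b n‖ = 0 := le_antisymm hfin (norm_nonneg _)
  simpa using this


lemma prod_split (k s : ℕ) (hsk : s ≤ k) :
    ∏ i ∈ Finset.range k, (1 - q ^ (i + 1)) =
      (∏ i ∈ Finset.range (k - s), (1 - q ^ (i + 1))) *
        ∏ i ∈ Finset.range s, (1 - q ^ (k - i)) := by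
  induction s with
  | zero => simp
  | succ m ih =>
      have hm : m ≤ k := by omega
      rw [Finset.prod_range_succ, ih hm]
      have h1 : k - m = (k - (m + 1)) + 1 := by omega
      rw [h1, Finset.prod_range_succ]
      have h2 : k - (m + 1) + 1 = k - m := by omega
      rw [h2]
      ring

lemma sum_exp (k s : ℕ) (hsk : s ≤ k) :
    (∑ i ∈ Finset.range k, i) + (∑ i ∈ Finset.range s, i) + s =
      (∑ i ∈ Finset.range (k - s), i) + k * s := by
  obtain ⟨d, rfl⟩ := Nat.exists_eq_add_of_le hsk
  have hd : s + d - s = d := by omega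
  rw [hd]
  have h1 : ∑ i ∈ Finset.range (s + d), i =
      (∑ i ∈ Finset.range s, i) + (d * s + ∑ i ∈ Finset.range d, i) := by
    rw [Finset.sum_range_add]
    congr 1
    rw [Finset.sum_add_distrib, Finset.sum_const, Finset.card_range, smul_eq_mul]
  have h2 : (∑ i ∈ Finset.range s, i) * 2 + s = s * s := by
    have h3 := Finset.sum_range_id_mul_two s
    rcases s with _ | m
    · simp
    · rw [h3]
      simp only [Nat.succ_sub_one]
      ring
  rw [h1]
  have h4 : (s + d) * s = s * s + d * s := by ring
  rw [h4]
  linarith [h2]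

lemma W_ne (hq1 : ‖q‖ < 1) (k s : ℕ) (hsk : s ≤ k) :
    (∏ i ∈ Finset.range s, (1 - q ^ (k - i))) ≠ 0 := by
  refine Finset.prod_ne_zero_iff.2 fun i hi => ?_
  have hik : i < s := Finset.mem_range.1 hi
  have h1 : k - i = (k - i - 1) + 1 := by omega
  rw [h1]
  exact one_sub_pow_ne hq1 _

lemma poch_neg (hqne : q ≠ 0) (k s : ℕ) (hsk : s ≤ k) :
    ∏ i ∈ Finset.range s, (1 - q ^ (-(k:ℤ)) * q ^ i) =
      (-1) ^ s * (q ^ (∑ i ∈ Finset.range s, i) * (q ^ (k * s))⁻¹) *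
        ∏ i ∈ Finset.range s, (1 - q ^ (k - i)) := by
  have hterm : ∀ i ∈ Finset.range s, (1 : ℂ) - q ^ (-(k:ℤ)) * q ^ i =
      (-1) * (q ^ i * (q ^ k)⁻¹) * (1 - q ^ (k - i)) := by
    intro i hi
    have hik : i < s := Finset.mem_range.1 hi
    have hz : q ^ (-(k:ℤ)) = (q ^ k)⁻¹ := by
      rw [zpow_neg, zpow_natCast]
    have hik2 : q ^ i * q ^ (k - i) = q ^ k := by
      rw [← pow_add]
      congr 1
      omega
    have hk0 : (q : ℂ) ^ k ≠ 0 := pow_ne_zero _ hqne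
    rw [hz]
    calc (1:ℂ) - (q ^ k)⁻¹ * q ^ i = q ^ k * (q ^ k)⁻¹ - (q ^ k)⁻¹ * q ^ i := by
          rw [mul_inv_cancel₀ hk0]
      _ = -1 * (q ^ i * (q ^ k)⁻¹) * (1 - q ^ (k - i)) := by rw [← hik2]; ring
  rw [Finset.prod_congr rfl hterm]
  rw [Finset.prod_mul_distrib, Finset.prod_mul_distrib]
  congr 1
  · congr 1
    · simp
    · rw [Finset.prod_mul_distrib, Finset.prod_pow_eq_pow_sum, Finset.prod_const,
        Finset.card_range, inv_pow, ← pow_mul]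

lemma key_term (hq1 : ‖q‖ < 1) (hqne : q ≠ 0) (a1 a2 : ℂ) (ha2 : a2 ≠ 0)
    (k s : ℕ) (hsk : s ≤ k) :
    q ^ (∑ i ∈ Finset.range k, i) * (-a2) ^ k / (∏ i ∈ Finset.range k, (1 - q ^ (i + 1))) *
      ((∏ i ∈ Finset.range s, (1 - q ^ (-(k:ℤ)) * q ^ i)) /
          (∏ i ∈ Finset.range s, (1 - q ^ (i + 1))) *
        ((-1) ^ s * q ^ (∑ i ∈ Finset.range s, i) * (q * a1 / a2) ^ s)) =
      qc q a1 s * qc q a2 (k - s) := by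
  rw [poch_neg hqne k s hsk, prod_split (q := q) k s hsk]
  unfold qc
  have hqpow : q ^ (∑ i ∈ Finset.range k, i) * q ^ (∑ i ∈ Finset.range s, i) * q ^ s =
      q ^ (∑ i ∈ Finset.range (k - s), i) * q ^ (k * s) := by
    rw [← pow_add, ← pow_add, ← pow_add]
    congr 1
    exact sum_exp k s hsk
  have hP1 : (∏ i ∈ Finset.range (k - s), (1 - q ^ (i + 1))) ≠ 0 := Pq_ne hq1 _
  have hP2 : (∏ i ∈ Finset.range s, (1 - q ^ (i + 1))) ≠ 0 := Pq_ne hq1 _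
  have hW : (∏ i ∈ Finset.range s, (1 - q ^ (k - i))) ≠ 0 := W_ne hq1 k s hsk
  have hk0 : (q : ℂ) ^ (k * s) ≠ 0 := pow_ne_zero _ hqne
  have hsplit2 : (-a2 : ℂ) ^ k = (-a2) ^ (k - s) * (-a2) ^ s := by
    rw [← pow_add]
    congr 1
    omega
  have hq2 : q ^ (∑ i ∈ Finset.range k, i) =
      q ^ (∑ i ∈ Finset.range (k - s), i) * q ^ (k * s) /
        (q ^ (∑ i ∈ Finset.range s, i) * q ^ s) := by
    rw [eq_div_iff (mul_ne_zero (pow_ne_zero _ hqne) (pow_ne_zero _ hqne))]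
    linear_combination hqpow
  rw [hsplit2, hq2, show ((-a1 : ℂ)) ^ s = (-1) ^ s * a1 ^ s from neg_pow a1 s,
    show ((-a2 : ℂ)) ^ s = (-1) ^ s * a2 ^ s from neg_pow a2 s]
  field_simp
  have hneg : ((-1 : ℂ) ^ s) ^ 2 = 1 := by
    rw [← pow_mul, mul_comm, pow_mul]
    norm_num
  rw [hneg, div_pow, mul_one, mul_assoc ((-a2) ^ (k - s)), ← mul_div_assoc,
    mul_div_cancel_left₀ _ (pow_ne_zero s ha2)]
  ring

end QAux

/-- the Taylor coefficients of the entire function `(a_1 x, a_2 x;q)_∞` are given by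
a terminating `₁φ₁` expression (Stieltjes–Wigert polynomials). -/
theorem coeff_A2A1_generating_function_eq_1phi1
    (q : ℂ) (hq0 : 0 < ‖q‖) (hq1 : ‖q‖ < 1)
    (a1 a2 : ℂ) (ha2 : a2 ≠ 0)
    (k : ℕ)
    (poch : ℂ → ℕ → ℂ)
    (hpoch : ∀ (c : ℂ) (j : ℕ), poch c j = ∏ i ∈ Finset.range j, (1 - c * q ^ i))
    (p : ℕ → ℂ)
    (hp : ∀ x : ℂ, HasSum (fun j : ℕ => p j * x ^ j)
        ((∏' n : ℕ, (1 - a1 * q ^ n * x)) * (∏' n : ℕ, (1 - a2 * q ^ n * x)))) :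
    p k = q ^ (k * (k - 1) / 2) * (-a2) ^ k / poch q k *
      ∑ s ∈ Finset.range (k + 1),
        poch (q ^ (-(k : ℤ))) s / poch q s *
          ((-1) ^ s * q ^ (s * (s - 1) / 2) * (q * a1 / a2) ^ s) := by
  have hqne : q ≠ 0 := by
    intro h
    rw [h, norm_zero] at hq0
    exact lt_irrefl 0 hq0
  set D : ℕ → ℂ := fun n => ∑ s ∈ Finset.range (n + 1), QAux.qc q a1 s * QAux.qc q a2 (n - s)
    with hDdef
  have hD : ∀ x : ℂ, HasSum (fun n => D n * x ^ n)
      ((∏' n : ℕ, (1 - a1 * q ^ n * x)) * (∏' n : ℕ, (1 - a2 * q ^ n * x))) := by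
    intro x
    have hf := QAux.euler hq1 a1 x
    have hg := QAux.euler hq1 a2 x
    have hfn := QAux.qc_summable_norm hq1 a1 x
    have hgn := QAux.qc_summable_norm hq1 a2 x
    have hsum : Summable (fun n => ∑ kk ∈ Finset.range (n + 1),
        (QAux.qc q a1 kk * x ^ kk) * (QAux.qc q a2 (n - kk) * x ^ (n - kk))) :=
      (summable_norm_sum_mul_range_of_summable_norm hfn hgn).of_norm
    have htsum := tsum_mul_tsum_eq_tsum_sum_range_of_summable_norm hfn hgn
    have h1 := hsum.hasSum
    rw [← htsum, hf.tsum_eq, hg.tsum_eq] at h1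
    refine h1.congr_fun fun n => ?_
    show D n * x ^ n = ∑ kk ∈ Finset.range (n + 1),
        (QAux.qc q a1 kk * x ^ kk) * (QAux.qc q a2 (n - kk) * x ^ (n - kk))
    rw [hDdef]
    rw [Finset.sum_mul]
    refine Finset.sum_congr rfl fun sk hsk => ?_
    have hle : sk ≤ n := Finset.mem_range_succ_iff.mp hsk
    have hxp : x ^ sk * x ^ (n - sk) = x ^ n := by
      rw [← pow_add]
      congr 1
      omega
    calc QAux.qc q a1 sk * QAux.qc q a2 (n - sk) * x ^ n
        = QAux.qc q a1 sk * QAux.qc q a2 (n - sk) * (x ^ sk * x ^ (n - sk)) := by rw [hxp]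
      _ = (QAux.qc q a1 sk * x ^ sk) * (QAux.qc q a2 (n - sk) * x ^ (n - sk)) := by ring
  have hz : ∀ x : ℂ, HasSum (fun n => (p n - D n) * x ^ n) 0 := by
    intro x
    have h2 := (hp x).sub (hD x)
    rw [sub_self] at h2
    refine h2.congr_fun fun n => ?_
    ring
  have hpk : p k = D k := sub_eq_zero.mp (QAux.coeff_unique _ hz k)
  rw [hpk, hDdef]
  simp only [hpoch, ← Finset.sum_range_id]
  have hpq : ∀ j : ℕ, (∏ i ∈ Finset.range j, ((1:ℂ) - q * q ^ i)) =
      ∏ i ∈ Finset.range j, (1 - q ^ (i + 1)) :=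
    fun j => Finset.prod_congr rfl fun i _ => by rw [← pow_succ']
  rw [hpq, Finset.mul_sum]
  refine Finset.sum_congr rfl fun s hs => ?_
  rw [hpq]
  exact (QAux.key_term hq1 hqne a1 a2 ha2 k s (Finset.mem_range_succ_iff.mp hs)).symm
end

section
/- (Casorati determinant D_1, type q-E_6^{(1)}.) Suppose Y ∈ ℂ[[X]] satisfies (1−a_1X)(1−a_2X)(1−a_3X)·Y(qX) = (1−b_1X)(1−b_2X)(1−b_3X)·Y, let (P, Q) be a Padé pair for Y, and assume the constraint a_1 a_2 a_3 q^m = b_1 b_2 b_3 q^n. Then there exists a polynomial R ∈ ℂ[X] with deg R ≤ 1 such that (1−b_1X)(1−b_2X)(1−b_3X)·P(X)·Q(qX) − (1−a_1X)(1−a_2X)(1−a_3X)·P(qX)·Q(X) = X^{m+n+1}·R. -/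
open Polynomial

lemma coeff_comp_C_mul_X (p : Polynomial ℂ) (q : ℂ) (k : ℕ) :
    (p.comp (C q * X)).coeff k = q ^ k * p.coeff k := by
  induction p using Polynomial.induction_on' with
  | add f g hf hg => simp [add_comp, hf, hg, mul_add]
  | monomial i a =>
    rw [monomial_comp]
    simp only [mul_pow, coeff_monomial]
    rw [show C a * (C q ^ i * X ^ i) = C (a * q ^ i) * X ^ i by rw [map_mul, map_pow]; ring]
    rw [coeff_C_mul, coeff_X_pow]
    by_cases h : k = i
    · subst h; simp [mul_comm]
    · simp [h, Ne.symm h]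

lemma coe_comp_C_mul_X (p : Polynomial ℂ) (q : ℂ) :
    ((p.comp (C q * X) : Polynomial ℂ) : PowerSeries ℂ) =
      PowerSeries.rescale q (p : PowerSeries ℂ) := by
  ext k
  rw [Polynomial.coeff_coe, PowerSeries.coeff_rescale, Polynomial.coeff_coe,
    coeff_comp_C_mul_X]

lemma rescale_dvd_of_dvd (q : ℂ) (N : ℕ) (S : PowerSeries ℂ)
    (h : (PowerSeries.X : PowerSeries ℂ) ^ N ∣ S) :
    (PowerSeries.X : PowerSeries ℂ) ^ N ∣ PowerSeries.rescale q S := by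
  rw [PowerSeries.X_pow_dvd_iff] at h ⊢
  intro k hk
  rw [PowerSeries.coeff_rescale, h k hk, mul_zero]

lemma cube_coeff_three (c1 c2 c3 : ℂ) :
    ((1 - C c1 * X) * (1 - C c2 * X) * (1 - C c3 * X) : Polynomial ℂ).coeff 3 =
      -(c1 * c2 * c3) := by
  have h : ((1 - C c1 * X) * (1 - C c2 * X) * (1 - C c3 * X) : Polynomial ℂ) =
      C (-(c1 * c2 * c3)) * X ^ 3 + C (c1 * c2 + c1 * c3 + c2 * c3) * X ^ 2 +
        C (-(c1 + c2 + c3)) * X ^ 1 + 1 := by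
    simp only [map_mul, map_neg, map_add]
    ring
  rw [h]
  simp only [coeff_add, coeff_C_mul, coeff_X_pow, coeff_one]
  norm_num

lemma cube_natDegree_le (c1 c2 c3 : ℂ) :
    ((1 - C c1 * X) * (1 - C c2 * X) * (1 - C c3 * X) : Polynomial ℂ).natDegree ≤ 3 := by
  have hCmul : ∀ c : ℂ, (C c * X : Polynomial ℂ).natDegree ≤ 1 := fun c =>
    le_trans natDegree_mul_le (by simp)
  have hfac : ∀ c : ℂ, (1 - C c * X : Polynomial ℂ).natDegree ≤ 1 := fun c =>
    le_trans (natDegree_sub_le _ _) (by simp [hCmul c])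
  exact le_trans natDegree_mul_le
    (add_le_add (le_trans natDegree_mul_le (add_le_add (hfac c1) (hfac c2))) (hfac c3))

/-- Casorati determinant `D_1` for type q-E_6^{(1)}. -/
theorem casorati_D1_qE6
    (q a1 a2 a3 b1 b2 b3 : ℂ) (m n : ℕ)
    (Y : PowerSeries ℂ)
    (hY : (1 - PowerSeries.C a1 * PowerSeries.X) * (1 - PowerSeries.C a2 * PowerSeries.X) *
        (1 - PowerSeries.C a3 * PowerSeries.X) * PowerSeries.rescale q Y =
      (1 - PowerSeries.C b1 * PowerSeries.X) * (1 - PowerSeries.C b2 * PowerSeries.X) *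
        (1 - PowerSeries.C b3 * PowerSeries.X) * Y)
    (hconstraint : a1 * a2 * a3 * q ^ m = b1 * b2 * b3 * q ^ n)
    (P Q : Polynomial ℂ) (hdP : P.degree ≤ m) (hdQ : Q.degree ≤ n)
    (hPade : (PowerSeries.X : PowerSeries ℂ) ^ (m + n + 1) ∣
      Y * (Q : PowerSeries ℂ) - (P : PowerSeries ℂ)) :
    ∃ R : Polynomial ℂ, R.degree ≤ 1 ∧
      (1 - C b1 * X) * (1 - C b2 * X) * (1 - C b3 * X) * P * (Q.comp (C q * X)) -
          (1 - C a1 * X) * (1 - C a2 * X) * (1 - C a3 * X) * (P.comp (C q * X)) * Q =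
        X ^ (m + n + 1) * R := by
  set N := m + n + 1 with hN
  set D : Polynomial ℂ :=
    (1 - C b1 * X) * (1 - C b2 * X) * (1 - C b3 * X) * P * (Q.comp (C q * X)) -
      (1 - C a1 * X) * (1 - C a2 * X) * (1 - C a3 * X) * (P.comp (C q * X)) * Q with hD
  -- Step 1: X^N ∣ D
  have hdvd : (X : Polynomial ℂ) ^ N ∣ D := by
    rw [Polynomial.X_pow_dvd_iff]
    intro d hd
    have key : ((D : Polynomial ℂ) : PowerSeries ℂ) =
        (1 - PowerSeries.C a1 * PowerSeries.X) * (1 - PowerSeries.C a2 * PowerSeries.X) *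
          (1 - PowerSeries.C a3 * PowerSeries.X) *
          PowerSeries.rescale q (Y * (Q : PowerSeries ℂ) - (P : PowerSeries ℂ)) *
          (Q : PowerSeries ℂ) -
        (1 - PowerSeries.C b1 * PowerSeries.X) * (1 - PowerSeries.C b2 * PowerSeries.X) *
          (1 - PowerSeries.C b3 * PowerSeries.X) *
          (Y * (Q : PowerSeries ℂ) - (P : PowerSeries ℂ)) *
          PowerSeries.rescale q (Q : PowerSeries ℂ) := by
      rw [hD]
      push_cast [Polynomial.coe_sub, Polynomial.coe_mul, Polynomial.coe_one,
        Polynomial.coe_C, Polynomial.coe_X, coe_comp_C_mul_X]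
      rw [map_sub, map_mul]
      linear_combination (-(PowerSeries.rescale q (Q : PowerSeries ℂ)) *
        (Q : PowerSeries ℂ)) * hY
    have hdvd' : (PowerSeries.X : PowerSeries ℂ) ^ N ∣ ((D : Polynomial ℂ) : PowerSeries ℂ) := by
      rw [key]
      exact dvd_sub
        (((rescale_dvd_of_dvd q N _ hPade).mul_left _).mul_right _)
        ((hPade.mul_left _).mul_right _)
    rw [PowerSeries.X_pow_dvd_iff] at hdvd'
    have := hdvd' d hd
    rwa [Polynomial.coeff_coe] at this
  obtain ⟨R, hR⟩ := hdvd
  refine ⟨R, ?_, hR⟩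
  by_cases hR0 : R = 0
  · simp [hR0]
  -- Step 2: degree bounds
  have hmP : P.natDegree ≤ m := natDegree_le_iff_degree_le.2 hdP
  have hnQ : Q.natDegree ≤ n := natDegree_le_iff_degree_le.2 hdQ
  have hCX : (C q * X : Polynomial ℂ).natDegree ≤ 1 := le_trans natDegree_mul_le (by simp)
  have hPc : (P.comp (C q * X)).natDegree ≤ m :=
    le_trans natDegree_comp_le (le_trans (Nat.mul_le_mul hmP hCX) (by omega))
  have hQc : (Q.comp (C q * X)).natDegree ≤ n :=
    le_trans natDegree_comp_le (le_trans (Nat.mul_le_mul hnQ hCX) (by omega))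
  have hDdeg3 : D.natDegree ≤ m + n + 3 := by
    rw [hD]
    refine le_trans (natDegree_sub_le _ _) (max_le ?_ ?_)
    · refine le_trans natDegree_mul_le (le_trans (add_le_add
        (le_trans natDegree_mul_le (add_le_add (cube_natDegree_le b1 b2 b3) hmP)) hQc) ?_)
      omega
    · refine le_trans natDegree_mul_le (le_trans (add_le_add
        (le_trans natDegree_mul_le (add_le_add (cube_natDegree_le a1 a2 a3) hPc)) hnQ) ?_)
      omega
  have hcoefftop : D.coeff (m + n + 3) = 0 := by
    have h1 : ((1 - C b1 * X) * (1 - C b2 * X) * (1 - C b3 * X) * P *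
        (Q.comp (C q * X))).coeff ((3 + m) + n) =
        (-(b1 * b2 * b3) * P.coeff m) * (q ^ n * Q.coeff n) := by
      rw [coeff_mul_add_eq_of_natDegree_le
        (le_trans natDegree_mul_le (add_le_add (cube_natDegree_le b1 b2 b3) hmP)) hQc,
        coeff_mul_add_eq_of_natDegree_le (cube_natDegree_le b1 b2 b3) hmP,
        cube_coeff_three, coeff_comp_C_mul_X]
    have h2 : ((1 - C a1 * X) * (1 - C a2 * X) * (1 - C a3 * X) *
        (P.comp (C q * X)) * Q).coeff ((3 + m) + n) =
        (-(a1 * a2 * a3) * (q ^ m * P.coeff m)) * Q.coeff n := by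
      rw [coeff_mul_add_eq_of_natDegree_le
        (le_trans natDegree_mul_le (add_le_add (cube_natDegree_le a1 a2 a3) hPc)) hnQ,
        coeff_mul_add_eq_of_natDegree_le (cube_natDegree_le a1 a2 a3) hPc,
        cube_coeff_three, coeff_comp_C_mul_X]
    have hmn : m + n + 3 = (3 + m) + n := by omega
    rw [hD, coeff_sub, hmn, h1, h2]
    linear_combination (P.coeff m * Q.coeff n) * hconstraint
  have hDdeg : D.natDegree ≤ m + n + 2 := by
    rw [natDegree_le_iff_coeff_eq_zero]
    intro k hk
    rcases eq_or_lt_of_le (show m + n + 3 ≤ k by omega) with h | h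
    · rw [← h]; exact hcoefftop
    · exact coeff_eq_zero_of_natDegree_lt (lt_of_le_of_lt hDdeg3 h)
  -- conclude
  have hXN : (X : Polynomial ℂ) ^ N ≠ 0 := pow_ne_zero _ X_ne_zero
  have hDne : D ≠ 0 := by rw [hR]; exact mul_ne_zero hXN hR0
  have : D.natDegree = N + R.natDegree := by
    rw [hR, natDegree_mul hXN hR0, natDegree_X_pow]
  have hRnat : R.natDegree ≤ 1 := by omega
  exact le_trans (degree_le_natDegree) (by exact_mod_cast hRnat)
end
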